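/- arXiv:1306.1972 — 12 statements merged into one kernel-verified Lean document; each statement's English description precedes it below -/
import Mathlib

section
/- If G is a non-abelian group of unitary n×n complex matrices, then for no members A, B of G can the rank of AB − BA be equal to one. -/
open Matrix

lemma rank_one_decomp {n : ℕ} (M : Matrix (Fin n) (Fin n) ℂ) (h : M.rank = 1) :
    ∃ u v : Fin n → ℂ, ∀ i j, M i j = u i * v j := by
  have hfr : Module.finrank ℂ (LinearMap.range M.mulVecLin) = 1 := h
  have hle : Module.rank ℂ (LinearMap.range M.mulVecLin) ≤ 1 := by
    rw [← Module.finrank_eq_rank, hfr]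
    norm_num
  obtain ⟨v₀, hv₀⟩ := rank_le_one_iff.mp hle
  refine ⟨(v₀ : Fin n → ℂ), fun j => Classical.choose (hv₀ ⟨M *ᵥ Pi.single j 1,
    LinearMap.mem_range.mpr ⟨Pi.single j 1, rfl⟩⟩), fun i j => ?_⟩
  have hs := Classical.choose_spec (hv₀ ⟨M *ᵥ Pi.single j 1,
    LinearMap.mem_range.mpr ⟨Pi.single j 1, rfl⟩⟩)
  have h2 : Classical.choose (hv₀ ⟨M *ᵥ Pi.single j 1, LinearMap.mem_range.mpr
      ⟨Pi.single j 1, rfl⟩⟩) • (v₀ : Fin n → ℂ) = M *ᵥ Pi.single j 1 := by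
    have := congrArg Subtype.val hs
    simpa using this
  have h3 := congrFun h2 i
  simp only [Pi.smul_apply, smul_eq_mul] at h3
  rw [mul_comm] at h3
  have h4 : (M *ᵥ Pi.single j 1) i = M i j := by
    simp [Matrix.mulVec, dotProduct, Pi.single_apply]
  rw [h4] at h3
  exact h3.symm

lemma unitary_det_one_rank_sub_one {n : ℕ} (V : Matrix (Fin n) (Fin n) ℂ)
    (hV : star V * V = 1) (hdet : V.det = 1) : (V - 1).rank ≠ 1 := by
  intro hr
  set M : Matrix (Fin n) (Fin n) ℂ := V - 1 with hM
  obtain ⟨u, v, huv⟩ := rank_one_decomp M hr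
  -- M as col * row
  have hcr : M = replicateCol (Fin 1) u * replicateRow (Fin 1) v := by
    ext i j
    simp [Matrix.mul_apply, huv i j]
  -- determinant gives v ⬝ᵥ u = 0
  have hdu : v ⬝ᵥ u = 0 := by
    have : V = 1 + replicateCol (Fin 1) u * replicateRow (Fin 1) v := by
      rw [← hcr, hM]; abel
    have hd := hdet
    rw [this] at hd
    erw [Matrix.det_one_add_replicateCol_mul_replicateRow (ι := Fin 1)] at hd
    linear_combination hd
  -- trace of M is zero
  have htrM : M.trace = 0 := by
    rw [Matrix.trace]
    simp only [Matrix.diag_apply, huv]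
    rw [← hdu, dotProduct]
    exact Finset.sum_congr rfl fun i _ => mul_comm _ _
  -- unitarity relation
  have hVV : Vᴴ * V = 1 := by rw [← Matrix.star_eq_conjTranspose]; exact hV
  have hrel : Mᴴ * M + Mᴴ + M = 0 := by
    rw [hM, Matrix.conjTranspose_sub, Matrix.conjTranspose_one]
    calc (Vᴴ - 1) * (V - 1) + (Vᴴ - 1) + (V - 1) = Vᴴ * V - 1 := by noncomm_ring
      _ = 0 := by rw [hVV, sub_self]
  -- take traces
  have htr : (Mᴴ * M).trace = 0 := by
    have := congrArg Matrix.trace hrel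
    rw [Matrix.trace_add, Matrix.trace_add, Matrix.trace_zero, Matrix.trace_conjTranspose,
      htrM, star_zero, add_zero, add_zero] at this
    exact this
  -- trace of Mᴴ M is sum of normSq
  have hsum : (↑(∑ i : Fin n, ∑ j : Fin n, Complex.normSq (M j i)) : ℂ) = 0 := by
    rw [← htr, Matrix.trace]
    push_cast
    refine Finset.sum_congr rfl fun i _ => ?_
    rw [Matrix.diag_apply, Matrix.mul_apply]
    refine Finset.sum_congr rfl fun j _ => ?_
    rw [Matrix.conjTranspose_apply, Complex.star_def, Complex.normSq_eq_conj_mul_self]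
  have hsum' : (∑ i : Fin n, ∑ j : Fin n, Complex.normSq (M j i)) = 0 := by
    exact_mod_cast hsum
  have hM0 : M = 0 := by
    ext i j
    have h1 := (Finset.sum_eq_zero_iff_of_nonneg (fun i _ =>
      Finset.sum_nonneg fun j _ => Complex.normSq_nonneg _)).mp hsum' j (Finset.mem_univ _)
    have h2 := (Finset.sum_eq_zero_iff_of_nonneg (fun j _ =>
      Complex.normSq_nonneg _)).mp h1 i (Finset.mem_univ _)
    simpa using Complex.normSq_eq_zero.mp h2
  rw [hM0] at hr
  simp [Matrix.rank_zero] at hr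

/-- If `G` is a non-abelian group of unitary `n × n` complex matrices, then for no members
`A`, `B` of `G` can the rank of `A * B - B * A` be equal to one. -/
theorem stmt0 (n : ℕ) (G : Subgroup (Matrix.unitaryGroup (Fin n) ℂ))
    (hna : ∃ A ∈ G, ∃ B ∈ G, A * B ≠ B * A) :
    ∀ A ∈ G, ∀ B ∈ G,
      ((A : Matrix (Fin n) (Fin n) ℂ) * (B : Matrix (Fin n) (Fin n) ℂ)
        - (B : Matrix (Fin n) (Fin n) ℂ) * (A : Matrix (Fin n) (Fin n) ℂ)).rank ≠ 1 := by
  intro A hA B hB hr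
  set a : Matrix (Fin n) (Fin n) ℂ := (A : Matrix (Fin n) (Fin n) ℂ) with ha
  set b : Matrix (Fin n) (Fin n) ℂ := (B : Matrix (Fin n) (Fin n) ℂ) with hb
  have ha1 : star a * a = 1 := Matrix.UnitaryGroup.star_mul_self A
  have ha2 : a * star a = 1 := mul_eq_one_comm.mp ha1
  have hb1 : star b * b = 1 := Matrix.UnitaryGroup.star_mul_self B
  have hb2 : b * star b = 1 := mul_eq_one_comm.mp hb1
  set V : Matrix (Fin n) (Fin n) ℂ := star b * a * b * star a with hV
  have hunit : star V * V = 1 := by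
    have : star V = a * star b * star a * b := by
      rw [hV]
      simp only [Matrix.star_mul, star_star]
      noncomm_ring
    rw [this, hV]
    calc a * star b * star a * b * (star b * a * b * star a)
        = a * star b * star a * (b * star b) * a * b * star a := by noncomm_ring
      _ = a * star b * (star a * a) * b * star a := by rw [hb2]; noncomm_ring
      _ = a * (star b * b) * star a := by rw [ha1]; noncomm_ring
      _ = a * star a := by rw [hb1]; noncomm_ring
      _ = 1 := ha2
  have hdet : V.det = 1 := by
    rw [hV, Matrix.det_mul, Matrix.det_mul, Matrix.det_mul]
    have h1 : (star b).det * b.det = 1 := by rw [← Matrix.det_mul, hb1, Matrix.det_one]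
    have h2 : a.det * (star a).det = 1 := by rw [← Matrix.det_mul, ha2, Matrix.det_one]
    calc (star b).det * a.det * b.det * (star a).det
        = ((star b).det * b.det) * (a.det * (star a).det) := by ring
      _ = 1 := by rw [h1, h2, one_mul]
  have hVsub : V - 1 = star b * ((a * b - b * a) * star a) := by
    rw [hV]
    calc star b * a * b * star a - 1
        = star b * a * b * star a - star b * b * (a * star a) := by rw [hb1, ha2]; noncomm_ring
      _ = star b * ((a * b - b * a) * star a) := by noncomm_ring
  have hbdet : IsUnit (star b).det := by
    refine IsUnit.of_mul_eq_one b.det ?_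
    rw [← Matrix.det_mul, hb1, Matrix.det_one]
  have hadet : IsUnit (star a).det := by
    refine IsUnit.of_mul_eq_one a.det ?_
    rw [← Matrix.det_mul, ha1, Matrix.det_one]
  have hrank : (V - 1).rank = 1 := by
    rw [hVsub, Matrix.rank_mul_eq_right_of_isUnit_det _ _ hbdet,
      Matrix.rank_mul_eq_left_of_isUnit_det _ _ hadet]
    exact hr
  exact unitary_det_one_rank_sub_one V hunit hdet hrank
end

section
/- If G is a group of unitary n×n complex matrices such that rank(AB − BA) ≤ 1 for all A, B in G, then G is abelian. -/
open Matrix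

open scoped ComplexConjugate

/-- A complex matrix of rank at most one is an outer product of two vectors. -/
lemma aux_rank_le_one_decomp {n : ℕ} (M : Matrix (Fin n) (Fin n) ℂ) (h : M.rank ≤ 1) :
    ∃ v w : Fin n → ℂ, M = vecMulVec v w := by
  rw [Matrix.rank] at h
  obtain ⟨v₀, hv₀⟩ := finrank_le_one_iff.mp h
  choose c hc using fun j =>
    hv₀ ⟨M.mulVec (Pi.single j 1), LinearMap.mem_range_self _ _⟩
  refine ⟨fun i => (v₀ : Fin n → ℂ) i, c, ?_⟩
  ext i j
  have := congrFun (congrArg Subtype.val (hc j)) i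
  simp [Matrix.mulVec_single_one] at this
  simp [vecMulVec]
  rw [← this]
  ring

/-- A unitary matrix with determinant one that differs from the identity by a matrix of
rank at most one is the identity. -/
lemma aux_unitary_eq_one {n : ℕ} (u : Matrix (Fin n) (Fin n) ℂ)
    (hu : star u * u = 1) (hdet : u.det = 1) (hrk : (u - 1).rank ≤ 1) : u = 1 := by
  obtain ⟨v, w, hvw⟩ := aux_rank_le_one_decomp _ hrk
  have hu2 : u = 1 + vecMulVec v w := by rw [← hvw]; abel
  have hT : (∑ j, w j * v j) = 0 := by
    have h1 : u.det = 1 + w ⬝ᵥ v := by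
      rw [hu2, vecMulVec_eq (Fin 1), det_one_add_replicateCol_mul_replicateRow]
    rw [hdet] at h1
    have : w ⬝ᵥ v = 0 := by linear_combination -h1
    simpa [dotProduct] using this
  obtain ⟨S, hS⟩ : ∃ S : ℂ, S = ∑ k, conj (v k) * v k := ⟨_, rfl⟩
  have hM : (vecMulVec v w)ᴴ * (vecMulVec v w) + (vecMulVec v w)ᴴ + vecMulVec v w = 0 := by
    have h1 : (1 + (vecMulVec v w)ᴴ) * (1 + vecMulVec v w) = 1 := by
      have := hu
      rw [hu2, star_eq_conjTranspose, conjTranspose_add, conjTranspose_one] at this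
      exact this
    have e : (1 + (vecMulVec v w)ᴴ) * (1 + vecMulVec v w)
        = 1 + ((vecMulVec v w)ᴴ * (vecMulVec v w) + (vecMulVec v w)ᴴ + vecMulVec v w) := by
      noncomm_ring
    rw [e] at h1
    exact add_eq_left.mp h1
  have key : ∀ i j, v i * w j + conj (v j) * conj (w i) + S * (conj (w i) * w j) = 0 := by
    intro i j
    have h3 := congrFun (congrFun hM i) j
    simp only [Matrix.add_apply, Matrix.mul_apply, Matrix.conjTranspose_apply,
      Matrix.zero_apply, vecMulVec, Matrix.of_apply] at h3
    have e2 : ∑ x, star (v x * w i) * (v x * w j) = S * (conj (w i) * w j) := by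
      rw [hS, Finset.sum_mul]
      exact Finset.sum_congr rfl fun k _ => by
        simp only [star_mul', Complex.star_def]; ring
    have e3 : star (v j * w i) = conj (v j) * conj (w i) := by
      simp only [star_mul', Complex.star_def]
    rw [e2, e3] at h3
    linear_combination h3
  have key2 : ∀ i, S * conj (w i) = 0 := by
    intro i
    have h0 : v i * (∑ j, w j * v j) + conj (w i) * (∑ j, conj (v j) * v j)
        + (S * conj (w i)) * (∑ j, w j * v j) = 0 := by
      calc v i * (∑ j, w j * v j) + conj (w i) * (∑ j, conj (v j) * v j)
          + (S * conj (w i)) * (∑ j, w j * v j)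
          = ∑ j, (v i * (w j * v j) + conj (w i) * (conj (v j) * v j)
              + (S * conj (w i)) * (w j * v j)) := by
            rw [Finset.sum_add_distrib, Finset.sum_add_distrib,
              ← Finset.mul_sum, ← Finset.mul_sum, ← Finset.mul_sum]
        _ = ∑ j, (v i * w j + conj (v j) * conj (w i) + S * (conj (w i) * w j)) * v j :=
            Finset.sum_congr rfl fun j _ => by ring
        _ = 0 := by
            rw [Finset.sum_eq_zero]
            intro j _
            rw [key i j, zero_mul]
    rw [hT, ← hS, mul_zero, mul_zero, add_zero, zero_add] at h0
    rw [mul_comm]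
    exact h0
  have hMz : vecMulVec v w = 0 := by
    by_cases hS0 : S = 0
    · have hv : ∀ k, v k = 0 := by
        have hsum : ∑ k, Complex.normSq (v k) = 0 := by
          have : ((∑ k, Complex.normSq (v k) : ℝ) : ℂ) = 0 := by
            push_cast
            rw [← hS0, hS]
            exact Finset.sum_congr rfl fun k _ => by
              rw [Complex.normSq_eq_conj_mul_self]
          exact_mod_cast this
        intro k
        have := (Finset.sum_eq_zero_iff_of_nonneg
          (fun k _ => Complex.normSq_nonneg (v k))).mp hsum k (Finset.mem_univ k)
        exact Complex.normSq_eq_zero.mp this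
      ext i j
      simp [vecMulVec, hv i]
    · have hw : ∀ i, w i = 0 := by
        intro i
        rcases mul_eq_zero.mp (key2 i) with h | h
        · exact absurd h hS0
        · exact star_eq_zero.mp h
      ext i j
      simp [vecMulVec, hw j]
  rw [hu2, hMz, add_zero]

/-- If `G` is a group of unitary matrices with `rank (AB - BA) ≤ 1` for all `A, B ∈ G`,
then `G` is abelian. -/
theorem stmt1 (n : ℕ) (G : Subgroup (Matrix.unitaryGroup (Fin n) ℂ))
    (hr : ∀ A ∈ G, ∀ B ∈ G,
      ((A : Matrix (Fin n) (Fin n) ℂ) * (B : Matrix (Fin n) (Fin n) ℂ)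
        - (B : Matrix (Fin n) (Fin n) ℂ) * (A : Matrix (Fin n) (Fin n) ℂ)).rank ≤ 1) :
    ∀ A ∈ G, ∀ B ∈ G, A * B = B * A := by
  intro A hA B hB
  set U := A * B * A⁻¹ * B⁻¹ with hU
  have hUm : U.1 = A.1 * B.1 * star A.1 * star B.1 := rfl
  have haA : A.1 * star A.1 = 1 := A.2.2
  have hbB : B.1 * star B.1 = 1 := B.2.2
  have h1 : U.1 = 1 := by
    apply aux_unitary_eq_one
    · exact U.2.1
    · rw [hUm, det_mul, det_mul, det_mul]
      have ha : A.1.det * (star A.1).det = 1 := by rw [← det_mul, haA, det_one]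
      have hb : B.1.det * (star B.1).det = 1 := by rw [← det_mul, hbB, det_one]
      linear_combination (star B.1).det * B.1.det * ha + hb
    · have e : U.1 - 1 = (A.1 * B.1 - B.1 * A.1) * (star A.1 * star B.1) := by
        have e2 : (A.1 * B.1 - B.1 * A.1) * (star A.1 * star B.1)
            = A.1 * B.1 * star A.1 * star B.1 - B.1 * (A.1 * star A.1) * star B.1 := by
          noncomm_ring
        rw [e2, haA, mul_one, hbB, hUm]
      rw [e]
      exact le_trans (rank_mul_le_left _ _) (hr A hA B hB)
  have hU1 : U = 1 := Subtype.ext h1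
  have h2 : A * B * A⁻¹ = B := mul_inv_eq_one.mp hU1
  exact mul_inv_eq_iff_eq_mul.mp h2
end

section
/- If U is a unitary n×n matrix with rank(U − I) ≤ 2 and det(U) = 1, and U ≠ I, then U is unitarily similar to a diagonal matrix diag(ω, ω̄, 1, …, 1) for some complex number ω ≠ 1 with |ω| = 1. -/
open Matrix

variable {n : ℕ}

private lemma diag_of_eigen (U : Matrix (Fin n) (Fin n) ℂ)
    (f : Fin n → EuclideanSpace ℂ (Fin n)) (hf : Orthonormal ℂ f)
    (μ : Fin n → ℂ) (hμ : ∀ i, U.mulVec (f i) = μ i • (f i : Fin n → ℂ)) :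
    ∃ V : Matrix.unitaryGroup (Fin n) ℂ,
      (V : Matrix (Fin n) (Fin n) ℂ) * U * star (V : Matrix (Fin n) (Fin n) ℂ)
        = Matrix.diagonal μ := by
  set V : Matrix (Fin n) (Fin n) ℂ := Matrix.of (fun i j => starRingEnd ℂ (f i j)) with hV
  have horth := orthonormal_iff_ite.mp hf
  have hVV : V * star V = 1 := by
    ext i j
    simp only [Matrix.mul_apply, Matrix.star_apply, Matrix.one_apply, hV, Matrix.of_apply,
      star_star]
    have := horth i j
    rw [PiLp.inner_apply] at this
    simpa [mul_comm] using this
  refine ⟨⟨V, Matrix.mem_unitaryGroup_iff.mpr hVV⟩, ?_⟩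
  have hUV : U * star V = star V * Matrix.diagonal μ := by
    ext k j
    have := congrFun (hμ j) k
    simp only [Matrix.mul_apply, Matrix.star_apply, hV, Matrix.of_apply, star_star,
      Matrix.diagonal_apply]
    simp only [Matrix.mulVec, dotProduct] at this
    rw [Finset.sum_congr rfl (fun x _ => mul_ite (x = j) (star ((starRingEnd ℂ) (f x k))) (μ x) 0)]
    simp only [mul_zero]
    rw [Finset.sum_ite_eq' (Finset.univ) j]
    simpa [mul_comm] using this
  calc V * U * star V = V * (U * star V) := by rw [Matrix.mul_assoc]
    _ = V * (star V * Matrix.diagonal μ) := by rw [hUV]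
    _ = (V * star V) * Matrix.diagonal μ := by rw [Matrix.mul_assoc]
    _ = Matrix.diagonal μ := by rw [hVV, Matrix.one_mul]

private lemma exists_unitary_eigen {F : Type*} [NormedAddCommGroup F] [InnerProductSpace ℂ F]
    [FiniteDimensional ℂ F] [Nontrivial F] (S : F →ₗ[ℂ] F)
    (hS : ∀ x y : F, (inner ℂ (S x) (S y) : ℂ) = inner ℂ x y) :
    ∃ (ω : ℂ) (v : F), ‖v‖ = 1 ∧ S v = ω • v ∧ ‖ω‖ = 1 := by
  obtain ⟨ω, hω⟩ := Module.End.exists_eigenvalue (S : Module.End ℂ F)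
  obtain ⟨v0, hv0⟩ := hω.exists_hasEigenvector
  have hv0ne : v0 ≠ 0 := hv0.right
  set v : F := ((‖v0‖ : ℂ))⁻¹ • v0 with hvdef
  have hnv : ‖v‖ = 1 := by
    rw [hvdef, norm_smul]
    have h0 : ‖v0‖ ≠ 0 := norm_ne_zero_iff.mpr hv0ne
    simp [abs_of_nonneg (norm_nonneg v0), h0]
  have hSv : S v = ω • v := by
    rw [hvdef, _root_.map_smul, hv0.apply_eq_smul, smul_comm]
  have hnorm : ‖S v‖ = ‖v‖ := by
    have h1 : (inner ℂ (S v) (S v) : ℂ) = inner ℂ v v := hS v v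
    rw [inner_self_eq_norm_sq_to_K, inner_self_eq_norm_sq_to_K] at h1
    have := Complex.ofReal_injective (by exact_mod_cast h1 : ((‖S v‖^2 : ℝ) : ℂ) = ((‖v‖^2 : ℝ) : ℂ))
    nlinarith [norm_nonneg (S v), norm_nonneg v, this]
  have : ‖ω‖ = 1 := by
    rw [hSv, norm_smul, hnv] at hnorm
    simpa using hnorm
  exact ⟨ω, v, hnv, hSv, this⟩

set_option maxHeartbeats 2000000 in
/-- The key abstract lemma: an inner-product-preserving endomorphism of a finite-dimensional
complex inner product space whose fixed subspace has codimension at most `2` and is proper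
admits an orthonormal eigenfamily with eigenvalues `ω, ω₂, 1, …, 1`. -/
private lemma eigen_family {E : Type} [NormedAddCommGroup E] [InnerProductSpace ℂ E]
    [FiniteDimensional ℂ E] (T : E →ₗ[ℂ] E)
    (hinner : ∀ x y : E, (inner ℂ (T x) (T y) : ℂ) = inner ℂ x y)
    (hKne : LinearMap.ker (T - LinearMap.id) ≠ ⊤)
    (hrank : Module.finrank ℂ E ≤
      Module.finrank ℂ (LinearMap.ker (T - LinearMap.id)) + 2) :
    ∃ (ω ω₂ : ℂ) (f : Fin (Module.finrank ℂ E) → E), ω ≠ 1 ∧ ‖ω‖ = 1 ∧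
      ‖ω₂‖ = 1 ∧ Orthonormal ℂ f ∧
      ∀ i, T (f i) = (if (i : ℕ) = 0 then ω else if (i : ℕ) = 1 then ω₂ else 1) • f i := by
  set K : Submodule ℂ E := LinearMap.ker (T - LinearMap.id) with hK
  have hKmem : ∀ x : E, x ∈ K ↔ T x = x := by
    intro x
    simp [hK, LinearMap.mem_ker, LinearMap.sub_apply, sub_eq_zero]
  set W : Submodule ℂ E := Kᗮ with hW
  set d : ℕ := Module.finrank ℂ E with hd
  have hWK : Module.finrank ℂ K + Module.finrank ℂ W = d :=
    Submodule.finrank_add_finrank_orthogonal K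
  have hWne : W ≠ ⊥ := fun hbot => hKne (Submodule.orthogonal_eq_bot_iff.mp hbot)
  have hTW : ∀ x ∈ W, T x ∈ W := by
    intro x hx
    rw [hW, Submodule.mem_orthogonal] at hx ⊢
    intro u hu
    calc (inner ℂ u (T x) : ℂ) = inner ℂ (T u) (T x) := by rw [(hKmem u).mp hu]
      _ = inner ℂ u x := hinner u x
      _ = 0 := hx u hu
  set S : W →ₗ[ℂ] W := T.restrict hTW with hS
  have hSinner : ∀ x y : W, (inner ℂ (S x) (S y) : ℂ) = inner ℂ x y := by
    intro x y
    rw [Submodule.coe_inner, Submodule.coe_inner, hS,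
      LinearMap.restrict_coe_apply, LinearMap.restrict_coe_apply]
    exact hinner x y
  haveI : Nontrivial W := Submodule.nontrivial_iff_ne_bot.mpr hWne
  obtain ⟨ω, w, hw1, hSw, habs⟩ := exists_unitary_eigen S hSinner
  have hTw : T (w : E) = ω • (w : E) := by
    have := congrArg (Subtype.val) hSw
    simpa [hS, LinearMap.restrict_coe_apply] using this
  have hwne : (w : E) ≠ 0 := by
    intro h
    rw [show w = 0 from Subtype.ext h] at hw1
    simp at hw1
  have hωne : ω ≠ 1 := by
    intro h
    have hwK : (w : E) ∈ K := by
      rw [hKmem, hTw, h, one_smul]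
    have : (inner ℂ (w : E) (w : E) : ℂ) = 0 :=
      (Submodule.mem_orthogonal K _).mp w.2 _ hwK
    exact hwne (inner_self_eq_zero.mp this)
  have hWle : Module.finrank ℂ W ≤ 2 := by omega
  have hWpos : 0 < Module.finrank ℂ W := Module.finrank_pos
  have hwK0 : ∀ u ∈ K, (inner ℂ u (w : E) : ℂ) = 0 :=
    fun u hu => (Submodule.mem_orthogonal K _).mp w.2 u hu
  have hww : (inner ℂ (w : E) (w : E) : ℂ) = 1 := by
    rw [inner_self_eq_norm_sq_to_K, show ‖(w : E)‖ = (1 : ℝ) from hw1]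
    norm_num
  set bK := stdOrthonormalBasis ℂ K with hbK
  have hbKfix : ∀ i, T ((bK i : E)) = (bK i : E) :=
    fun i => (hKmem _).mp (bK i).2
  have hbKinner : ∀ i j, (inner ℂ (bK i : E) (bK j : E) : ℂ) = if i = j then 1 else 0 := by
    intro i j
    rw [← Submodule.coe_inner]
    exact orthonormal_iff_ite.mp bK.orthonormal i j
  interval_cases hdW : Module.finrank ℂ W
  · -- dim W = 1
    have hfK : Module.finrank ℂ K = d - 1 := by omega
    have hd1 : 1 ≤ d := by omega
    refine ⟨ω, 1, fun i =>
      if h : (i : ℕ) = 0 then (w : E)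
      else (bK (Fin.cast hfK.symm ⟨(i : ℕ) - 1, by omega⟩) : E), hωne, habs, by simp, ?_, ?_⟩
    · rw [orthonormal_iff_ite]
      intro i j
      by_cases hi : (i : ℕ) = 0 <;> by_cases hj : (j : ℕ) = 0 <;>
        simp only [hi, hj, dif_pos, dif_neg, dite_true, dite_false]
      · have : i = j := Fin.ext (by omega)
        simp [this, hww, show ‖(w : E)‖ = 1 from hw1]
      · rw [if_neg (show i ≠ j from fun h => hj (h ▸ hi)), inner_eq_zero_symm]
        exact hwK0 _ (bK _).2
      · rw [if_neg (show i ≠ j from fun h => hi (h ▸ hj))]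
        exact hwK0 _ (bK _).2
      · rw [hbKinner]
        have hiff : (Fin.cast hfK.symm ⟨(i : ℕ) - 1, by omega⟩
            = Fin.cast hfK.symm ⟨(j : ℕ) - 1, by omega⟩) ↔ i = j := by
          constructor
          · intro h
            have := Fin.val_eq_of_eq h
            simp at this
            exact Fin.ext (by omega)
          · intro h; subst h; rfl
        simp only [Fin.ext_iff] at hiff ⊢
        split_ifs with h' h'' h'' <;> first | rfl | omega
    · intro i
      by_cases hi : (i : ℕ) = 0 <;>
        simp only [hi, dif_pos, dif_neg, dite_true, dite_false, if_pos, if_neg,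
          ite_true, ite_false]
      · exact hTw
      · by_cases hi' : (i : ℕ) = 1 <;>
          simp only [hi', if_pos, if_neg, ite_true, ite_false, one_smul] <;> exact hbKfix _
  · -- dim W = 2
    have hfK : Module.finrank ℂ K = d - 2 := by omega
    have hd2 : 2 ≤ d := by omega
    set W₂ : Submodule ℂ W := (ℂ ∙ w)ᗮ with hW₂
    have hdW₂ : Module.finrank ℂ W₂ = 1 := by
      have hspan : Module.finrank ℂ (ℂ ∙ w) = 1 := finrank_span_singleton
        (fun h => by rw [h] at hw1; simp at hw1)
      have := Submodule.finrank_add_finrank_orthogonal (𝕜 := ℂ) (E := W) (ℂ ∙ w)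
      rw [hspan, hdW, ← hW₂] at this
      omega
    have hSW₂ : ∀ x ∈ W₂, S x ∈ W₂ := by
      intro x hx
      rw [hW₂, Submodule.mem_orthogonal_singleton_iff_inner_right] at hx ⊢
      have h5 : (inner ℂ (S w) (S x) : ℂ) = inner ℂ w x := hSinner w x
      rw [hSw, inner_smul_left, hx] at h5
      have hωne0 : (starRingEnd ℂ) ω ≠ 0 := by
        simp only [ne_eq, map_eq_zero]
        intro h; rw [h] at habs; simp at habs
      exact (mul_eq_zero.mp h5).resolve_left hωne0
    set S₂ : W₂ →ₗ[ℂ] W₂ := S.restrict hSW₂ with hS₂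
    have hS₂inner : ∀ x y : W₂, (inner ℂ (S₂ x) (S₂ y) : ℂ) = inner ℂ x y := by
      intro x y
      rw [Submodule.coe_inner, Submodule.coe_inner, hS₂,
        LinearMap.restrict_coe_apply, LinearMap.restrict_coe_apply]
      exact hSinner x y
    haveI : Nontrivial W₂ := Module.nontrivial_of_finrank_pos
      (by omega : 0 < Module.finrank ℂ W₂)
    obtain ⟨ω₂, w₂, hw₂1, hS₂w₂, habs₂⟩ := exists_unitary_eigen S₂ hS₂inner
    set w₂' : E := ((w₂ : W) : E) with hw₂'def
    have hSw₂ : S (w₂ : W) = ω₂ • (w₂ : W) := by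
      have := congrArg (Subtype.val) hS₂w₂
      simpa [hS₂, LinearMap.restrict_coe_apply] using this
    have hTw₂ : T w₂' = ω₂ • w₂' := by
      have := congrArg (Subtype.val) hSw₂
      simpa [hw₂'def, hS, LinearMap.restrict_coe_apply] using this
    have hw₂W : w₂' ∈ W := (w₂ : W).2
    have hw₂K0 : ∀ u ∈ K, (inner ℂ u w₂' : ℂ) = 0 :=
      fun u hu => (Submodule.mem_orthogonal K _).mp hw₂W u hu
    have hw₂w₂ : (inner ℂ w₂' w₂' : ℂ) = 1 := by
      rw [inner_self_eq_norm_sq_to_K, show ‖w₂'‖ = (1 : ℝ) from hw₂1]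
      norm_num
    have hww₂ : (inner ℂ (w : E) w₂' : ℂ) = 0 := by
      have h6 : (inner ℂ (w : W) ((w₂ : W) : W) : ℂ) = 0 :=
        Submodule.mem_orthogonal_singleton_iff_inner_right.mp (w₂ : W₂).2
      rw [Submodule.coe_inner] at h6
      exact h6
    refine ⟨ω, ω₂, fun i =>
      if h : (i : ℕ) = 0 then (w : E)
      else if h' : (i : ℕ) = 1 then w₂'
      else (bK (Fin.cast hfK.symm ⟨(i : ℕ) - 2, by omega⟩) : E), hωne, habs, habs₂, ?_, ?_⟩
    · rw [orthonormal_iff_ite]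
      intro i j
      by_cases hi : (i : ℕ) = 0 <;> by_cases hj : (j : ℕ) = 0 <;>
        by_cases hi' : (i : ℕ) = 1 <;> by_cases hj' : (j : ℕ) = 1 <;>
        simp only [hi, hj, hi', hj', dif_pos, dif_neg, dite_true, dite_false] <;>
        first
        | omega
        | (have hij : i = j := Fin.ext (by omega); simp [hij, hww, hw₂w₂, show ‖(w : E)‖ = 1 from hw1, show ‖w₂'‖ = 1 from hw₂1])
        | (rw [if_neg (show i ≠ j from fun h => by subst h; omega)]
           first
           | exact hww₂
           | (rw [inner_eq_zero_symm]; exact hww₂)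
           | exact hwK0 _ (bK _).2
           | (rw [inner_eq_zero_symm]; exact hwK0 _ (bK _).2)
           | exact hw₂K0 _ (bK _).2
           | (rw [inner_eq_zero_symm]; exact hw₂K0 _ (bK _).2))
        | (rw [hbKinner]
           have hiff : (Fin.cast hfK.symm ⟨(i : ℕ) - 2, by omega⟩
               = Fin.cast hfK.symm ⟨(j : ℕ) - 2, by omega⟩) ↔ i = j := by
             constructor
             · intro h
               have := Fin.val_eq_of_eq h
               simp at this
               exact Fin.ext (by omega)
             · intro h; subst h; rfl
           simp only [Fin.ext_iff] at hiff ⊢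
           split_ifs with h' h'' h'' <;> first | rfl | omega)
    · intro i
      by_cases hi : (i : ℕ) = 0 <;> by_cases hi' : (i : ℕ) = 1 <;>
        simp only [hi, hi', dif_pos, dif_neg, dite_true, dite_false,
          if_pos, if_neg, ite_true, ite_false]
      · omega
      · exact hTw
      · exact hTw₂
      · rw [one_smul]
        exact hbKfix _

private lemma toEuclideanLin_one' :
    Matrix.toEuclideanLin (1 : Matrix (Fin n) (Fin n) ℂ) = LinearMap.id := by
  ext x i
  simp [Matrix.toEuclideanLin_apply, Matrix.one_mulVec]

private lemma inner_toEuclideanLin (U : Matrix (Fin n) (Fin n) ℂ)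
    (hU : U ∈ Matrix.unitaryGroup (Fin n) ℂ) (x y : EuclideanSpace ℂ (Fin n)) :
    (inner ℂ (Matrix.toEuclideanLin U x) (Matrix.toEuclideanLin U y) : ℂ) = inner ℂ x y := by
  have hsU : star U * U = 1 := Matrix.mem_unitaryGroup_iff'.mp hU
  have key : ∀ (a b : Fin n → ℂ), (∑ i, starRingEnd ℂ (a i) * b i) = star a ⬝ᵥ b := by
    intro a b; simp [dotProduct]
  simp only [PiLp.inner_apply, RCLike.inner_apply]
  simp only [mul_comm _ ((starRingEnd ℂ) _)]
  calc (∑ i, starRingEnd ℂ ((Matrix.toEuclideanLin U x) i) * ((Matrix.toEuclideanLin U y) i))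
      = star (U *ᵥ (x : Fin n → ℂ)) ⬝ᵥ (U *ᵥ (y : Fin n → ℂ)) := key _ _
    _ = star (x : Fin n → ℂ) ⬝ᵥ ((star U * U) *ᵥ (y : Fin n → ℂ)) := by
        rw [Matrix.star_mulVec, dotProduct_mulVec, Matrix.vecMul_vecMul,
          ← dotProduct_mulVec]
        rfl
    _ = ∑ i, starRingEnd ℂ (x i) * (y i) := by rw [hsU, Matrix.one_mulVec, key]

private lemma finrank_ker_add_rank (U : Matrix (Fin n) (Fin n) ℂ) :
    Module.finrank ℂ (LinearMap.ker (Matrix.toEuclideanLin U - LinearMap.id)) + (U - 1).rank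
      = n := by
  have h1 : Matrix.toEuclideanLin U - LinearMap.id = Matrix.toEuclideanLin (U - 1) := by
    rw [map_sub, toEuclideanLin_one']
  rw [h1]
  have h2 : (U - 1).rank = Module.finrank ℂ (LinearMap.range (Matrix.toEuclideanLin (U - 1))) := by
    rw [Matrix.rank_eq_finrank_range_toLin (U - 1) (PiLp.basisFun 2 ℂ (Fin n))
      (PiLp.basisFun 2 ℂ (Fin n))]
    rfl
  rw [h2]
  have h3 := LinearMap.finrank_range_add_finrank_ker (Matrix.toEuclideanLin (U - 1))
  simp only [finrank_euclideanSpace, Fintype.card_fin] at h3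
  omega

private lemma eq_one_of_fixed (U : Matrix (Fin n) (Fin n) ℂ)
    (h : ∀ x, Matrix.toEuclideanLin U x = x) : U = 1 := by
  have : Matrix.toEuclideanLin U = Matrix.toEuclideanLin 1 := by
    rw [toEuclideanLin_one']; ext x i; rw [h]; rfl
  exact Matrix.toEuclideanLin.injective this

private lemma det_eq_prod (U' : Matrix (Fin n) (Fin n) ℂ) (V : Matrix.unitaryGroup (Fin n) ℂ)
    (μ : Fin n → ℂ)
    (hVeq : (V : Matrix (Fin n) (Fin n) ℂ) * U' * star (V : Matrix (Fin n) (Fin n) ℂ)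
      = Matrix.diagonal μ) : U'.det = ∏ i, μ i := by
  have h4 : (V : Matrix (Fin n) (Fin n) ℂ).det * U'.det
      * (star (V : Matrix (Fin n) (Fin n) ℂ)).det = ∏ i, μ i := by
    rw [← Matrix.det_mul, ← Matrix.det_mul, hVeq, Matrix.det_diagonal]
  have h5 : (V : Matrix (Fin n) (Fin n) ℂ).det * (star (V : Matrix (Fin n) (Fin n) ℂ)).det = 1 := by
    rw [← Matrix.det_mul, Matrix.mem_unitaryGroup_iff.mp V.2, Matrix.det_one]
  calc U'.det = U'.det * ((V : Matrix (Fin n) (Fin n) ℂ).det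
        * (star (V : Matrix (Fin n) (Fin n) ℂ)).det) := by rw [h5, mul_one]
    _ = (V : Matrix (Fin n) (Fin n) ℂ).det * U'.det
        * (star (V : Matrix (Fin n) (Fin n) ℂ)).det := by ring
    _ = ∏ i, μ i := h4

private lemma prod_ite_zero_one (hn : 2 ≤ n) (a b : ℂ) :
    (∏ i : Fin n, if (i : ℕ) = 0 then a else if (i : ℕ) = 1 then b else 1) = a * b := by
  set i0 : Fin n := ⟨0, by omega⟩
  set i1 : Fin n := ⟨1, by omega⟩
  set g : Fin n → ℂ := fun i => if (i : ℕ) = 0 then a else if (i : ℕ) = 1 then b else 1 with hg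
  have h0 : g i0 = a := by simp [hg, i0]
  have h1 : g i1 = b := by simp [hg, i1]
  rw [← Finset.mul_prod_erase Finset.univ g (Finset.mem_univ i0)]
  have hmem : i1 ∈ Finset.univ.erase i0 := by
    simp [Finset.mem_erase, i0, i1, Fin.ext_iff]
  rw [← Finset.mul_prod_erase _ g hmem, h0, h1]
  have : ∏ x ∈ (Finset.univ.erase i0).erase i1, g x = 1 := by
    apply Finset.prod_eq_one
    intro x hx
    rw [Finset.mem_erase, Finset.mem_erase] at hx
    have hx1 : (x : ℕ) ≠ 1 := fun h => hx.1 (by simp [i1, Fin.ext_iff, h])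
    have hx0 : (x : ℕ) ≠ 0 := fun h => hx.2.1 (by simp [i0, Fin.ext_iff, h])
    simp [hg, hx0, hx1]
  rw [this, mul_one]

set_option maxHeartbeats 1000000 in
/-- A unitary `U ≠ I` with `rank (U - I) ≤ 2` and `det U = 1` is unitarily similar to
`diag (ω, conj ω, 1, …, 1)` for some `ω ≠ 1` on the unit circle. -/
theorem stmt3 (n : ℕ) (U : Matrix.unitaryGroup (Fin n) ℂ)
    (h1 : ((U : Matrix (Fin n) (Fin n) ℂ) - 1).rank ≤ 2)
    (h2 : (U : Matrix (Fin n) (Fin n) ℂ).det = 1)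
    (h3 : (U : Matrix (Fin n) (Fin n) ℂ) ≠ 1) :
    ∃ ω : ℂ, ω ≠ 1 ∧ ‖ω‖ = 1 ∧
      ∃ V : Matrix.unitaryGroup (Fin n) ℂ,
        (V : Matrix (Fin n) (Fin n) ℂ) * (U : Matrix (Fin n) (Fin n) ℂ)
            * star (V : Matrix (Fin n) (Fin n) ℂ) =
          Matrix.diagonal (fun i : Fin n =>
            if (i : ℕ) = 0 then ω else if (i : ℕ) = 1 then (starRingEnd ℂ) ω else 1) := by
  have hn2 : 2 ≤ n := by
    by_contra h
    interval_cases n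
    · exact h3 (Subsingleton.elim _ _)
    · apply h3
      ext i j
      fin_cases i; fin_cases j
      simpa [Matrix.det_fin_one] using h2
  set U' : Matrix (Fin n) (Fin n) ℂ := (U : Matrix (Fin n) (Fin n) ℂ) with hU'
  set T := Matrix.toEuclideanLin U' with hT
  have hinner : ∀ x y : EuclideanSpace ℂ (Fin n), (inner ℂ (T x) (T y) : ℂ) = inner ℂ x y :=
    inner_toEuclideanLin U' U.2
  have hKrank : Module.finrank ℂ (LinearMap.ker (T - LinearMap.id)) + (U' - 1).rank = n :=
    finrank_ker_add_rank U'
  have hKne : LinearMap.ker (T - LinearMap.id) ≠ ⊤ := by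
    intro htop
    apply h3
    apply eq_one_of_fixed
    intro x
    have : x ∈ LinearMap.ker (T - LinearMap.id) := htop ▸ Submodule.mem_top
    rw [LinearMap.mem_ker, LinearMap.sub_apply, sub_eq_zero] at this
    exact this
  have hEn : Module.finrank ℂ (EuclideanSpace ℂ (Fin n)) = n := by
    simp [finrank_euclideanSpace]
  obtain ⟨ω, ω₂, f, hωne, habs, habs₂, hforth, heig⟩ := eigen_family T hinner hKne (by omega)
  set g : Fin n → EuclideanSpace ℂ (Fin n) := fun i => f (Fin.cast hEn.symm i) with hg
  have hgorth : Orthonormal ℂ g := hforth.comp _ (Fin.cast_injective _)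
  set μ : Fin n → ℂ := fun i =>
    if (i : ℕ) = 0 then ω else if (i : ℕ) = 1 then ω₂ else 1 with hμ
  have hgeig : ∀ i, U'.mulVec (g i) = μ i • (g i : Fin n → ℂ) := by
    intro i
    have := congrArg WithLp.ofLp (heig (Fin.cast hEn.symm i))
    simpa [hg, hμ, hT, Matrix.toEuclideanLin_apply, Fin.coe_cast, apply_ite (WithLp.ofLp (p := 2))] using this
  obtain ⟨V, hVeq⟩ := diag_of_eigen U' g hgorth μ hgeig
  have hdet := det_eq_prod U' V μ hVeq
  rw [h2, hμ, prod_ite_zero_one hn2] at hdet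
  have hω₂eq : ω₂ = (starRingEnd ℂ) ω := by
    have hconj : ω * (starRingEnd ℂ) ω = 1 := by
      rw [Complex.mul_conj]
      norm_cast
      rw [Complex.normSq_eq_norm_sq, habs]; norm_num
    have hωne0 : ω ≠ 0 := by
      intro h; rw [h] at habs; simp at habs
    have := hdet.symm.trans hconj.symm
    exact mul_left_cancel₀ hωne0 this
  refine ⟨ω, hωne, habs, V, ?_⟩
  rw [hVeq, hμ, hω₂eq]
end

section
/- Let p, q be primes and G = G(p,q,A) as in the standard construction. Every multiplicative commutator XYX⁻¹Y⁻¹ with X, Y in G is a diagonal matrix whose diagonal entries are q-th roots of unity and whose determinant equals one. -/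
open Matrix

private def Gen (p : ℕ) [NeZero p] (k : Fin p) (d : Fin p → ℂ) :
    Matrix (Fin p) (Fin p) ℂ :=
  Matrix.of fun i j => if i = j + k then d j else 0

private lemma Gen_mul {p : ℕ} [NeZero p] (k l : Fin p) (d e : Fin p → ℂ) :
    Gen p k d * Gen p l e = Gen p (k + l) (fun j => d (j + l) * e j) := by
  ext i j
  simp only [Gen, Matrix.mul_apply, Matrix.of_apply]
  rw [Finset.sum_eq_single (j + l)]
  · have : j + l + k = j + (k + l) := by rw [add_assoc, add_comm l k]
    rw [this]
    split <;> simp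
  · intro x _ hx; simp [hx]
  · simp

private lemma Gen_zero {p : ℕ} [NeZero p] (d : Fin p → ℂ) :
    Gen p 0 d = Matrix.diagonal d := by
  ext i j
  simp only [Gen, Matrix.of_apply, Matrix.diagonal_apply, add_zero]
  split <;> rename_i h
  · simp [h]
  · simp [h]

private lemma Gen_one {p : ℕ} [NeZero p] : Gen p 0 (fun _ => 1) = 1 := by
  rw [Gen_zero]; simp [Matrix.diagonal_one]

/-- Every multiplicative commutator in `G(p,q,A)` is a diagonal matrix whose diagonal entries
are `q`-th roots of unity and whose determinant is one. -/
theorem stmt6 (p q : ℕ) [NeZero p] (hp : p.Prime) (hq : q.Prime)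
    (SU AU : Matrix.unitaryGroup (Fin p) ℂ)
    (hS : (SU : Matrix (Fin p) (Fin p) ℂ)
      = Matrix.of fun i j : Fin p => if i = j + 1 then (1 : ℂ) else 0)
    (ω : Fin p → ℂ) (hA : (AU : Matrix (Fin p) (Fin p) ℂ) = Matrix.diagonal ω)
    (hω : ∀ i, ω i ^ q = 1) (hns : ∃ i j, ω i ≠ ω j)
    (G : Subgroup (Matrix.unitaryGroup (Fin p) ℂ)) (hG : G = Subgroup.closure {SU, AU}) :
    ∀ X ∈ G, ∀ Y ∈ G, ∃ d : Fin p → ℂ, (∀ i, d i ^ q = 1) ∧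
      ((X * Y * X⁻¹ * Y⁻¹ : Matrix.unitaryGroup (Fin p) ℂ) : Matrix (Fin p) (Fin p) ℂ)
        = Matrix.diagonal d ∧ (Matrix.diagonal d).det = 1 := by
  have hq0 : q ≠ 0 := hq.ne_zero
  -- coe lemmas
  have coe_mul : ∀ U V : Matrix.unitaryGroup (Fin p) ℂ,
      ((U * V : Matrix.unitaryGroup (Fin p) ℂ) : Matrix (Fin p) (Fin p) ℂ) = U * V := by
    intro U V; rfl
  have coe_one : ((1 : Matrix.unitaryGroup (Fin p) ℂ) : Matrix (Fin p) (Fin p) ℂ) = 1 := rfl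
  -- the subgroup of "shift times diagonal" matrices
  set H : Subgroup (Matrix.unitaryGroup (Fin p) ℂ) :=
    { carrier := {U | ∃ k d, (∀ i, d i ^ q = 1) ∧
        (U : Matrix (Fin p) (Fin p) ℂ) = Gen p k d}
      one_mem' := ⟨0, fun _ => 1, by simp, by rw [Gen_one]; rfl⟩
      mul_mem' := by
        rintro U V ⟨k, d, hd, hU⟩ ⟨l, e, he, hV⟩
        exact ⟨k + l, fun j => d (j + l) * e j,
          fun i => by rw [mul_pow, hd, he, one_mul],
          by rw [coe_mul, hU, hV, Gen_mul]⟩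
      inv_mem' := by
        rintro U ⟨k, d, hd, hU⟩
        have hdne : ∀ i, d i ≠ 0 := by
          intro i h
          have := hd i
          rw [h, zero_pow hq0] at this
          exact zero_ne_one this
        refine ⟨-k, fun j => (d (j + -k))⁻¹,
          fun i => by rw [inv_pow, hd, inv_one], ?_⟩
        have key : (U : Matrix (Fin p) (Fin p) ℂ) * Gen p (-k) (fun j => (d (j + -k))⁻¹) = 1 := by
          rw [hU, Gen_mul]
          have : (fun j => d (j + -k) * (d (j + -k))⁻¹) = fun _ => (1 : ℂ) := by
            funext j; exact mul_inv_cancel₀ (hdne _)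
          rw [this]
          simp [Gen_one]
        calc ((U⁻¹ : Matrix.unitaryGroup (Fin p) ℂ) : Matrix (Fin p) (Fin p) ℂ)
            = (U⁻¹ : Matrix.unitaryGroup (Fin p) ℂ) *
              ((U : Matrix (Fin p) (Fin p) ℂ) * Gen p (-k) (fun j => (d (j + -k))⁻¹)) := by
              rw [key, mul_one]
          _ = (((U⁻¹ * U : Matrix.unitaryGroup (Fin p) ℂ)) : Matrix (Fin p) (Fin p) ℂ) *
              Gen p (-k) (fun j => (d (j + -k))⁻¹) := by rw [coe_mul, mul_assoc]
          _ = Gen p (-k) (fun j => (d (j + -k))⁻¹) := by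
              rw [inv_mul_cancel, coe_one, one_mul] }
  -- G ≤ H
  have hGH : G ≤ H := by
    rw [hG, Subgroup.closure_le]
    rintro U (rfl | rfl)
    · refine ⟨1, fun _ => 1, by simp, ?_⟩
      rw [hS]; ext i j; simp [Gen]
    · refine ⟨0, ω, hω, ?_⟩
      rw [hA, Gen_zero]
  -- inverse representation lemma
  have inv_rep : ∀ (U : Matrix.unitaryGroup (Fin p) ℂ) (k : Fin p) (d : Fin p → ℂ),
      (∀ i, d i ^ q = 1) → (U : Matrix (Fin p) (Fin p) ℂ) = Gen p k d →
      ((U⁻¹ : Matrix.unitaryGroup (Fin p) ℂ) : Matrix (Fin p) (Fin p) ℂ)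
        = Gen p (-k) (fun j => (d (j + -k))⁻¹) := by
    intro U k d hd hU
    have hdne : ∀ i, d i ≠ 0 := by
      intro i h
      have := hd i
      rw [h, zero_pow hq0] at this
      exact zero_ne_one this
    have key : (U : Matrix (Fin p) (Fin p) ℂ) * Gen p (-k) (fun j => (d (j + -k))⁻¹) = 1 := by
      rw [hU, Gen_mul]
      have : (fun j => d (j + -k) * (d (j + -k))⁻¹) = fun _ => (1 : ℂ) := by
        funext j; exact mul_inv_cancel₀ (hdne _)
      rw [this]
      simp [Gen_one]
    calc ((U⁻¹ : Matrix.unitaryGroup (Fin p) ℂ) : Matrix (Fin p) (Fin p) ℂ)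
        = (U⁻¹ : Matrix.unitaryGroup (Fin p) ℂ) *
          ((U : Matrix (Fin p) (Fin p) ℂ) * Gen p (-k) (fun j => (d (j + -k))⁻¹)) := by
          rw [key, mul_one]
      _ = (((U⁻¹ * U : Matrix.unitaryGroup (Fin p) ℂ)) : Matrix (Fin p) (Fin p) ℂ) *
          Gen p (-k) (fun j => (d (j + -k))⁻¹) := by rw [coe_mul, mul_assoc]
      _ = Gen p (-k) (fun j => (d (j + -k))⁻¹) := by
          rw [inv_mul_cancel, coe_one, one_mul]
  intro X hX Y hY
  obtain ⟨k, d, hd, hXr⟩ := hGH hX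
  obtain ⟨l, e, he, hYr⟩ := hGH hY
  have hXi := inv_rep X k d hd hXr
  have hYi := inv_rep Y l e he hYr
  have hcomm : ((X * Y * X⁻¹ * Y⁻¹ : Matrix.unitaryGroup (Fin p) ℂ) : Matrix (Fin p) (Fin p) ℂ)
      = Gen p (k + l + -k + -l)
        (fun j =>
          (fun j => ((fun j => d (j + l) * e j) (j + -k)) * (d (j + -k))⁻¹) (j + -l)
            * (e (j + -l))⁻¹) := by
    rw [coe_mul, coe_mul, coe_mul, hXr, hYr, hXi, hYi, Gen_mul, Gen_mul, Gen_mul]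
  have hk0 : k + l + -k + -l = 0 := by abel
  rw [hk0] at hcomm
  refine ⟨_, ?_, by rw [hcomm, Gen_zero], ?_⟩
  · intro i
    simp [mul_pow, inv_pow, hd, he]
  · -- determinant of a commutator is 1
    have hdet : (Matrix.diagonal (fun j =>
        (fun j => ((fun j => d (j + l) * e j) (j + -k)) * (d (j + -k))⁻¹) (j + -l)
          * (e (j + -l))⁻¹)).det
        = ((X * Y * X⁻¹ * Y⁻¹ : Matrix.unitaryGroup (Fin p) ℂ) : Matrix (Fin p) (Fin p) ℂ).det := by
      rw [hcomm, Gen_zero]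
    rw [hdet, coe_mul, coe_mul, coe_mul]
    have h1 : ((X : Matrix (Fin p) (Fin p) ℂ)).det *
        ((X⁻¹ : Matrix.unitaryGroup (Fin p) ℂ) : Matrix (Fin p) (Fin p) ℂ).det = 1 := by
      rw [← Matrix.det_mul, ← coe_mul, mul_inv_cancel, coe_one, Matrix.det_one]
    have h2 : ((Y : Matrix (Fin p) (Fin p) ℂ)).det *
        ((Y⁻¹ : Matrix.unitaryGroup (Fin p) ℂ) : Matrix (Fin p) (Fin p) ℂ).det = 1 := by
      rw [← Matrix.det_mul, ← coe_mul, mul_inv_cancel, coe_one, Matrix.det_one]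
    rw [Matrix.det_mul, Matrix.det_mul, Matrix.det_mul]
    calc ((X : Matrix (Fin p) (Fin p) ℂ)).det * ((Y : Matrix (Fin p) (Fin p) ℂ)).det *
          ((X⁻¹ : Matrix.unitaryGroup (Fin p) ℂ) : Matrix (Fin p) (Fin p) ℂ).det *
          ((Y⁻¹ : Matrix.unitaryGroup (Fin p) ℂ) : Matrix (Fin p) (Fin p) ℂ).det
        = (((X : Matrix (Fin p) (Fin p) ℂ)).det *
            ((X⁻¹ : Matrix.unitaryGroup (Fin p) ℂ) : Matrix (Fin p) (Fin p) ℂ).det) *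
          (((Y : Matrix (Fin p) (Fin p) ℂ)).det *
            ((Y⁻¹ : Matrix.unitaryGroup (Fin p) ℂ) : Matrix (Fin p) (Fin p) ℂ).det) := by ring
      _ = 1 := by rw [h1, h2, one_mul]
end

section
/- Let p, q be primes and A a non-scalar p×p diagonal matrix with diagonal entries that are q-th roots of unity. If rank(XY − YX) ≤ 2 for all X, Y in G(p,q,A), with equality attained for some pair, then either p = 2, or p = 3 and q = 2. -/
open Matrix

/-- If `rank (XY - YX) ≤ 2` on `G(p,q,A)` with equality attained, then `p = 2`, or
`p = 3` and `q = 2`. -/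
theorem stmt7 (p q : ℕ) [NeZero p] (hp : p.Prime) (hq : q.Prime)
    (SU AU : Matrix.unitaryGroup (Fin p) ℂ)
    (hS : (SU : Matrix (Fin p) (Fin p) ℂ)
      = Matrix.of fun i j : Fin p => if i = j + 1 then (1 : ℂ) else 0)
    (ω : Fin p → ℂ) (hA : (AU : Matrix (Fin p) (Fin p) ℂ) = Matrix.diagonal ω)
    (hω : ∀ i, ω i ^ q = 1) (hns : ∃ i j, ω i ≠ ω j)
    (G : Subgroup (Matrix.unitaryGroup (Fin p) ℂ)) (hG : G = Subgroup.closure {SU, AU})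
    (hle : ∀ X ∈ G, ∀ Y ∈ G,
      ((X : Matrix (Fin p) (Fin p) ℂ) * (Y : Matrix (Fin p) (Fin p) ℂ)
        - (Y : Matrix (Fin p) (Fin p) ℂ) * (X : Matrix (Fin p) (Fin p) ℂ)).rank ≤ 2)
    (heq : ∃ X ∈ G, ∃ Y ∈ G,
      ((X : Matrix (Fin p) (Fin p) ℂ) * (Y : Matrix (Fin p) (Fin p) ℂ)
        - (Y : Matrix (Fin p) (Fin p) ℂ) * (X : Matrix (Fin p) (Fin p) ℂ)).rank = 2) :
    p = 2 ∨ (p = 3 ∧ q = 2) := by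
  open Fin.CommRing in (
  by_contra hcon
  push_neg at hcon
  obtain ⟨hp2, hp3q⟩ := hcon
  have hp1 : 1 < p := hp.one_lt
  -- memberships
  have hSG : SU ∈ G := by rw [hG]; exact Subgroup.subset_closure (by simp)
  have hAG : AU ∈ G := by rw [hG]; exact Subgroup.subset_closure (by simp)
  -- ω values are nonzero, conj = inv
  have hω0 : ∀ i, ω i ≠ 0 := by
    intro i h
    have := hω i
    rw [h, zero_pow hq.ne_zero] at this
    exact zero_ne_one this
  have hconj : ∀ i, (starRingEnd ℂ) (ω i) = (ω i)⁻¹ := by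
    intro i
    have habs : ‖ω i‖ = 1 := by
      have h1 : ‖ω i‖ ^ q = 1 := by rw [← norm_pow, hω i, norm_one]
      rcases (pow_eq_one_iff_of_ne_zero hq.ne_zero).mp h1 with h | ⟨h, _⟩
      · exact h
      · nlinarith [norm_nonneg (ω i)]
    have hmul : ω i * (starRingEnd ℂ) (ω i) = 1 := by
      rw [Complex.mul_conj]
      norm_cast
      rw [Complex.normSq_eq_norm_sq, habs, one_pow]
    exact eq_inv_of_mul_eq_one_left (by rw [mul_comm]; exact hmul)
  -- the key rank lemma
  have key : ∀ D : Matrix.unitaryGroup (Fin p) ℂ, D ∈ G →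
      ∀ d : Fin p → ℂ, (D : Matrix (Fin p) (Fin p) ℂ) = diagonal d →
      ∀ j₁ j₂ j₃ : Fin p, j₁ ≠ j₂ → j₁ ≠ j₃ → j₂ ≠ j₃ →
      d j₁ ≠ d (j₁+1) → d j₂ ≠ d (j₂+1) → d j₃ ≠ d (j₃+1) → False := by
    intro D hDG d hD j₁ j₂ j₃ h12 h13 h23 g1 g2 g3
    have hle' := hle SU hSG D hDG
    set Sm := (SU : Matrix (Fin p) (Fin p) ℂ) with hSm
    have hcomm : Sm * diagonal d - diagonal d * Sm
        = Sm * diagonal (fun j => d j - d (j+1)) := by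
      ext i j
      rw [Matrix.sub_apply, Matrix.mul_diagonal, Matrix.mul_diagonal, Matrix.diagonal_mul, hS]
      simp only [Matrix.of_apply]
      by_cases h : i = j + 1 <;> simp [h]
    have hdet : IsUnit Sm.det := by
      have h0 : Sm * star Sm = 1 := Unitary.coe_mul_star_self SU
      have h1 : Sm.det * (star Sm).det = 1 := by
        rw [← Matrix.det_mul, h0, Matrix.det_one]
      exact IsUnit.of_mul_eq_one _ h1
    have hrank : ((SU : Matrix (Fin p) (Fin p) ℂ) * (D : Matrix (Fin p) (Fin p) ℂ)
          - (D : Matrix (Fin p) (Fin p) ℂ) * (SU : Matrix (Fin p) (Fin p) ℂ)).rank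
        = Fintype.card {j // d j - d (j+1) ≠ 0} := by
      rw [hD, ← hSm, hcomm, Matrix.rank_mul_eq_right_of_isUnit_det _ _ hdet,
        Matrix.rank_diagonal]
    rw [hrank] at hle'
    have h3 : 2 < Fintype.card {j // d j - d (j+1) ≠ 0} := by
      rw [Fintype.two_lt_card_iff]
      refine ⟨⟨j₁, sub_ne_zero.2 g1⟩, ⟨j₂, sub_ne_zero.2 g2⟩, ⟨j₃, sub_ne_zero.2 g3⟩,
        fun h => h12 (congrArg Subtype.val h), fun h => h13 (congrArg Subtype.val h),
        fun h => h23 (congrArg Subtype.val h)⟩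
    omega
  -- conjugation by S shifts a diagonal element
  have hconjS : ∀ (U : Matrix.unitaryGroup (Fin p) ℂ) (δ : Fin p → ℂ),
      (U : Matrix (Fin p) (Fin p) ℂ) = diagonal δ →
      ((SU * U * SU⁻¹ : Matrix.unitaryGroup (Fin p) ℂ) : Matrix (Fin p) (Fin p) ℂ)
        = diagonal (fun i => δ (i - 1)) := by
    intro U δ hU
    have hcoe : ((SU * U * SU⁻¹ : Matrix.unitaryGroup (Fin p) ℂ) : Matrix (Fin p) (Fin p) ℂ)
        = (SU : Matrix (Fin p) (Fin p) ℂ) * (U : Matrix (Fin p) (Fin p) ℂ)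
          * star (SU : Matrix (Fin p) (Fin p) ℂ) := rfl
    have hswap : (SU : Matrix (Fin p) (Fin p) ℂ) * diagonal δ
        = diagonal (fun i => δ (i - 1)) * (SU : Matrix (Fin p) (Fin p) ℂ) := by
      ext i j
      rw [Matrix.mul_diagonal, Matrix.diagonal_mul, hS]
      simp only [Matrix.of_apply]
      by_cases h : i = j + 1 <;> simp [h]
    have h0 : (SU : Matrix (Fin p) (Fin p) ℂ) * star (SU : Matrix (Fin p) (Fin p) ℂ) = 1 :=
      Unitary.coe_mul_star_self SU
    rw [hcoe, hU, hswap, mul_assoc, h0, mul_one]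
  -- quotient of two diagonal elements
  have hdiv : ∀ (U V : Matrix.unitaryGroup (Fin p) ℂ) (δ ε : Fin p → ℂ),
      (U : Matrix (Fin p) (Fin p) ℂ) = diagonal δ →
      (V : Matrix (Fin p) (Fin p) ℂ) = diagonal ε →
      ((U * V⁻¹ : Matrix.unitaryGroup (Fin p) ℂ) : Matrix (Fin p) (Fin p) ℂ)
        = diagonal (fun i => δ i * (starRingEnd ℂ) (ε i)) := by
    intro U V δ ε hU hV
    have hcoe : ((U * V⁻¹ : Matrix.unitaryGroup (Fin p) ℂ) : Matrix (Fin p) (Fin p) ℂ)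
        = (U : Matrix (Fin p) (Fin p) ℂ) * star (V : Matrix (Fin p) (Fin p) ℂ) := rfl
    rw [hcoe, hU, hV, Matrix.star_eq_conjTranspose, Matrix.diagonal_conjTranspose,
      Matrix.diagonal_mul_diagonal]
    rfl
  -- the elements B₁ = S A S⁻¹, B₂ = S² A S⁻², D₁ = A B₁⁻¹, D₂ = A B₂⁻¹
  set B₁ : Matrix.unitaryGroup (Fin p) ℂ := SU * AU * SU⁻¹ with hB₁def
  have hB₁ : (B₁ : Matrix (Fin p) (Fin p) ℂ) = diagonal (fun i => ω (i - 1)) :=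
    hconjS AU ω hA
  have hB₁G : B₁ ∈ G := G.mul_mem (G.mul_mem hSG hAG) (G.inv_mem hSG)
  set B₂ : Matrix.unitaryGroup (Fin p) ℂ := SU * B₁ * SU⁻¹ with hB₂def
  have hB₂ : (B₂ : Matrix (Fin p) (Fin p) ℂ) = diagonal (fun i => ω (i - 1 - 1)) :=
    hconjS B₁ (fun i => ω (i - 1)) hB₁
  have hB₂G : B₂ ∈ G := G.mul_mem (G.mul_mem hSG hB₁G) (G.inv_mem hSG)
  set D₁ : Matrix.unitaryGroup (Fin p) ℂ := AU * B₁⁻¹ with hD₁def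
  have hD₁ : (D₁ : Matrix (Fin p) (Fin p) ℂ)
      = diagonal (fun i => ω i * (ω (i - 1))⁻¹) := by
    rw [hD₁def, hdiv AU B₁ ω (fun i => ω (i - 1)) hA hB₁]
    exact congrArg diagonal (funext fun i => by rw [hconj])
  have hD₁G : D₁ ∈ G := G.mul_mem hAG (G.inv_mem hB₁G)
  set D₂ : Matrix.unitaryGroup (Fin p) ℂ := AU * B₂⁻¹ with hD₂def
  have hD₂ : (D₂ : Matrix (Fin p) (Fin p) ℂ)
      = diagonal (fun i => ω i * (ω (i - 1 - 1))⁻¹) := by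
    rw [hD₂def, hdiv AU B₂ ω (fun i => ω (i - 1 - 1)) hA hB₂]
    exact congrArg diagonal (funext fun i => by rw [hconj])
  have hD₂G : D₂ ∈ G := G.mul_mem hAG (G.inv_mem hB₂G)
  -- arithmetic helpers in Fin p
  have hcast : ∀ c : ℕ, 0 < c → c < p → ((c : ℕ) : Fin p) ≠ 0 := by
    intro c h1 h2 h
    have := Fin.val_cast_of_lt h2
    rw [h] at this
    simp at this
    omega
  have hfin : ∀ (x y : Fin p) (c : ℕ), 0 < c → c < p → y = x + ((c : ℕ) : Fin p) → x ≠ y := by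
    intro x y c h1 h2 hyx hxy
    subst hxy
    apply hcast c h1 h2
    linear_combination -hyx
  -- step lemma: constancy along arcs
  have hsteps : ∀ (i : Fin p) (k : ℕ),
      (∀ t : ℕ, t < k → ω (i + t) = ω (i + t + 1)) → ω i = ω (i + k) := by
    intro i k
    induction k with
    | zero => simp
    | succ n ih =>
      intro h
      rw [ih (fun t ht => h t (by omega)), h n (by omega)]
      congr 1
      push_cast
      ring
  -- there is a jump
  have hjump : ∃ m : Fin p, ω m ≠ ω (m + 1) := by
    by_contra hno
    push_neg at hno
    obtain ⟨i, j, hij⟩ := hns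
    apply hij
    have : ω i = ω (i + ((j - i).val : Fin p)) :=
      hsteps i (j - i).val (fun t _ => hno _)
    rwa [Fin.cast_val_eq_self, add_sub_cancel] at this
  obtain ⟨m, jm⟩ := hjump
  -- main case split on p
  rcases Nat.lt_or_ge p 5 with hplt | hp5
  · -- then p = 3
    have hp3 : p = 3 := by
      interval_cases p
      · omega
      · rfl
      · exact absurd hp (by decide)
    subst hp3
    have hq2 : q ≠ 2 := hp3q rfl
    obtain ⟨k, hk⟩ := hq.odd_of_ne_two hq2
    have hsq : ∀ a b : ℂ, a ^ q = 1 → b ^ q = 1 → a * a = b * b → a = b := by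
      intro a b ha hb h2
      have ea : ∀ x : ℂ, x ^ q = 1 → (x * x) ^ (k + 1) = x := by
        intro x hx
        have h1 : (x * x) ^ (k + 1) = x ^ (q + 1) := by
          rw [← sq, ← pow_mul]
          congr 1
          omega
        rw [h1, pow_succ, hx, one_mul]
      rw [← ea a ha, ← ea b hb, h2]
    have h30 : (3 : Fin 3) = 0 := by exact_mod_cast Fin.natCast_self 3
    have s1 : (0 : Fin 3) - 1 = 2 := by linear_combination -h30
    have s2 : (1 : Fin 3) - 1 = 0 := by ring
    have s3 : (2 : Fin 3) - 1 = 1 := by ring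
    have s4 : (0 : Fin 3) + 1 = 1 := by ring
    have s5 : (1 : Fin 3) + 1 = 2 := by ring
    have s6 : (2 : Fin 3) + 1 = 0 := by linear_combination h30
    have t01 : (0 : Fin 3) ≠ 1 := hfin 0 1 1 one_pos (by omega) (by push_cast; try ring)
    have t02 : (0 : Fin 3) ≠ 2 := hfin 0 2 2 (by omega) (by omega) (by push_cast; try ring)
    have t12 : (1 : Fin 3) ≠ 2 := hfin 1 2 1 one_pos (by omega) (by push_cast; try ring)
    have h00 : ω 0 ≠ 0 := hω0 0
    have h11 : ω 1 ≠ 0 := hω0 1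
    have h22 : ω 2 ≠ 0 := hω0 2
    by_cases hab : ω 0 = ω 1
    · by_cases hac : ω 0 = ω 2
      · obtain ⟨i, j, hij⟩ := hns
        have hall : ∀ t : Fin 3, ω t = ω 0 := by
          intro t
          fin_cases t
          · rfl
          · exact hab.symm
          · exact hac.symm
        exact hij ((hall i).trans (hall j).symm)
      · -- ω 0 = ω 1 ≠ ω 2
        refine key D₁ hD₁G _ hD₁ 0 1 2 t01 t02 t12 ?_ ?_ ?_
        · show ω 0 * (ω (0-1))⁻¹ ≠ ω (0+1) * (ω ((0+1) - 1))⁻¹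
          rw [s4, s1, s2, ← hab]
          intro hE
          exact hac (inv_injective (mul_left_cancel₀ (hω0 0) hE)).symm
        · show ω 1 * (ω (1-1))⁻¹ ≠ ω (1+1) * (ω ((1+1) - 1))⁻¹
          rw [s5, s2, s3, ← hab]
          intro hE
          exact hac (mul_right_cancel₀ (inv_ne_zero (hω0 0)) hE)
        · show ω 2 * (ω (2-1))⁻¹ ≠ ω (2+1) * (ω ((2+1) - 1))⁻¹
          rw [s6, s3, s1, ← hab]
          intro hE
          have h2 : ω 2 * ω 2 = ω 0 * ω 0 := by
            field_simp at hE
            first | linear_combination hE | linear_combination -hE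
          exact hac (hsq (ω 0) (ω 2) (hω 0) (hω 2) h2.symm)
    · by_cases hbc : ω 1 = ω 2
      · -- ω 0 ≠ ω 1 = ω 2
        refine key D₁ hD₁G _ hD₁ 0 1 2 t01 t02 t12 ?_ ?_ ?_
        · show ω 0 * (ω (0-1))⁻¹ ≠ ω (0+1) * (ω ((0+1) - 1))⁻¹
          rw [s4, s1, s2, ← hbc]
          intro hE
          have h2 : ω 0 * ω 0 = ω 1 * ω 1 := by
            field_simp at hE
            first | linear_combination hE | linear_combination -hE
          exact hab (hsq (ω 0) (ω 1) (hω 0) (hω 1) h2)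
        · show ω 1 * (ω (1-1))⁻¹ ≠ ω (1+1) * (ω ((1+1) - 1))⁻¹
          rw [s5, s2, s3, ← hbc]
          intro hE
          exact hab (inv_injective (mul_left_cancel₀ (hω0 1) hE))
        · show ω 2 * (ω (2-1))⁻¹ ≠ ω (2+1) * (ω ((2+1) - 1))⁻¹
          rw [s6, s3, s1, ← hbc]
          intro hE
          exact hab (mul_right_cancel₀ (inv_ne_zero (hω0 1)) hE).symm
      · by_cases hac : ω 0 = ω 2
        · -- ω 0 = ω 2, ω 0 ≠ ω 1
          refine key D₁ hD₁G _ hD₁ 0 1 2 t01 t02 t12 ?_ ?_ ?_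
          · show ω 0 * (ω (0-1))⁻¹ ≠ ω (0+1) * (ω ((0+1) - 1))⁻¹
            rw [s4, s1, s2, ← hac]
            intro hE
            exact hab (mul_right_cancel₀ (inv_ne_zero (hω0 0)) hE)
          · show ω 1 * (ω (1-1))⁻¹ ≠ ω (1+1) * (ω ((1+1) - 1))⁻¹
            rw [s5, s2, s3, ← hac]
            intro hE
            have h2 : ω 1 * ω 1 = ω 0 * ω 0 := by
              field_simp at hE
              linear_combination hE
            exact hab (hsq (ω 0) (ω 1) (hω 0) (hω 1) h2.symm)
          · show ω 2 * (ω (2-1))⁻¹ ≠ ω (2+1) * (ω ((2+1) - 1))⁻¹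
            rw [s6, s3, s1, ← hac]
            intro hE
            exact hab (inv_injective (mul_left_cancel₀ (hω0 0) hE)).symm
        · -- all three distinct
          refine key AU hAG ω hA 0 1 2 t01 t02 t12 ?_ ?_ ?_
          · rw [s4]; exact hab
          · rw [s5]; exact hbc
          · rw [s6]; exact fun h => hac h.symm
  · -- p ≥ 5
    have pair : ∀ n : Fin p, ω n ≠ ω (n + 1) → ω (n + 1) ≠ ω (n + 2) → False := by
      intro n j1 j2
      have hne01 : n ≠ n + 1 := hfin n (n+1) 1 one_pos (by omega) (by push_cast; try ring)
      have hne02 : n ≠ n + 2 := hfin n (n+2) 2 (by omega) (by omega) (by push_cast; try ring)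
      have hne12 : n + 1 ≠ n + 2 := hfin (n+1) (n+2) 1 one_pos (by omega) (by push_cast; try ring)
      have hoff : ∀ j : Fin p, j ≠ n → j ≠ n + 1 → ω j = ω (j + 1) := by
        intro j hj1 hj2
        by_contra hj
        exact key AU hAG ω hA n (n+1) j hne01 hj1.symm hj2.symm j1
          (by rw [show n+1+1 = n+2 by ring]; exact j2) hj
      have e1 : ω (n - 1) = ω n := by
        have h1 : n - 1 ≠ n := hfin (n-1) n 1 one_pos (by omega) (by push_cast; try ring)
        have h2 : n - 1 ≠ n + 1 := hfin (n-1) (n+1) 2 (by omega) (by omega) (by push_cast; try ring)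
        have := hoff (n-1) h1 h2
        rwa [show n-1+1 = n by ring] at this
      have e2 : ω (n - 1 - 1) = ω (n - 1) := by
        have h1 : n - 1 - 1 ≠ n := hfin (n-1-1) n 2 (by omega) (by omega) (by push_cast; try ring)
        have h2 : n - 1 - 1 ≠ n + 1 :=
          hfin (n-1-1) (n+1) 3 (by omega) (by omega) (by push_cast; try ring)
        have := hoff (n-1-1) h1 h2
        rwa [show n-1-1+1 = n-1 by ring] at this
      have e3 : ω (n + 2) = ω (n + 3) := by
        have h1 : n + 2 ≠ n := (hfin n (n+2) 2 (by omega) (by omega) (by push_cast; try ring)).symm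
        have h2 : n + 2 ≠ n + 1 :=
          (hfin (n+1) (n+2) 1 one_pos (by omega) (by push_cast; try ring)).symm
        have := hoff (n+2) h1 h2
        rwa [show n+2+1 = n+3 by ring] at this
      refine key D₂ hD₂G _ hD₂ n (n+1) (n+2) hne01 hne02 hne12 ?_ ?_ ?_
      · show ω n * (ω (n-1-1))⁻¹ ≠ ω (n+1) * (ω ((n+1)-1-1))⁻¹
        rw [show n+1-1-1 = n-1 by ring, e2, e1]
        intro hE
        exact j1 (mul_right_cancel₀ (inv_ne_zero (hω0 n)) hE)
      · show ω (n+1) * (ω ((n+1)-1-1))⁻¹ ≠ ω ((n+1)+1) * (ω ((n+1)+1-1-1))⁻¹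
        rw [show n+1-1-1 = n-1 by ring, show n+1+1 = n+2 by ring,
          show n+2-1-1 = n by ring, e1]
        intro hE
        exact j2 (mul_right_cancel₀ (inv_ne_zero (hω0 n)) hE)
      · show ω (n+2) * (ω ((n+2)-1-1))⁻¹ ≠ ω ((n+2)+1) * (ω ((n+2)+1-1-1))⁻¹
        rw [show n+2-1-1 = n by ring, show n+2+1 = n+3 by ring,
          show n+3-1-1 = n+1 by ring, ← e3]
        intro hE
        exact j1 (inv_injective (mul_left_cancel₀ (hω0 (n+2)) hE))
    by_cases hplus : ω (m + 1) = ω (m + 2)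
    · by_cases hminus : ω (m - 1) = ω m
      · by_cases hm' : ∃ m', m' ≠ m ∧ ω m' ≠ ω (m' + 1)
        · obtain ⟨m', hm'm, jm'⟩ := hm'
          have hm'm1 : m' ≠ m + 1 := by
            intro hE
            apply jm'
            rw [hE, show m+1+1 = m+2 by ring]
            exact hplus
          by_cases hdd : ω m' * (ω (m' - 1))⁻¹ = ω (m' + 1) * (ω (m' + 1 - 1))⁻¹
          · -- then ω jumps at m' - 1 as well
            have hd1 : ω (m' + 1) * (ω m')⁻¹ ≠ 1 := by
              intro hE
              exact jm' ((mul_inv_eq_one₀ (hω0 m')).mp hE).symm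
            have hjump' : ω (m' - 1) ≠ ω m' := by
              intro hE
              apply hd1
              have h1 : ω m' * (ω (m' - 1))⁻¹ = 1 := by
                rw [hE]
                exact mul_inv_cancel₀ (hω0 m')
              rw [hdd, show m'+1-1 = m' by ring] at h1
              exact h1
            have hd2 : m' - 1 ≠ m' := hfin (m'-1) m' 1 one_pos (by omega) (by push_cast; try ring)
            have hd3 : m' - 1 ≠ m := fun hE => hm'm1 (by linear_combination hE)
            refine key AU hAG ω hA (m'-1) m' m hd2 hd3 hm'm ?_ ?_ ?_
            · rw [show m'-1+1 = m' by ring]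
              exact hjump'
            · exact jm'
            · exact jm
          · -- three jumps of D₁ at m, m+1, m'
            have hne01 : m ≠ m + 1 := hfin m (m+1) 1 one_pos (by omega) (by push_cast; try ring)
            refine key D₁ hD₁G _ hD₁ m (m+1) m' hne01 (Ne.symm hm'm) (Ne.symm hm'm1) ?_ ?_ ?_
            · show ω m * (ω (m-1))⁻¹ ≠ ω (m+1) * (ω ((m+1)-1))⁻¹
              rw [show m+1-1 = m by ring, hminus]
              intro hE
              exact jm (mul_right_cancel₀ (inv_ne_zero (hω0 m)) hE)
            · show ω (m+1) * (ω ((m+1)-1))⁻¹ ≠ ω ((m+1)+1) * (ω ((m+1)+1-1))⁻¹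
              rw [show m+1-1 = m by ring, show m+1+1 = m+2 by ring,
                show m+2-1 = m+1 by ring, ← hplus]
              intro hE
              exact jm (inv_injective (mul_left_cancel₀ (hω0 (m+1)) hE))
            · show ω m' * (ω (m'-1))⁻¹ ≠ ω (m'+1) * (ω (m'+1-1))⁻¹
              exact hdd
        · push_neg at hm'
          have hstep : ∀ t : ℕ, t < p - 1 → ω (m + 1 + t) = ω (m + 1 + t + 1) := by
            intro t ht
            apply hm'
            intro hE
            apply hcast (t+1) (by omega) (by omega)
            push_cast
            linear_combination hE
          have hround := hsteps (m+1) (p-1) hstep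
          have hpm1 : (((p - 1 : ℕ)) : Fin p) = -1 := by
            have h1 : ((p : ℕ) : Fin p) = 0 := by
              exact_mod_cast Fin.natCast_self p
            rw [Nat.cast_sub (show 1 ≤ p by omega), h1]
            ring
          rw [hpm1, show m + 1 + -1 = m by ring] at hround
          exact jm hround.symm
      · -- jumps at m - 1 and m
        apply pair (m-1)
        · rw [show m-1+1 = m by ring]
          exact hminus
        · rw [show m-1+1 = m by ring, show m-1+2 = m+1 by ring]
          exact jm
    · exact pair m jm hplus)
end

section
/- Let p ≥ 5 be prime, S the p×p cyclic permutation matrix, and A₀ = diag(ω, ω̄, 1, …, 1) with ω ≠ 1 a root of unity. Then rank(A₀S² − S²A₀) = 4. -/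
open Matrix

/-- For prime `p ≥ 5`, `S` the cyclic permutation and `A₀ = diag (ω, conj ω, 1, …, 1)` with
`ω ≠ 1` on the unit circle, `rank (A₀ S² - S² A₀) = 4`. -/
theorem stmt8 (p : ℕ) [NeZero p] (hp : p.Prime) (hp5 : 5 ≤ p)
    (S : Matrix (Fin p) (Fin p) ℂ)
    (hS : S = Matrix.of fun i j : Fin p => if i = j + 1 then (1 : ℂ) else 0)
    (ω : ℂ) (hω1 : ω ≠ 1) (hωa : ‖ω‖ = 1)
    (A₀ : Matrix (Fin p) (Fin p) ℂ)
    (hA : A₀ = Matrix.diagonal (fun i : Fin p =>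
      if (i : ℕ) = 0 then ω else if (i : ℕ) = 1 then (starRingEnd ℂ) ω else 1)) :
    (A₀ * S ^ 2 - S ^ 2 * A₀).rank = 4 := by
  obtain ⟨n, rfl⟩ : ∃ n, p = n + 5 := ⟨p - 5, by omega⟩
  set d : Fin (n + 5) → ℂ := fun i =>
      if (i : ℕ) = 0 then ω else if (i : ℕ) = 1 then (starRingEnd ℂ) ω else 1 with hd
  have hωc : (starRingEnd ℂ) ω ≠ 1 := by
    intro h
    apply hω1
    have := congrArg (starRingEnd ℂ) h
    simpa using this
  -- S^2
  have hS2 : S ^ 2 = Matrix.of fun i j : Fin (n + 5) => if i = j + 2 then (1 : ℂ) else 0 := by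
    rw [pow_two, hS]
    ext i j
    simp only [Matrix.mul_apply, Matrix.of_apply, mul_ite, mul_one, mul_zero]
    rw [Finset.sum_ite_eq' Finset.univ (j + 1) (fun k => if i = k + 1 then (1:ℂ) else 0)]
    simp [add_assoc, one_add_one_eq_two]
    rw [show (1 + 1 : Fin (n + 5)) = 2 from rfl]
  -- the commutator equals (diagonal w) * S^2
  set w : Fin (n + 5) → ℂ := fun i => d i - d (i - 2) with hw
  have hM : A₀ * S ^ 2 - S ^ 2 * A₀ = Matrix.diagonal w * S ^ 2 := by
    rw [hA, hS2]
    ext i j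
    simp only [Matrix.sub_apply, Matrix.mul_apply, Matrix.diagonal_apply, Matrix.of_apply,
      ite_mul, mul_ite, mul_one, mul_zero, zero_mul, one_mul]
    rw [Finset.sum_ite_eq' Finset.univ (j + 2) (fun x => if i = x then d i else 0),
      Finset.sum_ite_eq' Finset.univ j (fun x => if i = x + 2 then d x else 0),
      Finset.sum_ite_eq' Finset.univ (j + 2) (fun x => if i = x then w i else 0)]
    by_cases hij : i = j + 2
    · subst hij
      simp [hw, add_sub_cancel_right]
    · simp [hij]
  -- S^2 is invertible
  have key : ∀ a x : Fin (n + 5), (a = x + 2) = (x = a - 2) := by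
    intro a x
    apply propext
    constructor
    · rintro rfl; rw [add_sub_cancel_right]
    · rintro rfl; rw [sub_add_cancel]
  have hinv : S ^ 2 * Matrix.of (fun i j : Fin (n + 5) => if j = i + 2 then (1 : ℂ) else 0) = 1 := by
    rw [hS2]
    ext i j
    simp only [Matrix.mul_apply, Matrix.of_apply, key, ite_mul, one_mul, zero_mul]
    rw [Finset.sum_ite_eq' Finset.univ (i - 2) (fun x => if x = j - 2 then (1:ℂ) else 0)]
    simp only [Finset.mem_univ, if_true, Matrix.one_apply]
    by_cases h : i = j
    · simp [h]
    · have : i - 2 ≠ j - 2 := fun hc => h (by have := congrArg (· + (2 : Fin (n+5))) hc; simpa [sub_add_cancel] using this)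
      simp [h, this]
  -- rank
  rw [hM, Matrix.rank_mul_eq_left_of_isUnit_det _ _
    (Matrix.isUnit_det_of_right_inverse hinv), Matrix.rank_diagonal]
  -- characterize the support of w
  have hsub : ∀ i : Fin (n + 5), (i - 2).val = (i.val + (n + 3)) % (n + 5) := by
    intro i
    rw [Fin.sub_def]
    simp only [Fin.val_mk]
    rw [show ((2 : Fin (n + 5)) : ℕ) = 2 from rfl]
    congr 1
    omega
  have hchar : ∀ i : Fin (n + 5), w i ≠ 0 ↔ i.val < 4 := by
    intro i
    have hiv : i.val < n + 5 := i.isLt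
    have hs := hsub i
    rcases Nat.lt_or_ge i.val 4 with h4 | h4
    · interval_cases h : i.val
      · have hv : ((i - 2 : Fin (n + 5)) : ℕ) = n + 3 := by
          rw [hs, Nat.zero_add]; exact Nat.mod_eq_of_lt (by omega)
        have hwv : w i = ω - 1 := by
          simp only [hw, hd, h, hv]
          rw [if_pos trivial, if_neg (show ¬(n + 3 = 0) by omega),
            if_neg (show ¬(n + 3 = 1) by omega)]
        rw [hwv]
        simp only [ne_eq, sub_eq_zero]
        exact ⟨fun _ => by omega, fun _ => hω1⟩
      · have hv : ((i - 2 : Fin (n + 5)) : ℕ) = n + 4 := by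
          rw [hs, show 1 + (n + 3) = n + 4 by ring]; exact Nat.mod_eq_of_lt (by omega)
        have hwv : w i = (starRingEnd ℂ) ω - 1 := by
          simp only [hw, hd, h, hv]
          rw [if_pos trivial, if_neg (show ¬(n + 4 = 0) by omega),
            if_neg (show ¬(n + 4 = 1) by omega)]
          norm_num
        rw [hwv]
        simp only [ne_eq, sub_eq_zero]
        exact ⟨fun _ => by omega, fun _ => hωc⟩
      · have hv : ((i - 2 : Fin (n + 5)) : ℕ) = 0 := by
          rw [hs, show 2 + (n + 3) = n + 5 by ring, Nat.mod_self]
        have hwv : w i = 1 - ω := by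
          simp only [hw, hd, h, hv]
          rw [if_pos trivial]
          norm_num
        rw [hwv]
        simp only [ne_eq, sub_eq_zero]
        exact ⟨fun _ => by omega, fun _ hc => hω1 hc.symm⟩
      · have hv : ((i - 2 : Fin (n + 5)) : ℕ) = 1 := by
          rw [hs, show 3 + (n + 3) = 1 + (n + 5) by ring, Nat.add_mod_right]
          exact Nat.mod_eq_of_lt (by omega)
        have hwv : w i = 1 - (starRingEnd ℂ) ω := by
          simp only [hw, hd, h, hv]
          rw [if_pos trivial]
          norm_num
        rw [hwv]
        simp only [ne_eq, sub_eq_zero]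
        exact ⟨fun _ => by omega, fun _ hc => hωc hc.symm⟩
    · have hv : ((i - 2 : Fin (n + 5)) : ℕ) = i.val - 2 := by
        rw [hs, show i.val + (n + 3) = (i.val - 2) + (n + 5) by omega, Nat.add_mod_right]
        exact Nat.mod_eq_of_lt (by omega)
      have hwv : w i = 0 := by
        simp only [hw, hd, hv]
        rw [if_neg (by omega), if_neg (by omega), if_neg (by omega), if_neg (by omega)]
        ring
      rw [hwv]
      simp only [ne_eq, not_true_eq_false, false_iff, not_lt]
      omega
  -- count
  have e : {i : Fin (n + 5) // w i ≠ 0} ≃ Fin 4 :=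
    { toFun := fun x => ⟨x.1.val, (hchar x.1).mp x.2⟩
      invFun := fun j => ⟨⟨j.val, by omega⟩, (hchar _).mpr (by simpa using j.2)⟩
      left_inv := fun x => Subtype.ext (Fin.ext rfl)
      right_inv := fun j => rfl }
  rw [Fintype.card_congr e, Fintype.card_fin]
end

section
/- Let S be a multiplicative semigroup of n×n complex matrices and N a subspace of ℂⁿ such that, in the block decomposition with respect to ℂⁿ = N ⊕ N^⊥, every Z ∈ S has lower-left block Z₂₁ of rank at most 1. Then each Z ∈ S admits a Z-invariant subspace N_Z such that either N_Z ⊆ N with dim(N/N_Z) ≤ 1, or N ⊆ N_Z with dim(N_Z/N) ≤ 1 and N_Z = span(N ∪ Z N). -/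
open Matrix

/-- If every `Z` in a semigroup `S` of `n × n` matrices has lower-left block `Z₂₁`
(w.r.t. `ℂⁿ = N ⊕ N^⊥`) of rank at most one, then every `Z ∈ S` has an invariant subspace
`N_Z` with either `N_Z ⊆ N` and `dim (N / N_Z) ≤ 1`, or `N ⊆ N_Z`, `dim (N_Z / N) ≤ 1`
and `N_Z = span (N ∪ Z N)`. -/
theorem stmt11 (n : ℕ) (S : Subsemigroup (Matrix (Fin n) (Fin n) ℂ))
    (N : Submodule ℂ (EuclideanSpace ℂ (Fin n)))
    (hrk : ∀ Z ∈ S, Module.finrank ℂ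
      (LinearMap.range (((Submodule.orthogonalProjectionOnto Nᗮ).toLinearMap.comp
        (Matrix.toEuclideanLin Z)).comp N.subtype)) ≤ 1) :
    ∀ Z ∈ S, ∃ NZ : Submodule ℂ (EuclideanSpace ℂ (Fin n)),
      NZ.map (Matrix.toEuclideanLin Z) ≤ NZ ∧
      ((NZ ≤ N ∧ Module.finrank ℂ N ≤ Module.finrank ℂ NZ + 1) ∨
       (N ≤ NZ ∧ Module.finrank ℂ NZ ≤ Module.finrank ℂ N + 1 ∧
        NZ = N ⊔ N.map (Matrix.toEuclideanLin Z))) := by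
  intro Z hZ
  classical
  set T : EuclideanSpace ℂ (Fin n) →ₗ[ℂ] EuclideanSpace ℂ (Fin n) :=
    Matrix.toEuclideanLin Z with hT
  set π : EuclideanSpace ℂ (Fin n) →ₗ[ℂ] EuclideanSpace ℂ (Fin n) :=
    Nᗮ.subtype ∘ₗ (Submodule.orthogonalProjectionOnto Nᗮ).toLinearMap with hπ
  -- basic facts about π
  have hsub : ∀ x, x - π x ∈ N := by
    intro x
    have h := Submodule.sub_starProjection_mem_orthogonal (K := Nᗮ) x
    rwa [Submodule.orthogonal_orthogonal] at h
  have hmem : ∀ x, π x = 0 → x ∈ N := by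
    intro x hx
    have := hsub x
    rwa [hx, sub_zero] at this
  -- the compression image inside E, for any Y ∈ S
  have hWrk : ∀ Y ∈ S, Module.finrank ℂ
      (N.map (π ∘ₗ Matrix.toEuclideanLin Y)) ≤ 1 := by
    intro Y hY
    have heq : N.map (π ∘ₗ Matrix.toEuclideanLin Y)
        = (LinearMap.range (((Submodule.orthogonalProjectionOnto Nᗮ).toLinearMap.comp
            (Matrix.toEuclideanLin Y)).comp N.subtype)).map Nᗮ.subtype := by
      rw [← LinearMap.range_comp]
      ext x
      constructor
      · rintro ⟨y, hy, rfl⟩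
        exact ⟨⟨y, hy⟩, rfl⟩
      · rintro ⟨⟨y, hy⟩, rfl⟩
        exact ⟨y, hy, rfl⟩
    rw [heq, Submodule.finrank_map_subtype_eq]
    exact hrk Y hY
  set W := N.map (π ∘ₗ T) with hWdef
  have hWle : Module.finrank ℂ W ≤ 1 := hWrk Z hZ
  -- N ⊔ N.map T = N ⊔ W
  have hWA : W ≤ N ⊔ N.map T := by
    rintro _ ⟨x, hx, rfl⟩
    have h1 : T x - π (T x) ∈ N := hsub (T x)
    have h2 : π (T x) = T x - (T x - π (T x)) := by abel
    rw [LinearMap.comp_apply, h2]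
    exact Submodule.sub_mem _ (Submodule.mem_sup_right ⟨x, hx, rfl⟩)
      (Submodule.mem_sup_left h1)
  have hA : N ⊔ N.map T = N ⊔ W := by
    apply le_antisymm
    · refine sup_le le_sup_left ?_
      rintro _ ⟨x, hx, rfl⟩
      have h2 : T x = (T x - π (T x)) + π (T x) := by abel
      rw [h2]
      exact Submodule.add_mem_sup (hsub (T x)) ⟨x, hx, rfl⟩
    · exact sup_le le_sup_left hWA
  by_cases hW0 : W = ⊥
  · -- Z₂₁ = 0 : N itself is invariant
    have hmapN : N.map T ≤ N := by
      rintro _ ⟨x, hx, rfl⟩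
      refine hmem _ ?_
      have : π (T x) ∈ W := ⟨x, hx, rfl⟩
      simpa [hW0] using this
    exact ⟨N, hmapN, Or.inr ⟨le_rfl, by omega, (sup_eq_left.mpr hmapN).symm⟩⟩
  · obtain ⟨v, hvW, hv0⟩ := Submodule.exists_mem_ne_zero_of_ne_bot hW0
    have hWspan : W = Submodule.span ℂ {v} := by
      refine (Submodule.eq_of_le_of_finrank_le ?_ ?_).symm
      · rwa [Submodule.span_singleton_le_iff_mem]
      · rwa [finrank_span_singleton hv0]
    by_cases hTv : T v ∈ N ⊔ N.map T
    · -- second branch : NZ = N ⊔ N.map T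
      refine ⟨N ⊔ N.map T, ?_, Or.inr ⟨le_sup_left, ?_, rfl⟩⟩
      · rw [hA, Submodule.map_sup]
        refine sup_le ?_ ?_
        · rintro _ ⟨x, hx, rfl⟩
          rw [← hA]
          exact Submodule.mem_sup_right ⟨x, hx, rfl⟩
        · rw [hWspan, Submodule.map_span, Set.image_singleton,
            Submodule.span_singleton_le_iff_mem, ← hWspan, ← hA]
          exact hTv
      · rw [hA]
        have h5 := Submodule.finrank_sup_add_finrank_inf_eq N W
        calc Module.finrank ℂ ↥(N ⊔ W)
            ≤ Module.finrank ℂ ↥(N ⊔ W) + Module.finrank ℂ ↥(N ⊓ W) :=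
              Nat.le_add_right _ _
          _ = Module.finrank ℂ N + Module.finrank ℂ W := h5
          _ ≤ Module.finrank ℂ N + 1 := Nat.add_le_add_left hWle _
    · -- first branch : NZ = N ⊓ ker (π ∘ T)
      refine ⟨N ⊓ LinearMap.ker (π ∘ₗ T), ?_, Or.inl ⟨inf_le_left, ?_⟩⟩
      · rintro _ ⟨x, ⟨hxN, hxk⟩, rfl⟩
        have hxk' : π (T x) = 0 := hxk
        have hTxN : T x ∈ N := hmem _ hxk'
        refine ⟨hTxN, ?_⟩
        -- show π (T (T x)) = 0
        by_contra hw
        have hw' : π (T (T x)) ≠ 0 := fun h => hw h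
        set w := π (T (T x)) with hwdef
        have hwW : w ∈ W := ⟨T x, hTxN, rfl⟩
        -- W₂ from Z * Z
        have hTT : Matrix.toEuclideanLin (Z * Z) = T ∘ₗ T := by
          rw [hT]
          exact Matrix.toLin_mul (PiLp.basisFun 2 ℂ (Fin n)) (PiLp.basisFun 2 ℂ (Fin n))
            (PiLp.basisFun 2 ℂ (Fin n)) Z Z
        have hW2le : Module.finrank ℂ (N.map (π ∘ₗ (T ∘ₗ T))) ≤ 1 := by
          have := hWrk (Z * Z) (mul_mem hZ hZ)
          rwa [hTT] at this
        have hwW2 : w ∈ N.map (π ∘ₗ (T ∘ₗ T)) := ⟨x, hxN, rfl⟩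
        have hW2span : N.map (π ∘ₗ (T ∘ₗ T)) = Submodule.span ℂ {w} := by
          refine (Submodule.eq_of_le_of_finrank_le ?_ ?_).symm
          · rwa [Submodule.span_singleton_le_iff_mem]
          · rwa [finrank_span_singleton hw']
        -- w ∈ span v, so span w ≤ span v
        have hwv : w ∈ Submodule.span ℂ {v} := hWspan ▸ hwW
        have hspanwv : Submodule.span ℂ {w} ≤ Submodule.span ℂ {v} := by
          rwa [Submodule.span_singleton_le_iff_mem]
        -- get x₀ with v = π (T x₀)
        obtain ⟨x₀, hx₀N, hx₀⟩ := hvW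
        have hx₀' : π (T x₀) = v := hx₀
        have hn₀ : T x₀ - v ∈ N := hx₀' ▸ hsub (T x₀)
        -- π (T v) ∈ span v
        have h1 : π (T (T x₀)) ∈ Submodule.span ℂ {v} :=
          hspanwv (hW2span ▸ (⟨x₀, hx₀N, rfl⟩ : π (T (T x₀)) ∈ N.map (π ∘ₗ (T ∘ₗ T))))
        have h2 : π (T (T x₀ - v)) ∈ Submodule.span ℂ {v} :=
          hWspan ▸ (⟨T x₀ - v, hn₀, rfl⟩ : π (T (T x₀ - v)) ∈ W)
        have h3 : π (T v) ∈ Submodule.span ℂ {v} := by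
          have heq : π (T v) = π (T (T x₀)) - π (T (T x₀ - v)) := by
            simp only [map_sub]
            abel
          rw [heq]
          exact Submodule.sub_mem _ h1 h2
        -- hence T v ∈ N ⊔ N.map T, contradiction
        apply hTv
        rw [hA, hWspan]
        have h4 : T v = (T v - π (T v)) + π (T v) := by abel
        rw [h4]
        exact Submodule.add_mem_sup (hsub (T v)) h3
      · -- finrank bound via rank-nullity
        have hrange : LinearMap.range ((π ∘ₗ T) ∘ₗ N.subtype) = W := by
          rw [LinearMap.range_comp, Submodule.range_subtype]
        have hker : Module.finrank ℂ (LinearMap.ker ((π ∘ₗ T) ∘ₗ N.subtype))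
            = Module.finrank ℂ ↥(N ⊓ LinearMap.ker (π ∘ₗ T)) := by
          rw [LinearMap.ker_comp, ← Submodule.finrank_map_subtype_eq N,
            Submodule.map_comap_subtype, inf_comm]
        have hrn := LinearMap.finrank_range_add_finrank_ker ((π ∘ₗ T) ∘ₗ N.subtype)
        rw [hrange, hker] at hrn
        calc Module.finrank ℂ ↥N
            = Module.finrank ℂ ↥W + Module.finrank ℂ ↥(N ⊓ LinearMap.ker (π ∘ₗ T)) :=
              hrn.symm
          _ ≤ 1 + Module.finrank ℂ ↥(N ⊓ LinearMap.ker (π ∘ₗ T)) :=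
              Nat.add_le_add_right hWle _
          _ = Module.finrank ℂ ↥(N ⊓ LinearMap.ker (π ∘ₗ T)) + 1 := Nat.add_comm _ _
end

section
/- Let G be a group of unitary n×n matrices with rank(AB − BA) ≤ 2 for all A, B ∈ G. Then there exists a subspace M of ℂⁿ with 1 ≤ dim M ≤ 3 such that M is invariant under every element of G (hence so is M^⊥), and the restriction group G|_{M^⊥} is abelian. -/
open Matrix

set_option linter.unusedSectionVars false

open Module Submodule

namespace Stmt12

variable {E : Type*} [NormedAddCommGroup E] [InnerProductSpace ℂ E] [FiniteDimensional ℂ E]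

local notation "⟪" x ", " y "⟫" => @inner ℂ _ _ x y

/-- coercion of a linear isometry equivalence to a linear map -/
abbrev lm (f : E ≃ₗᵢ[ℂ] E) : E →ₗ[ℂ] E := (f.toLinearEquiv : E →ₗ[ℂ] E)

lemma lm_apply (f : E ≃ₗᵢ[ℂ] E) (x : E) : lm f x = f x := rfl

lemma lm_mul (f g : E ≃ₗᵢ[ℂ] E) : lm (f * g) = lm f ∘ₗ lm g := by
  ext x; rfl

lemma lm_one : lm (1 : E ≃ₗᵢ[ℂ] E) = LinearMap.id := rfl

lemma lm_inv_apply (f : E ≃ₗᵢ[ℂ] E) (x : E) : lm f (lm f⁻¹ x) = x :=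
  f.apply_symm_apply x

lemma lm_inv_apply' (f : E ≃ₗᵢ[ℂ] E) (x : E) : lm f⁻¹ (lm f x) = x :=
  f.symm_apply_apply x

lemma mem_ker_sub_one {f : E ≃ₗᵢ[ℂ] E} {y : E} :
    y ∈ LinearMap.ker (lm f - 1) ↔ f y = y := by
  rw [LinearMap.mem_ker, LinearMap.sub_apply, sub_eq_zero]
  exact ⟨fun h => h, fun h => h⟩

lemma ker_sub_one (f : E ≃ₗᵢ[ℂ] E) :
    LinearMap.ker (lm f - 1) = (LinearMap.range (lm f - 1))ᗮ := by
  apply Submodule.eq_of_le_of_finrank_eq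
  · intro y hy
    rw [Submodule.mem_orthogonal]
    rintro u ⟨x, rfl⟩
    have hfy : f y = y := mem_ker_sub_one.mp hy
    have hx : (lm f - 1) x = f x - x := rfl
    rw [hx, inner_sub_left]
    have : ⟪f x, y⟫ = ⟪x, y⟫ := by
      conv_lhs => rw [← hfy]
      exact f.inner_map_map x y
    rw [this]; ring
  · have h1 := LinearMap.finrank_range_add_finrank_ker (lm f - 1)
    have h2 := Submodule.finrank_add_finrank_orthogonal (LinearMap.range (lm f - 1))
    omega

/-- range of (f-1) is invariant under f, for f isometry (since it's ker_orth). -/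
lemma map_range_sub_one_le (f : E ≃ₗᵢ[ℂ] E) :
    (LinearMap.range (lm f - 1)).map (lm f) ≤ LinearMap.range (lm f - 1) := by
  rintro _ ⟨u, hu, rfl⟩
  obtain ⟨x, rfl⟩ := hu
  have h : lm f ((lm f - 1) x) = (lm f - 1) (f x) := by
    simp only [LinearMap.sub_apply, lm_apply, Module.End.one_apply, _root_.map_sub]
  rw [h]
  exact ⟨f x, rfl⟩

lemma range_sub_one_orthogonal (f : E ≃ₗᵢ[ℂ] E) :
    (LinearMap.range (lm f - 1)) = (LinearMap.ker (lm f - 1))ᗮ := by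
  rw [ker_sub_one, Submodule.orthogonal_orthogonal]

/-- A unitary map with determinant 1 cannot have rank (f - 1) = 1. -/
lemma det_one_rank_ne_one (f : E ≃ₗᵢ[ℂ] E) (hdet : LinearMap.det (lm f) = 1)
    (hrk : finrank ℂ (LinearMap.range (lm f - 1)) = 1) : False := by
  have hKL : (LinearMap.ker (lm f - 1))ᗮ = LinearMap.range (lm f - 1) :=
    (range_sub_one_orthogonal f).symm
  have hcompl : IsCompl (LinearMap.ker (lm f - 1)) (LinearMap.range (lm f - 1)) :=
    hKL ▸ Submodule.isCompl_orthogonal_of_hasOrthogonalProjection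
  -- pick a spanning vector of the range
  have : Nontrivial (LinearMap.range (lm f - 1)) := by
    rw [← Module.finrank_pos_iff (R := ℂ)]; omega
  obtain ⟨e₀, he₀ne⟩ := exists_ne (0 : (LinearMap.range (lm f - 1)))
  have he₀ne' : (e₀ : E) ≠ 0 := fun h => he₀ne (Subtype.ext h)
  have hspan : Submodule.span ℂ {(e₀ : E)} = LinearMap.range (lm f - 1) := by
    apply Submodule.eq_of_le_of_finrank_eq
    · rw [Submodule.span_le, Set.singleton_subset_iff]; exact e₀.2
    · rw [finrank_span_singleton he₀ne', hrk]
  -- f maps the range into itself... obtain the scalar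
  have hfe₀ : f (e₀ : E) ∈ LinearMap.range (lm f - 1) :=
    map_range_sub_one_le f ⟨(e₀ : E), e₀.2, rfl⟩
  have hfe₀' : f (e₀ : E) ∈ Submodule.span ℂ {(e₀ : E)} := by rw [hspan]; exact hfe₀
  rw [Submodule.mem_span_singleton] at hfe₀'
  obtain ⟨μ, hμ⟩ := hfe₀' 
  have hscal : ∀ x ∈ LinearMap.range (lm f - 1), f x = μ • x := by
    intro x hx
    have hx' : x ∈ Submodule.span ℂ {(e₀ : E)} := by rw [hspan]; exact hx
    rw [Submodule.mem_span_singleton] at hx'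
    obtain ⟨c, rfl⟩ := hx' 
    rw [_root_.map_smul, ← hμ, smul_comm]
  have hμne : μ ≠ 1 := by
    intro h
    subst h
    have : ∀ x, f x = x := by
      intro x
      have hx : x ∈ (LinearMap.ker (lm f - 1)) ⊔ (LinearMap.range (lm f - 1)) := by
        rw [hcompl.sup_eq_top]; trivial
      rw [Submodule.mem_sup] at hx
      obtain ⟨k, hk, l, hl, rfl⟩ := hx
      rw [_root_.map_add, mem_ker_sub_one.mp hk, hscal l hl, one_smul]
    have : (e₀ : E) ∈ LinearMap.range (lm f - 1) → False := by
      intro _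
      obtain ⟨x, hx⟩ := e₀.2
      apply he₀ne'
      rw [← hx]
      show f x - x = 0
      rw [this x, sub_self]
    exact this e₀.2
  -- compute the determinant via an adapted basis
  have hdet2 : LinearMap.det (lm f) = μ := by
    classical
    let bK := finBasis ℂ (LinearMap.ker (lm f - 1))
    let bL := finBasisOfFinrankEq ℂ (LinearMap.range (lm f - 1)) hrk
    let b := (bK.prod bL).map (Submodule.prodEquivOfIsCompl _ _ hcompl)
    rw [← LinearMap.det_toMatrix b]
    have hb : ∀ j, lm f (b j) = (Sum.elim (fun _ => (1:ℂ)) (fun _ => μ) j) • b j := by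
      intro j
      cases j with
      | inl i =>
        have hbj : b (Sum.inl i) = (bK i : E) := by
          simp [b, Basis.map_apply, Submodule.coe_prodEquivOfIsCompl]
        rw [hbj, lm_apply, mem_ker_sub_one.mp (bK i).2]
        simp
      | inr i =>
        have hbj : b (Sum.inr i) = (bL i : E) := by
          simp [b, Basis.map_apply, Submodule.coe_prodEquivOfIsCompl]
        rw [hbj, lm_apply, hscal _ (bL i).2]
        simp
    have hmat : LinearMap.toMatrix b b (lm f)
        = Matrix.diagonal (Sum.elim (fun _ => (1:ℂ)) (fun _ => μ)) := by
      ext i j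
      rw [LinearMap.toMatrix_apply, hb j, _root_.map_smul, Basis.repr_self]
      rw [Matrix.diagonal_apply]
      simp only [Finsupp.smul_single, smul_eq_mul, mul_one, Finsupp.single_apply]
      by_cases h : j = i
      · subst h; simp
      · simp [h, Ne.symm h]
    rw [hmat, Matrix.det_diagonal, Fintype.prod_sum_type]
    simp
  rw [hdet] at hdet2
  exact hμne hdet2.symm



/-- invariance of the orthogonal complement under a group of isometries -/
lemma perp_invariant (𝒢 : Subgroup (E ≃ₗᵢ[ℂ] E)) (M : Submodule ℂ E)
    (hM : ∀ f ∈ 𝒢, ∀ x ∈ M, f x ∈ M) :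
    ∀ f ∈ 𝒢, ∀ z ∈ Mᗮ, f z ∈ Mᗮ := by
  intro f hf z hz
  rw [Submodule.mem_orthogonal]
  intro u hu
  have h1 : u = f (f⁻¹ u) := (f.apply_symm_apply u).symm
  have h2 : f⁻¹ u ∈ M := hM f⁻¹ (inv_mem hf) u hu
  calc ⟪u, f z⟫ = ⟪f (f⁻¹ u), f z⟫ := by rw [← h1]
    _ = ⟪f⁻¹ u, z⟫ := f.inner_map_map _ _
    _ = 0 := hz _ h2

lemma inv_apply_apply (f : E ≃ₗᵢ[ℂ] E) (z : E) : f⁻¹ (f z) = z := f.symm_apply_apply z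
lemma apply_inv_apply (f : E ≃ₗᵢ[ℂ] E) (z : E) : f (f⁻¹ z) = z := f.apply_symm_apply z

def TrivOn (f : E ≃ₗᵢ[ℂ] E) (W : Submodule ℂ E) : Prop := ∀ x ∈ W, f x = x

def CommOn (x y : E ≃ₗᵢ[ℂ] E) (W : Submodule ℂ E) : Prop :=
  ∀ z ∈ W, x (y z) = y (x z)

lemma commOn_symm {x y : E ≃ₗᵢ[ℂ] E} {W : Submodule ℂ E} (h : CommOn x y W) :
    CommOn y x W := fun z hz => (h z hz).symm

lemma commOn_mul {𝒢 : Subgroup (E ≃ₗᵢ[ℂ] E)} {W : Submodule ℂ E}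
    (hW : ∀ f ∈ 𝒢, ∀ x ∈ W, f x ∈ W)
    {x y y' : E ≃ₗᵢ[ℂ] E} (hy' : y' ∈ 𝒢)
    (h : CommOn x y W) (h' : CommOn x y' W) : CommOn x (y * y') W := by
  intro z hz
  have hz' : y' z ∈ W := hW y' hy' z hz
  show x (y (y' z)) = y (y' (x z))
  rw [h _ hz', h' _ hz]

lemma commOn_inv {𝒢 : Subgroup (E ≃ₗᵢ[ℂ] E)} {W : Submodule ℂ E}
    (hW : ∀ f ∈ 𝒢, ∀ x ∈ W, f x ∈ W)
    {x y : E ≃ₗᵢ[ℂ] E} (hy : y ∈ 𝒢)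
    (h : CommOn x y W) : CommOn x y⁻¹ W := by
  intro z hz
  have hz' : y⁻¹ z ∈ W := hW y⁻¹ (inv_mem hy) z hz
  have := h _ hz'
  have h2 : x (y (y⁻¹ z)) = x z := by rw [apply_inv_apply]
  rw [h2] at this
  have h3 : y⁻¹ (x z) = y⁻¹ (y (x (y⁻¹ z))) := by rw [← this]
  rw [h3, inv_apply_apply]

lemma trivOn_commutator_iff {𝒢 : Subgroup (E ≃ₗᵢ[ℂ] E)} {W : Submodule ℂ E}
    (hW : ∀ f ∈ 𝒢, ∀ x ∈ W, f x ∈ W)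
    {x y : E ≃ₗᵢ[ℂ] E} (hx : x ∈ 𝒢) (hy : y ∈ 𝒢) :
    TrivOn (x * y * x⁻¹ * y⁻¹) W ↔ CommOn x y W := by
  constructor
  · intro h z hz
    have hz1 : x z ∈ W := hW x hx z hz
    have hz2 : y (x z) ∈ W := hW y hy _ hz1
    have := h _ hz2
    show x (y z) = y (x z)
    have hstep : x (y (x⁻¹ (y⁻¹ (y (x z))))) = x (y z) := by
      rw [inv_apply_apply, inv_apply_apply]
    calc x (y z) = (x * y * x⁻¹ * y⁻¹) (y (x z)) := hstep.symm
      _ = y (x z) := this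
  · intro h z hz
    have hz1 : y⁻¹ z ∈ W := hW y⁻¹ (inv_mem hy) z hz
    have hz2 : x⁻¹ (y⁻¹ z) ∈ W := hW x⁻¹ (inv_mem hx) _ hz1
    show x (y (x⁻¹ (y⁻¹ z))) = z
    rw [h _ hz2]
    rw [apply_inv_apply, apply_inv_apply]

lemma range_lm_eq_top (f : E ≃ₗᵢ[ℂ] E) : LinearMap.range (lm f) = ⊤ :=
  LinearMap.range_eq_top.mpr f.surjective

/-- the commutator minus one factors through the operator commutator -/
lemma commutator_sub_one_eq (x y : E ≃ₗᵢ[ℂ] E) :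
    lm (x * y * x⁻¹ * y⁻¹) - 1 = (lm x ∘ₗ lm y - lm y ∘ₗ lm x) ∘ₗ (lm x⁻¹ ∘ₗ lm y⁻¹) := by
  ext z
  show (x * y * x⁻¹ * y⁻¹) z - z = x (y (x⁻¹ (y⁻¹ z))) - y (x (x⁻¹ (y⁻¹ z)))
  rw [apply_inv_apply, apply_inv_apply]
  rfl

lemma rank_commutator_sub_one_le {𝒢 : Subgroup (E ≃ₗᵢ[ℂ] E)}
    (hr2 : ∀ f ∈ 𝒢, ∀ g ∈ 𝒢,
      finrank ℂ (LinearMap.range (lm f ∘ₗ lm g - lm g ∘ₗ lm f)) ≤ 2)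
    {x y : E ≃ₗᵢ[ℂ] E} (hx : x ∈ 𝒢) (hy : y ∈ 𝒢) :
    finrank ℂ (LinearMap.range (lm (x * y * x⁻¹ * y⁻¹) - 1)) ≤ 2 := by
  rw [commutator_sub_one_eq]
  rw [LinearMap.range_comp_of_range_eq_top]
  · exact hr2 x hx y hy
  · rw [LinearMap.range_comp_of_range_eq_top _ (range_lm_eq_top _)]
    exact range_lm_eq_top _

lemma map_subtype_range_restrict (X : E →ₗ[ℂ] E) (W : Submodule ℂ E)
    (h : ∀ x ∈ W, X x ∈ W) :
    Submodule.map W.subtype (LinearMap.range (X.restrict h)) = Submodule.map X W := by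
  ext z
  constructor
  · rintro ⟨w, ⟨v, rfl⟩, rfl⟩
    exact ⟨(v : E), v.2, rfl⟩
  · rintro ⟨v, hv, rfl⟩
    exact ⟨X.restrict h ⟨v, hv⟩, ⟨⟨v, hv⟩, rfl⟩, rfl⟩

lemma rank_split (X : E →ₗ[ℂ] E) (V : Submodule ℂ E)
    (h1 : ∀ x ∈ V, X x ∈ V) (h2 : ∀ x ∈ Vᗮ, X x ∈ Vᗮ) :
    finrank ℂ (LinearMap.range X)
      = finrank ℂ (LinearMap.range (X.restrict h1))
        + finrank ℂ (LinearMap.range (X.restrict h2)) := by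
  have htop : V ⊔ Vᗮ = ⊤ :=
    (Submodule.isCompl_orthogonal_of_hasOrthogonalProjection (K := V)).sup_eq_top
  have hrange : LinearMap.range X = Submodule.map X V ⊔ Submodule.map X Vᗮ := by
    rw [LinearMap.range_eq_map, ← htop, Submodule.map_sup]
  have hinf : Submodule.map X V ⊓ Submodule.map X Vᗮ = ⊥ := by
    have hle : Submodule.map X V ⊓ Submodule.map X Vᗮ ≤ V ⊓ Vᗮ := by
      apply inf_le_inf
      · rintro _ ⟨v, hv, rfl⟩; exact h1 v hv
      · rintro _ ⟨v, hv, rfl⟩; exact h2 v hv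
    have hbot : V ⊓ Vᗮ = ⊥ :=
      (Submodule.isCompl_orthogonal_of_hasOrthogonalProjection (K := V)).disjoint.eq_bot
    rw [hbot] at hle
    exact le_bot_iff.mp hle
  have hadd := Submodule.finrank_sup_add_finrank_inf_eq (Submodule.map X V) (Submodule.map X Vᗮ)
  rw [hinf, finrank_bot, add_zero] at hadd
  rw [hrange, hadd]
  rw [← map_subtype_range_restrict X V h1, ← map_subtype_range_restrict X Vᗮ h2]
  rw [Submodule.finrank_map_subtype_eq, Submodule.finrank_map_subtype_eq]

lemma rank_res_ne_one {𝒢 : Subgroup (E ≃ₗᵢ[ℂ] E)} (W : Submodule ℂ E)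
    (hW : ∀ f ∈ 𝒢, ∀ x ∈ W, f x ∈ W)
    {x y : E ≃ₗᵢ[ℂ] E} (hx : x ∈ 𝒢) (hy : y ∈ 𝒢)
    (h : ∀ z ∈ W, (lm (x * y * x⁻¹ * y⁻¹) - 1) z ∈ W) :
    finrank ℂ (LinearMap.range ((lm (x * y * x⁻¹ * y⁻¹) - 1).restrict h)) ≠ 1 := by
  intro hrk
  have hc : x * y * x⁻¹ * y⁻¹ ∈ 𝒢 := mul_mem (mul_mem (mul_mem hx hy) (inv_mem hx)) (inv_mem hy)
  -- build the restricted isometry equivalence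
  have hres : ∀ (g : E ≃ₗᵢ[ℂ] E), g ∈ 𝒢 → ∀ v ∈ W, lm g v ∈ W := fun g hg => hW g hg
  let r : ∀ (g : E ≃ₗᵢ[ℂ] E), g ∈ 𝒢 → (↥W →ₗ[ℂ] ↥W) := fun g hg => (lm g).restrict (hres g hg)
  have hrmul : ∀ (g g' : E ≃ₗᵢ[ℂ] E) (hg : g ∈ 𝒢) (hg' : g' ∈ 𝒢),
      r (g * g') (mul_mem hg hg') = r g hg ∘ₗ r g' hg' := by
    intro g g' hg hg'
    ext v
    rfl
  have hrdet : ∀ (g : E ≃ₗᵢ[ℂ] E) (hg : g ∈ 𝒢),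
      LinearMap.det (r g hg) * LinearMap.det (r g⁻¹ (inv_mem hg)) = 1 := by
    intro g hg
    rw [← LinearMap.det_comp, ← hrmul g g⁻¹ hg (inv_mem hg)]
    have : r (g * g⁻¹) (mul_mem hg (inv_mem hg)) = LinearMap.id := by
      ext v
      show g (g⁻¹ (v : E)) = (v : E)
      exact apply_inv_apply g _
    rw [this, LinearMap.det_id]
  -- the determinant of the restricted commutator is 1
  have hdetc : LinearMap.det (r (x * y * x⁻¹ * y⁻¹) hc) = 1 := by
    have e1 : r (x * y * x⁻¹ * y⁻¹) hc
        = r x hx ∘ₗ r y hy ∘ₗ r x⁻¹ (inv_mem hx) ∘ₗ r y⁻¹ (inv_mem hy) := by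
      ext v
      rfl
    rw [e1, LinearMap.det_comp, LinearMap.det_comp, LinearMap.det_comp]
    have h1 := hrdet x hx
    have h2 := hrdet y hy
    calc LinearMap.det (r x hx) * (LinearMap.det (r y hy)
          * (LinearMap.det (r x⁻¹ (inv_mem hx)) * LinearMap.det (r y⁻¹ (inv_mem hy))))
        = (LinearMap.det (r x hx) * LinearMap.det (r x⁻¹ (inv_mem hx)))
          * (LinearMap.det (r y hy) * LinearMap.det (r y⁻¹ (inv_mem hy))) := by ring
      _ = 1 := by rw [h1, h2, one_mul]
  -- build the isometry equiv on ↥W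
  let ei : ↥W ≃ₗ[ℂ] ↥W := LinearEquiv.ofLinear (r (x * y * x⁻¹ * y⁻¹) hc)
    (r (x * y * x⁻¹ * y⁻¹)⁻¹ (inv_mem hc))
    (by ext v; show (x * y * x⁻¹ * y⁻¹) ((x * y * x⁻¹ * y⁻¹)⁻¹ (v : E)) = (v : E);
        exact apply_inv_apply _ _)
    (by ext v; show (x * y * x⁻¹ * y⁻¹)⁻¹ ((x * y * x⁻¹ * y⁻¹) (v : E)) = (v : E);
        exact inv_apply_apply _ _)
  let c' : ↥W ≃ₗᵢ[ℂ] ↥W := ei.isometryOfInner (by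
    intro v w
    show ⟪((x * y * x⁻¹ * y⁻¹) (v : E) : E), ((x * y * x⁻¹ * y⁻¹) (w : E) : E)⟫ = ⟪(v : E), (w : E)⟫
    exact (x * y * x⁻¹ * y⁻¹).inner_map_map _ _)
  apply det_one_rank_ne_one c'
  · show LinearMap.det (lm c') = 1
    have : lm c' = r (x * y * x⁻¹ * y⁻¹) hc := rfl
    rw [this, hdetc]
  · have : lm c' - 1 = (lm (x * y * x⁻¹ * y⁻¹) - 1).restrict h := by
      ext v
      show (x * y * x⁻¹ * y⁻¹) (v : E) - (v : E) = _
      rfl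
    rw [this, hrk]

lemma triv_or_triv {𝒢 : Subgroup (E ≃ₗᵢ[ℂ] E)}
    (hr2 : ∀ f ∈ 𝒢, ∀ g ∈ 𝒢,
      finrank ℂ (LinearMap.range (lm f ∘ₗ lm g - lm g ∘ₗ lm f)) ≤ 2)
    (V : Submodule ℂ E) (hV : ∀ f ∈ 𝒢, ∀ x ∈ V, f x ∈ V)
    {x y : E ≃ₗᵢ[ℂ] E} (hx : x ∈ 𝒢) (hy : y ∈ 𝒢) :
    TrivOn (x * y * x⁻¹ * y⁻¹) V ∨ TrivOn (x * y * x⁻¹ * y⁻¹) Vᗮ := by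
  have hVperp := perp_invariant 𝒢 V hV
  have hc : x * y * x⁻¹ * y⁻¹ ∈ 𝒢 := mul_mem (mul_mem (mul_mem hx hy) (inv_mem hx)) (inv_mem hy)
  have h1 : ∀ z ∈ V, (lm (x * y * x⁻¹ * y⁻¹) - 1) z ∈ V := by
    intro z hz
    exact Submodule.sub_mem _ (hV _ hc z hz) hz
  have h2 : ∀ z ∈ Vᗮ, (lm (x * y * x⁻¹ * y⁻¹) - 1) z ∈ Vᗮ := by
    intro z hz
    exact Submodule.sub_mem _ (hVperp _ hc z hz) hz
  have hsplit := rank_split (lm (x * y * x⁻¹ * y⁻¹) - 1) V h1 h2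
  have hle := rank_commutator_sub_one_le hr2 hx hy
  have hne1 := rank_res_ne_one V hV hx hy h1
  have hne2 := rank_res_ne_one Vᗮ hVperp hx hy h2
  have hzero : finrank ℂ (LinearMap.range ((lm (x * y * x⁻¹ * y⁻¹) - 1).restrict h1)) = 0
      ∨ finrank ℂ (LinearMap.range ((lm (x * y * x⁻¹ * y⁻¹) - 1).restrict h2)) = 0 := by
    omega
  have key : ∀ (W : Submodule ℂ E) (h : ∀ z ∈ W, (lm (x * y * x⁻¹ * y⁻¹) - 1) z ∈ W),
      finrank ℂ (LinearMap.range ((lm (x * y * x⁻¹ * y⁻¹) - 1).restrict h)) = 0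
      → TrivOn (x * y * x⁻¹ * y⁻¹) W := by
    intro W h hW0 z hz
    have hbot : LinearMap.range ((lm (x * y * x⁻¹ * y⁻¹) - 1).restrict h) = ⊥ :=
      Submodule.finrank_eq_zero.mp hW0
    have : (lm (x * y * x⁻¹ * y⁻¹) - 1).restrict h ⟨z, hz⟩ = 0 := by
      rw [← Submodule.mem_bot (R := ℂ), ← hbot]
      exact ⟨⟨z, hz⟩, rfl⟩
    have h0 : ((lm (x * y * x⁻¹ * y⁻¹) - 1) z : E) = 0 := congrArg Subtype.val this
    have : (x * y * x⁻¹ * y⁻¹) z - z = 0 := h0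
    rw [sub_eq_zero] at this
    exact this
  rcases hzero with h | h
  · exact Or.inl (key V h1 h)
  · exact Or.inr (key Vᗮ h2 h)

lemma level1 {𝒢 : Subgroup (E ≃ₗᵢ[ℂ] E)}
    (hr2 : ∀ f ∈ 𝒢, ∀ g ∈ 𝒢,
      finrank ℂ (LinearMap.range (lm f ∘ₗ lm g - lm g ∘ₗ lm f)) ≤ 2)
    (V : Submodule ℂ E) (hV : ∀ f ∈ 𝒢, ∀ x ∈ V, f x ∈ V)
    {x : E ≃ₗᵢ[ℂ] E} (hx : x ∈ 𝒢) :
    (∀ y ∈ 𝒢, CommOn x y V) ∨ (∀ y ∈ 𝒢, CommOn x y Vᗮ) := by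
  have hVperp := perp_invariant 𝒢 V hV
  have dich : ∀ y ∈ 𝒢, CommOn x y V ∨ CommOn x y Vᗮ := fun y hy =>
    (triv_or_triv hr2 V hV hx hy).imp
      (trivOn_commutator_iff hV hx hy).mp
      (trivOn_commutator_iff hVperp hx hy).mp
  by_contra hcon
  push_neg at hcon
  obtain ⟨⟨y₁, hy₁, h₁⟩, ⟨y₂, hy₂, h₂⟩⟩ := hcon
  have c₁ : CommOn x y₁ Vᗮ := (dich y₁ hy₁).resolve_left h₁
  have c₂ : CommOn x y₂ V := (dich y₂ hy₂).resolve_right h₂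
  rcases dich (y₁ * y₂) (mul_mem hy₁ hy₂) with h | h
  · apply h₁
    have h' : CommOn x ((y₁ * y₂) * y₂⁻¹) V :=
      commOn_mul hV (inv_mem hy₂) h (commOn_inv hV hy₂ c₂)
    rwa [mul_inv_cancel_right] at h'
  · apply h₂
    have h' : CommOn x (y₁⁻¹ * (y₁ * y₂)) Vᗮ :=
      commOn_mul hVperp (mul_mem hy₁ hy₂) (commOn_inv hVperp hy₁ c₁) h
    rwa [inv_mul_cancel_left] at h'

lemma level2 {𝒢 : Subgroup (E ≃ₗᵢ[ℂ] E)}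
    (hr2 : ∀ f ∈ 𝒢, ∀ g ∈ 𝒢,
      finrank ℂ (LinearMap.range (lm f ∘ₗ lm g - lm g ∘ₗ lm f)) ≤ 2)
    (V : Submodule ℂ E) (hV : ∀ f ∈ 𝒢, ∀ x ∈ V, f x ∈ V) :
    (∀ x ∈ 𝒢, ∀ y ∈ 𝒢, CommOn x y V) ∨ (∀ x ∈ 𝒢, ∀ y ∈ 𝒢, CommOn x y Vᗮ) := by
  have hVperp := perp_invariant 𝒢 V hV
  by_contra hcon
  push_neg at hcon
  obtain ⟨⟨x₁, hx₁, y₁, hy₁, h₁⟩, ⟨x₂, hx₂, y₂, hy₂, h₂⟩⟩ := hcon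
  have c₁ : ∀ y ∈ 𝒢, CommOn x₁ y Vᗮ := by
    rcases level1 hr2 V hV hx₁ with h | h
    · exact absurd (h y₁ hy₁) h₁
    · exact h
  have c₂ : ∀ y ∈ 𝒢, CommOn x₂ y V := by
    rcases level1 hr2 V hV hx₂ with h | h
    · exact h
    · exact absurd (h y₂ hy₂) h₂
  rcases level1 hr2 V hV (mul_mem hx₁ hx₂) with h | h
  · apply h₁
    have ha : CommOn y₁ (x₁ * x₂) V := commOn_symm (h y₁ hy₁)
    have hb : CommOn y₁ x₂⁻¹ V := commOn_inv hV hx₂ (commOn_symm (c₂ y₁ hy₁))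
    have h' : CommOn y₁ ((x₁ * x₂) * x₂⁻¹) V := commOn_mul hV (inv_mem hx₂) ha hb
    rw [mul_inv_cancel_right] at h'
    exact commOn_symm h'
  · apply h₂
    have ha : CommOn y₂ (x₁ * x₂) Vᗮ := commOn_symm (h y₂ hy₂)
    have hb : CommOn y₂ x₁⁻¹ Vᗮ := commOn_inv hVperp hx₁ (commOn_symm (c₁ y₂ hy₂))
    have h' : CommOn y₂ (x₁⁻¹ * (x₁ * x₂)) Vᗮ := commOn_mul hVperp (mul_mem hx₁ hx₂) hb ha
    rw [inv_mul_cancel_left] at h'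
    exact commOn_symm h'

/-- In the abelian case we find a one-dimensional invariant subspace inside any
nonzero invariant subspace. -/
lemma abelian_line (𝒢 : Subgroup (E ≃ₗᵢ[ℂ] E))
    (hab : ∀ f ∈ 𝒢, ∀ g ∈ 𝒢, ∀ z : E, f (g z) = g (f z)) :
    ∀ (k : ℕ) (N : Submodule ℂ E), finrank ℂ N = k → N ≠ ⊥ →
      (∀ f ∈ 𝒢, ∀ x ∈ N, f x ∈ N) →
      ∃ M : Submodule ℂ E, M ≤ N ∧ finrank ℂ M = 1 ∧ (∀ f ∈ 𝒢, ∀ x ∈ M, f x ∈ M) := by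
  intro k
  induction k using Nat.strong_induction_on with
  | _ k ih =>
    intro N hkN hNbot hNinv
    by_cases hsc : ∀ f ∈ 𝒢, ∃ μ : ℂ, ∀ x ∈ N, f x = μ • x
    · obtain ⟨x₀, hx₀N, hx₀ne⟩ := (Submodule.ne_bot_iff N).mp hNbot
      refine ⟨Submodule.span ℂ {x₀}, ?_, finrank_span_singleton hx₀ne, ?_⟩
      · rw [Submodule.span_le, Set.singleton_subset_iff]; exact hx₀N
      · intro f hf x hx
        rw [Submodule.mem_span_singleton] at hx
        obtain ⟨c, rfl⟩ := hx
        obtain ⟨μ, hμ⟩ := hsc f hf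
        rw [Submodule.mem_span_singleton]
        refine ⟨c * μ, ?_⟩
        rw [_root_.map_smul, hμ x₀ hx₀N, smul_smul]
    · push_neg at hsc
      obtain ⟨f, hf, hnos⟩ := hsc
      have : Nontrivial (↥N) := Submodule.nontrivial_iff_ne_bot.mpr hNbot
      set fN : Module.End ℂ ↥N := (lm f).restrict (hNinv f hf) with hfN
      obtain ⟨μ, hμ⟩ := Module.End.exists_eigenvalue fN
      set K : Submodule ℂ E := (fN.eigenspace μ).map N.subtype with hKdef
      have memK : ∀ z : E, z ∈ K ↔ z ∈ N ∧ f z = μ • z := by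
        intro z
        constructor
        · rintro ⟨v, hv, rfl⟩
          refine ⟨v.2, ?_⟩
          have hv' : v ∈ fN.eigenspace μ := hv
          rw [Module.End.mem_eigenspace_iff] at hv'
          have := congrArg Subtype.val hv'
          exact this
        · rintro ⟨hzN, hz⟩
          refine ⟨⟨z, hzN⟩, ?_, rfl⟩
          show (⟨z, hzN⟩ : ↥N) ∈ fN.eigenspace μ
          rw [Module.End.mem_eigenspace_iff]
          apply Subtype.ext
          exact hz
      have hKN : K ≤ N := Submodule.map_subtype_le _ _
      have hKbot : K ≠ ⊥ := by
        have heig : fN.eigenspace μ ≠ ⊥ := hμ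
        obtain ⟨v, hv, hvne⟩ := (Submodule.ne_bot_iff _).mp heig
        rw [Submodule.ne_bot_iff]
        refine ⟨(v : E), ⟨v, hv, rfl⟩, ?_⟩
        simpa using hvne
      have hKne : K ≠ N := by
        intro h
        obtain ⟨z, hzN, hzne⟩ := hnos μ
        exact hzne (((memK z).mp (h ▸ hzN)).2)
      have hKinv : ∀ g ∈ 𝒢, ∀ x ∈ K, g x ∈ K := by
        intro g hg z hz
        rw [memK] at hz ⊢
        obtain ⟨hzN, hz⟩ := hz
        refine ⟨hNinv g hg z hzN, ?_⟩
        rw [hab f hf g hg z, hz, _root_.map_smul]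
      have hKlt : finrank ℂ K < k := by
        rw [← hkN]
        exact Submodule.finrank_lt_finrank_of_lt (lt_of_le_of_ne hKN hKne)
      obtain ⟨M, hMK, hM1, hMinv⟩ := ih (finrank ℂ K) hKlt K rfl hKbot hKinv
      exact ⟨M, le_trans hMK hKN, hM1, hMinv⟩

/-- the range of the conjugated commutator minus one -/
noncomputable def Ran (w g : E ≃ₗᵢ[ℂ] E) : Submodule ℂ E :=
  LinearMap.range (lm (g * w * g⁻¹) - 1)

lemma conj_sub_one (w γ g : E ≃ₗᵢ[ℂ] E) :
    lm ((γ * g) * w * (γ * g)⁻¹) - 1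
      = (lm γ ∘ₗ (lm (g * w * g⁻¹) - 1)) ∘ₗ lm γ⁻¹ := by
  have hgrp : (γ * g) * w * (γ * g)⁻¹ = γ * (g * w * g⁻¹) * γ⁻¹ := by group
  rw [hgrp]
  ext z
  show (γ * (g * w * g⁻¹) * γ⁻¹) z - z = γ ((g * w * g⁻¹) (γ⁻¹ z) - γ⁻¹ z)
  rw [_root_.map_sub, apply_inv_apply]
  rfl

lemma map_ran (w γ g : E ≃ₗᵢ[ℂ] E) :
    (Ran w g).map (lm γ) = Ran w (γ * g) := by
  rw [Ran, Ran, conj_sub_one, LinearMap.range_comp_of_range_eq_top _ (range_lm_eq_top γ⁻¹),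
    LinearMap.range_comp]

lemma finrank_ran (w g : E ≃ₗᵢ[ℂ] E) :
    finrank ℂ (Ran w g) = finrank ℂ (Ran w 1) := by
  have h := map_ran w g 1
  rw [mul_one] at h
  rw [← h]
  exact g.toLinearEquiv.finrank_map_eq (Ran w 1)

lemma ran_pair_rank {𝒢 : Subgroup (E ≃ₗᵢ[ℂ] E)}
    (hr2 : ∀ f ∈ 𝒢, ∀ g ∈ 𝒢,
      finrank ℂ (LinearMap.range (lm f ∘ₗ lm g - lm g ∘ₗ lm f)) ≤ 2)
    {w : E ≃ₗᵢ[ℂ] E} (hw : w ∈ 𝒢) {g h : E ≃ₗᵢ[ℂ] E} (hg : g ∈ 𝒢) (hh : h ∈ 𝒢) :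
    finrank ℂ (LinearMap.range (lm (g * w * g⁻¹) - lm (h * w * h⁻¹))) ≤ 2 := by
  set s := g * w * g⁻¹ with hs
  set t := h * w * h⁻¹ with ht
  have hsmem : s ∈ 𝒢 := mul_mem (mul_mem hg hw) (inv_mem hg)
  have htmem : t ∈ 𝒢 := mul_mem (mul_mem hh hw) (inv_mem hh)
  have hqmem : h * g⁻¹ ∈ 𝒢 := mul_mem hh (inv_mem hg)
  have hid : s * t⁻¹ = s * (h * g⁻¹) * s⁻¹ * (h * g⁻¹)⁻¹ := by
    rw [hs, ht]; group
  have hfac : lm s - lm t = (lm (s * t⁻¹) - 1) ∘ₗ lm t := by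
    ext z
    show s z - t z = (s * t⁻¹) (t z) - t z
    congr 1
    show s z = s (t⁻¹ (t z))
    rw [inv_apply_apply]
  rw [hfac, LinearMap.range_comp_of_range_eq_top _ (range_lm_eq_top t), hid]
  exact rank_commutator_sub_one_le hr2 hsmem hqmem

lemma ran_pair_dim {𝒢 : Subgroup (E ≃ₗᵢ[ℂ] E)}
    (hr2 : ∀ f ∈ 𝒢, ∀ g ∈ 𝒢,
      finrank ℂ (LinearMap.range (lm f ∘ₗ lm g - lm g ∘ₗ lm f)) ≤ 2)
    {w : E ≃ₗᵢ[ℂ] E} (hw : w ∈ 𝒢) {g h : E ≃ₗᵢ[ℂ] E} (hg : g ∈ 𝒢) (hh : h ∈ 𝒢) :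
    finrank ℂ ↥(Ran w g ⊔ Ran w h) ≤ finrank ℂ ↥(Ran w g ⊓ Ran w h) + 2 := by
  set s := g * w * g⁻¹ with hs
  set t := h * w * h⁻¹ with ht
  set Z := lm s - lm t with hZ
  -- the map from ker Z into the intersection
  have hmem : ∀ x : ↥(LinearMap.ker Z), ((lm s - 1) ∘ₗ (LinearMap.ker Z).subtype) x
      ∈ Ran w g ⊓ Ran w h := by
    rintro ⟨x, hx⟩
    constructor
    · exact ⟨x, rfl⟩
    · have hxz : s x = t x := by
        have : Z x = 0 := hx
        have : lm s x - lm t x = 0 := this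
        rw [sub_eq_zero] at this
        exact this
      refine ⟨x, ?_⟩
      show t x - x = _
      show t x - x = s x - x
      rw [hxz]
  set θ : ↥(LinearMap.ker Z) →ₗ[ℂ] ↥(Ran w g ⊓ Ran w h) :=
    LinearMap.codRestrict _ ((lm s - 1) ∘ₗ (LinearMap.ker Z).subtype) hmem with hθ
  have hker : Submodule.map (LinearMap.ker Z).subtype (LinearMap.ker θ)
      ≤ LinearMap.ker (lm s - 1) ⊓ LinearMap.ker (lm t - 1) := by
    rintro _ ⟨⟨x, hxZ⟩, hxθ, rfl⟩
    have h0 : θ ⟨x, hxZ⟩ = 0 := LinearMap.mem_ker.mp hxθ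
    have h1 : (lm s - 1) x = 0 := by
      have := congrArg Subtype.val h0
      simpa [hθ] using this
    constructor
    · exact h1
    · show (lm t - 1) x = 0
      have hxz : lm s x = lm t x := by
        have : Z x = 0 := hxZ
        have h2 : lm s x - lm t x = 0 := this
        rw [sub_eq_zero] at h2
        exact h2
      show lm t x - x = 0
      rw [← hxz]
      exact h1
  -- rank computations
  have hrn := LinearMap.finrank_range_add_finrank_ker θ
  have hineq1 : finrank ℂ (LinearMap.ker θ)
      ≤ finrank ℂ ↥(LinearMap.ker (lm s - 1) ⊓ LinearMap.ker (lm t - 1)) := by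
    rw [← Submodule.finrank_map_subtype_eq (LinearMap.ker Z) (LinearMap.ker θ)]
    exact Submodule.finrank_mono hker
  have hineq2 : finrank ℂ (LinearMap.range θ) ≤ finrank ℂ ↥(Ran w g ⊓ Ran w h) :=
    Submodule.finrank_le _
  have hkerZ : finrank ℂ (LinearMap.range Z) + finrank ℂ (LinearMap.ker Z) = finrank ℂ E :=
    LinearMap.finrank_range_add_finrank_ker Z
  have hZ2 : finrank ℂ (LinearMap.range Z) ≤ 2 := ran_pair_rank hr2 hw hg hh
  have hoppo : LinearMap.ker (lm s - 1) ⊓ LinearMap.ker (lm t - 1) = (Ran w g ⊔ Ran w h)ᗮ := by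
    rw [Ran, Ran, ← hs, ← ht, ker_sub_one, ker_sub_one]
    exact Submodule.inf_orthogonal _ _
  have hperp : finrank ℂ ↥((Ran w g ⊔ Ran w h)ᗮ) + finrank ℂ ↥(Ran w g ⊔ Ran w h) = finrank ℂ E := by
    have := Submodule.finrank_add_finrank_orthogonal (Ran w g ⊔ Ran w h)
    omega
  have hsupfin : finrank ℂ ↥(Ran w g ⊔ Ran w h) ≤ finrank ℂ E := Submodule.finrank_le _
  rw [hoppo] at hineq1
  omega

lemma two_lines_span {R l₁ l₂ : Submodule ℂ E} (hR : finrank ℂ R = 2)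
    (h₁ : l₁ ≤ R) (h₂ : l₂ ≤ R) (hr₁ : finrank ℂ l₁ = 1) (hr₂ : finrank ℂ l₂ = 1)
    (hne : l₁ ≠ l₂) : l₁ ⊔ l₂ = R := by
  have hinf : finrank ℂ ↥(l₁ ⊓ l₂) = 0 := by
    by_contra hc
    have hle1 : finrank ℂ ↥(l₁ ⊓ l₂) ≤ 1 := hr₁ ▸ Submodule.finrank_mono inf_le_left
    have h1 : finrank ℂ ↥(l₁ ⊓ l₂) = 1 := by omega
    have e1 : l₁ ⊓ l₂ = l₁ := Submodule.eq_of_le_of_finrank_le inf_le_left (by omega)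
    have e2 : l₁ ⊓ l₂ = l₂ := Submodule.eq_of_le_of_finrank_le inf_le_right (by omega)
    exact hne (e1 ▸ e2)
  have hsum := Submodule.finrank_sup_add_finrank_inf_eq l₁ l₂
  rw [hinf, hr₁, hr₂] at hsum
  exact Submodule.eq_of_le_of_finrank_le (sup_le h₁ h₂) (by omega)

lemma sunflower {𝒢 : Subgroup (E ≃ₗᵢ[ℂ] E)}
    (hr2 : ∀ f ∈ 𝒢, ∀ g ∈ 𝒢,
      finrank ℂ (LinearMap.range (lm f ∘ₗ lm g - lm g ∘ₗ lm f)) ≤ 2)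
    {A B : E ≃ₗᵢ[ℂ] E} (hA : A ∈ 𝒢) (hB : B ∈ 𝒢)
    (hrk2 : finrank ℂ (Ran (A * B * A⁻¹ * B⁻¹) 1) = 2) :
    finrank ℂ ↥(⨆ g : ↥𝒢, Ran (A * B * A⁻¹ * B⁻¹) ↑g) ≤ 3 := by
  set w := A * B * A⁻¹ * B⁻¹ with hwdef
  have hw : w ∈ 𝒢 := mul_mem (mul_mem (mul_mem hA hB) (inv_mem hA)) (inv_mem hB)
  set F : ↥𝒢 → Submodule ℂ E := fun g => Ran w ↑g with hF
  have hrk : ∀ g : ↥𝒢, finrank ℂ (F g) = 2 := by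
    intro g
    show finrank ℂ (Ran w ↑g) = 2
    rw [finrank_ran]
    exact hrk2
  have hpair : ∀ g h : ↥𝒢, 1 ≤ finrank ℂ ↥(F g ⊓ F h) ∧ finrank ℂ ↥(F g ⊔ F h) ≤ 3 := by
    intro g h
    have h1 := Submodule.finrank_sup_add_finrank_inf_eq (F g) (F h)
    have h2 : finrank ℂ ↥(F g ⊔ F h) ≤ finrank ℂ ↥(F g ⊓ F h) + 2 :=
      ran_pair_dim hr2 hw g.2 h.2
    have h3 : finrank ℂ ↥(F g ⊓ F h) ≤ 2 := (hrk g) ▸ Submodule.finrank_mono inf_le_left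
    have h4 := hrk g; have h5 := hrk h
    constructor <;> omega
  have hinfeq1 : ∀ g h : ↥𝒢, F g ≠ F h → finrank ℂ ↥(F g ⊓ F h) = 1 := by
    intro g h hne
    have h1 := (hpair g h).1
    have h3 : finrank ℂ ↥(F g ⊓ F h) ≤ 2 := (hrk g) ▸ Submodule.finrank_mono inf_le_left
    by_contra hc
    have h2 : finrank ℂ ↥(F g ⊓ F h) = 2 := by omega
    have e1 : F g ⊓ F h = F g := Submodule.eq_of_le_of_finrank_le inf_le_left (by rw [hrk g, h2])
    have e2 : F g ⊓ F h = F h := Submodule.eq_of_le_of_finrank_le inf_le_right (by rw [hrk h, h2])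
    exact hne (e1 ▸ e2)
  by_cases hall : ∀ g : ↥𝒢, F g = F 1
  · have hsup : (⨆ g : ↥𝒢, F g) = F 1 :=
      le_antisymm (iSup_le fun g => (hall g).le) (le_iSup F 1)
    show finrank ℂ ↥(⨆ g : ↥𝒢, F g) ≤ 3
    rw [hsup, hrk 1]
    omega
  · push_neg at hall
    obtain ⟨g₀, hg₀⟩ := hall
    by_cases hall2 : ∀ h : ↥𝒢, F h ≤ F 1 ⊔ F g₀
    · show finrank ℂ ↥(⨆ g : ↥𝒢, F g) ≤ 3
      calc finrank ℂ ↥(⨆ g : ↥𝒢, F g) ≤ finrank ℂ ↥(F 1 ⊔ F g₀) :=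
            Submodule.finrank_mono (iSup_le hall2)
        _ ≤ 3 := (hpair 1 g₀).2
    · exfalso
      push_neg at hall2
      obtain ⟨h₀, hh₀⟩ := hall2
      set L : Submodule ℂ E := F 1 ⊓ F g₀ with hLdef
      have hL1 : finrank ℂ L = 1 := hinfeq1 1 g₀ (Ne.symm hg₀)
      have hRne1 : F h₀ ≠ F 1 := fun h => hh₀ (h ▸ le_sup_left)
      have hRneg₀ : F h₀ ≠ F g₀ := fun h => hh₀ (h ▸ le_sup_right)
      -- distinct intersections with h₀ would force h₀ inside the sup
      have span_of_ne : ∀ Z : ↥𝒢, F Z ≠ F 1 → F Z ≠ F g₀ →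
          F Z ⊓ F 1 ≠ F Z ⊓ F g₀ → F Z ≤ F 1 ⊔ F g₀ := by
        intro Z hz1 hz2 hzz
        have hts := two_lines_span (hrk Z) (inf_le_left : F Z ⊓ F 1 ≤ F Z)
          (inf_le_left : F Z ⊓ F g₀ ≤ F Z) (hinfeq1 Z 1 hz1) (hinfeq1 Z g₀ hz2) hzz
        rw [← hts]
        exact sup_le (inf_le_right.trans le_sup_left) (inf_le_right.trans le_sup_right)
      have hstep : F h₀ ⊓ F 1 = F h₀ ⊓ F g₀ := by
        by_contra hne
        exact hh₀ (span_of_ne h₀ hRne1 hRneg₀ hne)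
      have hX : F h₀ ⊓ F 1 = L := by
        have hle : F h₀ ⊓ F 1 ≤ L := by
          apply le_inf inf_le_right
          rw [hstep]; exact inf_le_right
        exact Submodule.eq_of_le_of_finrank_le hle
          (by rw [hL1, hinfeq1 h₀ 1 hRne1])
      have hLR : L ≤ F h₀ := hX ▸ inf_le_left
      have hRPQ : F h₀ ⊓ (F 1 ⊔ F g₀) = L := by
        have hLY : L ≤ F h₀ ⊓ (F 1 ⊔ F g₀) :=
          le_inf hLR (inf_le_left.trans le_sup_left)
        have hYle : finrank ℂ ↥(F h₀ ⊓ (F 1 ⊔ F g₀)) ≤ 2 :=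
          (hrk h₀) ▸ Submodule.finrank_mono inf_le_left
        have hYne2 : finrank ℂ ↥(F h₀ ⊓ (F 1 ⊔ F g₀)) ≠ 2 := by
          intro h2
          have : F h₀ ⊓ (F 1 ⊔ F g₀) = F h₀ :=
            Submodule.eq_of_le_of_finrank_le inf_le_left (by rw [hrk h₀, h2])
          exact hh₀ (this ▸ inf_le_right)
        have h1L : 1 ≤ finrank ℂ ↥(F h₀ ⊓ (F 1 ⊔ F g₀)) := hL1 ▸ Submodule.finrank_mono hLY
        exact (Submodule.eq_of_le_of_finrank_le hLY (by omega)).symm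
      have hcommon : ∀ Z : ↥𝒢, L ≤ F Z := by
        intro Z
        by_cases h1 : F Z = F 1
        · rw [h1]; exact inf_le_left
        by_cases h2 : F Z = F g₀
        · rw [h2]; exact inf_le_right
        by_cases h3 : F Z = F h₀
        · rw [h3]; exact hLR
        by_cases hzz : F Z ⊓ F 1 = F Z ⊓ F g₀
        · -- the common intersection is a line inside L
          have hle : F Z ⊓ F 1 ≤ L := by
            apply le_inf inf_le_right
            rw [hzz]; exact inf_le_right
          have := Submodule.eq_of_le_of_finrank_le hle
            (by rw [hL1, hinfeq1 Z 1 h1])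
          exact this ▸ inf_le_left
        · have hsub : F Z ≤ F 1 ⊔ F g₀ := span_of_ne Z h1 h2 hzz
          have hZR : F Z ⊓ F h₀ ≤ L := by
            rw [← hRPQ]
            exact le_inf (inf_le_right) (inf_le_left.trans hsub)
          have := Submodule.eq_of_le_of_finrank_le hZR
            (by rw [hL1, hinfeq1 Z h₀ h3])
          exact this ▸ inf_le_left
      -- L is a line; pick a spanning vector
      have : Nontrivial L := by
        rw [Submodule.nontrivial_iff_ne_bot]
        intro h
        rw [h] at hL1
        simp [finrank_bot] at hL1
      obtain ⟨e₀v, he₀ne⟩ := exists_ne (0 : L)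
      have he₀L : (e₀v : E) ∈ L := e₀v.2
      have he₀ne' : (e₀v : E) ≠ 0 := fun h => he₀ne (Subtype.ext h)
      set e₀ := (e₀v : E)
      have hLspan : L = Submodule.span ℂ {e₀} := by
        symm
        apply Submodule.eq_of_le_of_finrank_le
        · rw [Submodule.span_le, Set.singleton_subset_iff]; exact he₀L
        · rw [hL1, finrank_span_singleton he₀ne']
      -- every group element acts on L by a scalar
      have hscal : ∀ γ : E ≃ₗᵢ[ℂ] E, γ ∈ 𝒢 → ∃ μ : ℂ, γ e₀ = μ • e₀ := by
        intro γ hγ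
        set γ' : ↥𝒢 := ⟨γ, hγ⟩ with hγ'def
        have hmem1 : γ e₀ ∈ F 1 := by
          have h1 : L ≤ F (γ'⁻¹) := hcommon _
          have h2 : (γ' : E ≃ₗᵢ[ℂ] E) e₀ ∈ (Ran w ↑(γ'⁻¹)).map (lm ↑γ') :=
            ⟨e₀, h1 he₀L, rfl⟩
          rw [map_ran, ← Subgroup.coe_mul, mul_inv_cancel] at h2
          exact h2
        have hmem2 : γ e₀ ∈ F g₀ := by
          have h1 : L ≤ F (γ'⁻¹ * g₀) := hcommon _
          have h2 : (γ' : E ≃ₗᵢ[ℂ] E) e₀ ∈ (Ran w ↑(γ'⁻¹ * g₀)).map (lm ↑γ') :=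
            ⟨e₀, h1 he₀L, rfl⟩
          rw [map_ran, ← Subgroup.coe_mul, ← mul_assoc, mul_inv_cancel, one_mul] at h2
          exact h2
        have hmL : γ e₀ ∈ L := Submodule.mem_inf.mpr ⟨hmem1, hmem2⟩
        rw [hLspan, Submodule.mem_span_singleton] at hmL
        obtain ⟨μ, hμ⟩ := hmL
        exact ⟨μ, hμ.symm⟩
      obtain ⟨μA, hmA⟩ := hscal A hA
      obtain ⟨μB, hmB⟩ := hscal B hB
      obtain ⟨μA', hmA'⟩ := hscal A⁻¹ (inv_mem hA)
      obtain ⟨μB', hmB'⟩ := hscal B⁻¹ (inv_mem hB)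
      have hAA : μA * μA' = 1 := by
        have h1 : A (A⁻¹ e₀) = e₀ := apply_inv_apply A e₀
        rw [hmA', _root_.map_smul, hmA, smul_smul] at h1
        have h2 : (μA' * μA - 1) • e₀ = 0 := by
          rw [sub_smul, one_smul, h1, sub_self]
        rcases smul_eq_zero.mp h2 with h | h
        · rw [sub_eq_zero] at h; rw [mul_comm]; exact h
        · exact absurd h he₀ne'
      have hBB : μB * μB' = 1 := by
        have h1 : B (B⁻¹ e₀) = e₀ := apply_inv_apply B e₀
        rw [hmB', _root_.map_smul, hmB, smul_smul] at h1
        have h2 : (μB' * μB - 1) • e₀ = 0 := by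
          rw [sub_smul, one_smul, h1, sub_self]
        rcases smul_eq_zero.mp h2 with h | h
        · rw [sub_eq_zero] at h; rw [mul_comm]; exact h
        · exact absurd h he₀ne'
      have hwe : w e₀ = e₀ := by
        show A (B (A⁻¹ (B⁻¹ e₀))) = e₀
        have h1 : A⁻¹ (B⁻¹ e₀) = (μB' * μA') • e₀ := by
          rw [hmB', _root_.map_smul, hmA', smul_smul]
        have h2 : B (A⁻¹ (B⁻¹ e₀)) = ((μB' * μA') * μB) • e₀ := by
          rw [h1, _root_.map_smul, hmB, smul_smul]
        have h3 : A (B (A⁻¹ (B⁻¹ e₀))) = (((μB' * μA') * μB) * μA) • e₀ := by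
          rw [h2, _root_.map_smul, hmA, smul_smul]
        have h4 : ((μB' * μA') * μB) * μA = (μA * μA') * (μB * μB') := by ring
        rw [h3, h4, hAA, hBB, one_mul, one_smul]
      -- contradiction : e₀ is in the range of (w - 1) and fixed by w
      have hker : e₀ ∈ (LinearMap.range (lm w - 1))ᗮ := by
        rw [← ker_sub_one, mem_ker_sub_one]
        exact hwe
      have hrange : e₀ ∈ LinearMap.range (lm w - 1) := by
        have h2 : e₀ ∈ F 1 := (inf_le_left : L ≤ F 1) he₀L
        have hone : (1 : E ≃ₗᵢ[ℂ] E) * w * (1 : E ≃ₗᵢ[ℂ] E)⁻¹ = w := by group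
        have heq : F 1 = LinearMap.range (lm w - 1) := by
          show Ran w ((1 : ↥𝒢) : E ≃ₗᵢ[ℂ] E) = _
          rw [OneMemClass.coe_one, Ran, hone]
        rwa [heq] at h2
      have h0 : ⟪e₀, e₀⟫ = 0 :=
        (Submodule.mem_orthogonal _ _).mp hker e₀ hrange
      exact he₀ne' (inner_self_eq_zero.mp h0)

lemma det_lm_inv (f : E ≃ₗᵢ[ℂ] E) :
    LinearMap.det (lm f) * LinearMap.det (lm f⁻¹) = 1 := by
  rw [← LinearMap.det_comp]
  have : lm f ∘ₗ lm f⁻¹ = LinearMap.id := by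
    ext z
    exact apply_inv_apply f z
  rw [this, LinearMap.det_id]

theorem main_abstract (𝒢 : Subgroup (E ≃ₗᵢ[ℂ] E)) (hE : 0 < finrank ℂ E)
    (hr2 : ∀ f ∈ 𝒢, ∀ g ∈ 𝒢,
      finrank ℂ (LinearMap.range (lm f ∘ₗ lm g - lm g ∘ₗ lm f)) ≤ 2) :
    ∃ M : Submodule ℂ E, 1 ≤ finrank ℂ M ∧ finrank ℂ M ≤ 3 ∧
      (∀ f ∈ 𝒢, ∀ x ∈ M, f x ∈ M) ∧ (∀ f ∈ 𝒢, ∀ x ∈ Mᗮ, f x ∈ Mᗮ) ∧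
      (∀ f ∈ 𝒢, ∀ g ∈ 𝒢, ∀ z ∈ Mᗮ, f (g z) = g (f z)) := by
  by_cases hab : ∀ f ∈ 𝒢, ∀ g ∈ 𝒢, ∀ z : E, f (g z) = g (f z)
  · have hnt : Nontrivial E := Module.finrank_pos_iff.mp hE
    have htopbot : (⊤ : Submodule ℂ E) ≠ ⊥ := by
      intro h
      have : finrank ℂ (⊤ : Submodule ℂ E) = 0 := by rw [h, finrank_bot]
      rw [finrank_top] at this
      omega
    obtain ⟨M, _, h1, hinv⟩ := abelian_line 𝒢 hab (finrank ℂ E) ⊤ (by rw [finrank_top])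
      htopbot (fun f hf x _ => Submodule.mem_top)
    exact ⟨M, by omega, by omega, hinv, perp_invariant 𝒢 M hinv,
      fun f hf g hg z _ => hab f hf g hg z⟩
  · push_neg at hab
    obtain ⟨A, hA, B, hB, z₀, hz₀⟩ := hab
    have hw : A * B * A⁻¹ * B⁻¹ ∈ 𝒢 :=
      mul_mem (mul_mem (mul_mem hA hB) (inv_mem hA)) (inv_mem hB)
    -- the commutator has rank exactly 2
    have hne0 : LinearMap.range (lm (A * B * A⁻¹ * B⁻¹) - 1) ≠ ⊥ := by
      rw [Submodule.ne_bot_iff]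
      have hy : (A * B * A⁻¹ * B⁻¹) (B (A z₀)) = A (B z₀) := by
        show A (B (A⁻¹ (B⁻¹ (B (A z₀))))) = A (B z₀)
        rw [inv_apply_apply, inv_apply_apply]
      refine ⟨(lm (A * B * A⁻¹ * B⁻¹) - 1) (B (A z₀)), ⟨B (A z₀), rfl⟩, ?_⟩
      intro h
      have : (A * B * A⁻¹ * B⁻¹) (B (A z₀)) - B (A z₀) = 0 := h
      rw [sub_eq_zero, hy] at this
      exact hz₀ this
    have hle2 : finrank ℂ (LinearMap.range (lm (A * B * A⁻¹ * B⁻¹) - 1)) ≤ 2 :=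
      rank_commutator_sub_one_le hr2 hA hB
    have hdetw : LinearMap.det (lm (A * B * A⁻¹ * B⁻¹)) = 1 := by
      have hfac : lm (A * B * A⁻¹ * B⁻¹) = lm A ∘ₗ (lm B ∘ₗ (lm A⁻¹ ∘ₗ lm B⁻¹)) := by
        ext z; rfl
      rw [hfac, LinearMap.det_comp, LinearMap.det_comp, LinearMap.det_comp]
      have h1 := det_lm_inv A
      have h2 := det_lm_inv B
      calc LinearMap.det (lm A) * (LinearMap.det (lm B)
            * (LinearMap.det (lm A⁻¹) * LinearMap.det (lm B⁻¹)))
          = (LinearMap.det (lm A) * LinearMap.det (lm A⁻¹))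
            * (LinearMap.det (lm B) * LinearMap.det (lm B⁻¹)) := by ring
        _ = 1 := by rw [h1, h2, one_mul]
    have hrkne1 : finrank ℂ (LinearMap.range (lm (A * B * A⁻¹ * B⁻¹) - 1)) ≠ 1 :=
      fun h => det_one_rank_ne_one (A * B * A⁻¹ * B⁻¹) hdetw h
    have hrknz : finrank ℂ (LinearMap.range (lm (A * B * A⁻¹ * B⁻¹) - 1)) ≠ 0 :=
      fun h => hne0 (Submodule.finrank_eq_zero.mp h)
    have hone : (1 : E ≃ₗᵢ[ℂ] E) * (A * B * A⁻¹ * B⁻¹) * (1 : E ≃ₗᵢ[ℂ] E)⁻¹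
        = A * B * A⁻¹ * B⁻¹ := by group
    have hran1 : Ran (A * B * A⁻¹ * B⁻¹) 1
        = LinearMap.range (lm (A * B * A⁻¹ * B⁻¹) - 1) := by
      rw [Ran, hone]
    have hrk2 : finrank ℂ (Ran (A * B * A⁻¹ * B⁻¹) 1) = 2 := by
      rw [hran1]; omega
    -- the invariant subspace
    set V : Submodule ℂ E := ⨆ g : ↥𝒢, Ran (A * B * A⁻¹ * B⁻¹) ↑g with hVdef
    have hV3 : finrank ℂ V ≤ 3 := sunflower hr2 hA hB hrk2
    have hle1V : Ran (A * B * A⁻¹ * B⁻¹) 1 ≤ V := by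
      have := le_iSup (fun g : ↥𝒢 => Ran (A * B * A⁻¹ * B⁻¹) ↑g) 1
      rwa [OneMemClass.coe_one] at this
    have hV1 : 2 ≤ finrank ℂ V := hrk2 ▸ Submodule.finrank_mono hle1V
    have hVinv : ∀ f ∈ 𝒢, ∀ x ∈ V, f x ∈ V := by
      intro f hf x hx
      have hmap : V.map (lm f) ≤ V := by
        rw [hVdef, Submodule.map_iSup]
        apply iSup_le
        intro g
        rw [map_ran]
        have hle := le_iSup (fun g : ↥𝒢 => Ran (A * B * A⁻¹ * B⁻¹) ↑g)
          ((⟨f, hf⟩ : ↥𝒢) * g)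
        rw [Subgroup.coe_mul] at hle
        exact hle
      exact hmap ⟨x, hx, rfl⟩
    rcases level2 hr2 V hVinv with hc | hc
    · exfalso
      have htriv : TrivOn (A * B * A⁻¹ * B⁻¹) V :=
        (trivOn_commutator_iff hVinv hA hB).mpr (hc A hA B hB)
      obtain ⟨v, hvmem, hvne⟩ := (Submodule.ne_bot_iff _).mp hne0
      have hvV : v ∈ V := hle1V (hran1 ▸ hvmem)
      have hfix : (A * B * A⁻¹ * B⁻¹) v = v := htriv v hvV
      have hker : v ∈ (LinearMap.range (lm (A * B * A⁻¹ * B⁻¹) - 1))ᗮ := by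
        rw [← ker_sub_one, mem_ker_sub_one]
        exact hfix
      have h0 : ⟪v, v⟫ = 0 := (Submodule.mem_orthogonal _ _).mp hker v hvmem
      exact hvne (inner_self_eq_zero.mp h0)
    · exact ⟨V, by omega, hV3, hVinv, perp_invariant 𝒢 V hVinv, hc⟩

section Translation

open Matrix

variable {n : ℕ}

lemma toE_mul (M N : Matrix (Fin n) (Fin n) ℂ) :
    Matrix.toEuclideanLin (M * N)
      = Matrix.toEuclideanLin M ∘ₗ Matrix.toEuclideanLin N := by
  rw [Matrix.toEuclideanLin_eq_toLin]
  exact Matrix.toLin_mul _ _ _ M N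

lemma toE_one : Matrix.toEuclideanLin (1 : Matrix (Fin n) (Fin n) ℂ) = LinearMap.id := by
  rw [Matrix.toEuclideanLin_eq_toLin]
  exact Matrix.toLin_one _

/-- a unitary matrix as a linear isometry equivalence of Euclidean space -/
noncomputable def uIso (A : Matrix.unitaryGroup (Fin n) ℂ) :
    EuclideanSpace ℂ (Fin n) ≃ₗᵢ[ℂ] EuclideanSpace ℂ (Fin n) :=
  LinearEquiv.isometryOfInner
    (LinearEquiv.ofLinear (Matrix.toEuclideanLin (A : Matrix (Fin n) (Fin n) ℂ))
      (Matrix.toEuclideanLin ((A⁻¹ : Matrix.unitaryGroup (Fin n) ℂ) : Matrix (Fin n) (Fin n) ℂ))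
      (by
        have h : (A : Matrix (Fin n) (Fin n) ℂ)
            * ((A⁻¹ : Matrix.unitaryGroup (Fin n) ℂ) : Matrix (Fin n) (Fin n) ℂ) = 1 :=
          congrArg Subtype.val (mul_inv_cancel A)
        rw [← toE_mul, h, toE_one])
      (by
        have h : ((A⁻¹ : Matrix.unitaryGroup (Fin n) ℂ) : Matrix (Fin n) (Fin n) ℂ)
            * (A : Matrix (Fin n) (Fin n) ℂ) = 1 :=
          congrArg Subtype.val (inv_mul_cancel A)
        rw [← toE_mul, h, toE_one]))
    (by
      intro x y
      show @inner ℂ _ _ (Matrix.toEuclideanLin (A : Matrix (Fin n) (Fin n) ℂ) x)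
        (Matrix.toEuclideanLin (A : Matrix (Fin n) (Fin n) ℂ) y) = @inner ℂ _ _ x y
      have h1 := LinearMap.adjoint_inner_right
        (Matrix.toEuclideanLin (A : Matrix (Fin n) (Fin n) ℂ)) x
        (Matrix.toEuclideanLin (A : Matrix (Fin n) (Fin n) ℂ) y)
      rw [← h1, ← Matrix.toEuclideanLin_conjTranspose_eq_adjoint]
      have h2 : Matrix.toEuclideanLin ((A : Matrix (Fin n) (Fin n) ℂ)ᴴ)
          (Matrix.toEuclideanLin (A : Matrix (Fin n) (Fin n) ℂ) y) = y := by
        have h3 : (A : Matrix (Fin n) (Fin n) ℂ)ᴴ * (A : Matrix (Fin n) (Fin n) ℂ) = 1 := by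
          have := Unitary.coe_star_mul_self A
          simpa [Matrix.star_eq_conjTranspose] using this
        have h4 := congrArg (fun T => T y) (toE_mul ((A : Matrix (Fin n) (Fin n) ℂ)ᴴ)
          (A : Matrix (Fin n) (Fin n) ℂ)).symm
        simp only [LinearMap.comp_apply] at h4
        rw [h4, h3, toE_one]
        rfl
      rw [h2])

lemma uIso_apply (A : Matrix.unitaryGroup (Fin n) ℂ) (x : EuclideanSpace ℂ (Fin n)) :
    uIso A x = Matrix.toEuclideanLin (A : Matrix (Fin n) (Fin n) ℂ) x := rfl

lemma lm_uIso (A : Matrix.unitaryGroup (Fin n) ℂ) :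
    lm (uIso A) = Matrix.toEuclideanLin (A : Matrix (Fin n) (Fin n) ℂ) := by
  ext x; rfl

/-- the monoid homomorphism from unitary matrices to isometries -/
noncomputable def uHom :
    Matrix.unitaryGroup (Fin n) ℂ →* (EuclideanSpace ℂ (Fin n) ≃ₗᵢ[ℂ] EuclideanSpace ℂ (Fin n)) where
  toFun := uIso
  map_one' := by
    apply LinearIsometryEquiv.ext
    intro x
    show Matrix.toEuclideanLin ((1 : Matrix.unitaryGroup (Fin n) ℂ) : Matrix (Fin n) (Fin n) ℂ) x = x
    have : ((1 : Matrix.unitaryGroup (Fin n) ℂ) : Matrix (Fin n) (Fin n) ℂ) = 1 := rfl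
    rw [this, toE_one]
    rfl
  map_mul' := by
    intro A B
    apply LinearIsometryEquiv.ext
    intro x
    show Matrix.toEuclideanLin ((A * B : Matrix.unitaryGroup (Fin n) ℂ) : Matrix (Fin n) (Fin n) ℂ) x
      = uIso A (uIso B x)
    have : ((A * B : Matrix.unitaryGroup (Fin n) ℂ) : Matrix (Fin n) (Fin n) ℂ)
        = (A : Matrix (Fin n) (Fin n) ℂ) * (B : Matrix (Fin n) (Fin n) ℂ) := rfl
    rw [this, toE_mul]
    rfl

lemma rank_eq_toE (M : Matrix (Fin n) (Fin n) ℂ) :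
    M.rank = finrank ℂ (LinearMap.range (Matrix.toEuclideanLin M)) := by
  rw [Matrix.toEuclideanLin_eq_toLin]
  exact Matrix.rank_eq_finrank_range_toLin M _ _

end Translation

end Stmt12


/-- If `G` is a group of unitary `n × n` matrices with `rank (AB - BA) ≤ 2` for all
`A, B ∈ G`, then there is a subspace `M` with `1 ≤ dim M ≤ 3` invariant under every element
of `G` (hence so is `M^⊥`), such that the restrictions to `M^⊥` commute. -/
theorem stmt12 (n : ℕ) (hn : 0 < n) (G : Subgroup (Matrix.unitaryGroup (Fin n) ℂ))
    (hr : ∀ A ∈ G, ∀ B ∈ G,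
      ((A : Matrix (Fin n) (Fin n) ℂ) * (B : Matrix (Fin n) (Fin n) ℂ)
        - (B : Matrix (Fin n) (Fin n) ℂ) * (A : Matrix (Fin n) (Fin n) ℂ)).rank ≤ 2) :
    ∃ M : Submodule ℂ (EuclideanSpace ℂ (Fin n)),
      1 ≤ Module.finrank ℂ M ∧ Module.finrank ℂ M ≤ 3 ∧
      (∀ T ∈ G, M.map (Matrix.toEuclideanLin (T : Matrix (Fin n) (Fin n) ℂ)) ≤ M) ∧
      (∀ T ∈ G, Mᗮ.map (Matrix.toEuclideanLin (T : Matrix (Fin n) (Fin n) ℂ)) ≤ Mᗮ) ∧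
      (∀ T₁ ∈ G, ∀ T₂ ∈ G, ∀ x ∈ Mᗮ,
        Matrix.toEuclideanLin (T₁ : Matrix (Fin n) (Fin n) ℂ)
            (Matrix.toEuclideanLin (T₂ : Matrix (Fin n) (Fin n) ℂ) x) =
          Matrix.toEuclideanLin (T₂ : Matrix (Fin n) (Fin n) ℂ)
            (Matrix.toEuclideanLin (T₁ : Matrix (Fin n) (Fin n) ℂ) x)) := by
  classical
  set 𝒢 : Subgroup (EuclideanSpace ℂ (Fin n) ≃ₗᵢ[ℂ] EuclideanSpace ℂ (Fin n)) :=
    Subgroup.map Stmt12.uHom G with h𝒢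
  have hE : 0 < Module.finrank ℂ (EuclideanSpace ℂ (Fin n)) := by
    rw [finrank_euclideanSpace]
    simpa using hn
  have hr2 : ∀ f ∈ 𝒢, ∀ g ∈ 𝒢,
      Module.finrank ℂ (LinearMap.range
        (Stmt12.lm f ∘ₗ Stmt12.lm g - Stmt12.lm g ∘ₗ Stmt12.lm f)) ≤ 2 := by
    intro f hf g hg
    obtain ⟨A, hA, rfl⟩ := Subgroup.mem_map.mp hf
    obtain ⟨B, hB, rfl⟩ := Subgroup.mem_map.mp hg
    have eA : Stmt12.lm (Stmt12.uHom A)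
        = Matrix.toEuclideanLin (A : Matrix (Fin n) (Fin n) ℂ) := Stmt12.lm_uIso A
    have eB : Stmt12.lm (Stmt12.uHom B)
        = Matrix.toEuclideanLin (B : Matrix (Fin n) (Fin n) ℂ) := Stmt12.lm_uIso B
    have hfac : Stmt12.lm (Stmt12.uHom A) ∘ₗ Stmt12.lm (Stmt12.uHom B)
          - Stmt12.lm (Stmt12.uHom B) ∘ₗ Stmt12.lm (Stmt12.uHom A)
        = Matrix.toEuclideanLin
            ((A : Matrix (Fin n) (Fin n) ℂ) * (B : Matrix (Fin n) (Fin n) ℂ)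
              - (B : Matrix (Fin n) (Fin n) ℂ) * (A : Matrix (Fin n) (Fin n) ℂ)) := by
      rw [_root_.map_sub, Stmt12.toE_mul, Stmt12.toE_mul, eA, eB]
    rw [hfac, ← Stmt12.rank_eq_toE]
    exact hr A hA B hB
  obtain ⟨M, h1, h3, hinv, hinvp, hcomm⟩ := Stmt12.main_abstract 𝒢 hE hr2
  refine ⟨M, h1, h3, ?_, ?_, ?_⟩
  · intro T hT
    rintro x ⟨y, hy, rfl⟩
    exact hinv (Stmt12.uHom T) ⟨T, hT, rfl⟩ y hy
  · intro T hT
    rintro x ⟨y, hy, rfl⟩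
    exact hinvp (Stmt12.uHom T) ⟨T, hT, rfl⟩ y hy
  · intro T₁ hT₁ T₂ hT₂ x hx
    exact hcomm (Stmt12.uHom T₁) ⟨T₁, hT₁, rfl⟩ (Stmt12.uHom T₂) ⟨T₂, hT₂, rfl⟩ x hx
end

section
/- Let T = diag(−1, 1, −1) and let S be the 3×3 cyclic permutation matrix. The group generated by T and S is irreducible (has no common nontrivial invariant subspace) and satisfies rank(AB − BA) ≤ 2 for all A, B in the group. -/
open Matrix

noncomputable abbrev stmt13Tm : Matrix (Fin 3) (Fin 3) ℂ := Matrix.diagonal ![-1, 1, -1]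
noncomputable abbrev stmt13Sm : Matrix (Fin 3) (Fin 3) ℂ :=
  Matrix.of fun i j : Fin 3 => if i = j + 1 then (1 : ℂ) else 0

lemma stmt13_rank_le_two_of_det_eq_zero (M : Matrix (Fin 3) (Fin 3) ℂ) (h : M.det = 0) :
    M.rank ≤ 2 := by
  obtain ⟨v, hv, hMv⟩ := Matrix.exists_mulVec_eq_zero_iff.mpr h
  have hker : 0 < Module.finrank ℂ (LinearMap.ker M.mulVecLin) := by
    rw [Module.finrank_pos_iff]
    exact nontrivial_of_ne ⟨v, by simpa [Matrix.mulVecLin] using hMv⟩ 0 (by simpa using hv)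
  have hrn := LinearMap.finrank_range_add_finrank_ker M.mulVecLin
  have h3 : Module.finrank ℂ (Fin 3 → ℂ) = 3 := by simp
  rw [h3] at hrn
  have : M.rank = Module.finrank ℂ (LinearMap.range M.mulVecLin) := rfl
  omega

lemma stmt13_det_sub_one (X : Matrix (Fin 3) (Fin 3) ℂ) (hu : X * Xᵀ = 1) (hd : X.det = 1) :
    (X - 1).det = 0 := by
  have h1 : Xᵀ * X = 1 := mul_eq_one_comm.mp hu
  have key : (X - 1).det = - (X - 1).det := by
    calc (X - 1).det = (Xᵀ - 1).det := by
          rw [← Matrix.det_transpose (X - 1), Matrix.transpose_sub, Matrix.transpose_one]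
      _ = (Xᵀ * (1 - X)).det := by rw [mul_sub, mul_one, h1]
      _ = Xᵀ.det * (1 - X).det := Matrix.det_mul _ _
      _ = (1 - X).det := by rw [Matrix.det_transpose, hd, one_mul]
      _ = (-(X - 1)).det := by rw [neg_sub]
      _ = - (X - 1).det := by rw [Matrix.det_neg]; norm_num
  linear_combination key / 2

lemma stmt13_key_dim_one (W : Submodule ℂ (EuclideanSpace ℂ (Fin 3)))
    (hT : ∀ w ∈ W, Matrix.toEuclideanLin stmt13Tm w ∈ W)
    (hS : ∀ w ∈ W, Matrix.toEuclideanLin stmt13Sm w ∈ W)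
    (h1 : Module.finrank ℂ W = 1) : False := by
  obtain ⟨v, hv0, hvgen⟩ := finrank_eq_one_iff'.mp h1
  set w : EuclideanSpace ℂ (Fin 3) := (v : EuclideanSpace ℂ (Fin 3)) with hw
  have hwne : w ≠ 0 := fun h => hv0 (Subtype.ext h)
  obtain ⟨c, hc⟩ := hvgen ⟨_, hT w v.2⟩
  obtain ⟨d, hd⟩ := hvgen ⟨_, hS w v.2⟩
  have hc' : c • w = Matrix.toEuclideanLin stmt13Tm w := congrArg Subtype.val hc
  have hd' : d • w = Matrix.toEuclideanLin stmt13Sm w := congrArg Subtype.val hd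
  have eT : ∀ i, c * w i = (stmt13Tm *ᵥ (fun j => w j)) i := fun i => congrFun (congrArg WithLp.ofLp hc') i
  have eS : ∀ i, d * w i = (stmt13Sm *ᵥ (fun j => w j)) i := fun i => congrFun (congrArg WithLp.ofLp hd') i
  have eT0 : c * w 0 = - w 0 := by
    simpa [Matrix.mulVec, dotProduct, Fin.sum_univ_three, Matrix.diagonal] using eT 0
  have eT1 : c * w 1 = w 1 := by
    simpa [Matrix.mulVec, dotProduct, Fin.sum_univ_three, Matrix.diagonal] using eT 1
  have eS0 : d * w 0 = w 2 := by
    simpa [Matrix.mulVec, dotProduct, Fin.sum_univ_three,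
      show ((0:Fin 3) = 0 + 1) = False by decide, show ((0:Fin 3) = 1 + 1) = False by decide,
      show ((0:Fin 3) = 2 + 1) = True by decide] using eS 0
  have eS1 : d * w 1 = w 0 := by
    simpa [Matrix.mulVec, dotProduct, Fin.sum_univ_three,
      show ((1:Fin 3) = 0 + 1) = True by decide, show ((1:Fin 3) = 1 + 1) = False by decide,
      show ((1:Fin 3) = 2 + 1) = False by decide] using eS 1
  have eS2 : d * w 2 = w 1 := by
    simpa [Matrix.mulVec, dotProduct, Fin.sum_univ_three,
      show ((2:Fin 3) = 0 + 1) = False by decide, show ((2:Fin 3) = 1 + 1) = True by decide,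
      show ((2:Fin 3) = 2 + 1) = False by decide] using eS 2
  have hzero : ∀ i, w i = 0 := by
    by_cases h1w : w 1 = 0
    · have h0 : w 0 = 0 := by rw [← eS1, h1w, mul_zero]
      have h2 : w 2 = 0 := by rw [← eS0, h0, mul_zero]
      intro i; fin_cases i <;> assumption
    · have hc1 : c = 1 := by
        have h' : (c - 1) * w 1 = 0 := by linear_combination eT1
        rcases mul_eq_zero.mp h' with h | h
        · linear_combination h
        · exact absurd h h1w
      have h0 : w 0 = 0 := by
        rw [hc1, one_mul] at eT0
        linear_combination (eT0) / 2
      have hd0 : d = 0 := by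
        rw [h0] at eS1
        rcases mul_eq_zero.mp eS1 with h | h
        · exact h
        · exact absurd h h1w
      rw [hd0, zero_mul] at eS2
      exact absurd eS2.symm h1w
  exact hwne (by ext i; exact hzero i)

lemma stmt13_coord (M : Matrix (Fin 3) (Fin 3) ℂ) (v : EuclideanSpace ℂ (Fin 3)) (i : Fin 3) :
    (Matrix.toEuclideanLin M v) i = (M *ᵥ fun j => v j) i := rfl

lemma stmt13_innerT (x u : EuclideanSpace ℂ (Fin 3)) :
    (inner ℂ x (Matrix.toEuclideanLin stmt13Tm u) : ℂ)
      = inner ℂ (Matrix.toEuclideanLin stmt13Tm x) u := by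
  simp only [PiLp.inner_apply, RCLike.inner_apply, stmt13_coord, Fin.sum_univ_three]
  simp [Matrix.mulVec, dotProduct, Fin.sum_univ_three, Matrix.diagonal]

lemma stmt13_innerS (x u : EuclideanSpace ℂ (Fin 3)) :
    (inner ℂ x (Matrix.toEuclideanLin stmt13Sm u) : ℂ)
      = inner ℂ (Matrix.toEuclideanLin stmt13Sm (Matrix.toEuclideanLin stmt13Sm x)) u := by
  simp only [PiLp.inner_apply, RCLike.inner_apply, stmt13_coord, Fin.sum_univ_three]
  simp [Matrix.mulVec, dotProduct, Fin.sum_univ_three, Matrix.of_apply,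
    show ((0:Fin 3) = 0 + 1) = False by decide, show ((0:Fin 3) = 1 + 1) = False by decide,
    show ((0:Fin 3) = 2 + 1) = True by decide, show ((1:Fin 3) = 0 + 1) = True by decide,
    show ((1:Fin 3) = 1 + 1) = False by decide, show ((1:Fin 3) = 2 + 1) = False by decide,
    show ((2:Fin 3) = 0 + 1) = False by decide, show ((2:Fin 3) = 1 + 1) = True by decide,
    show ((2:Fin 3) = 2 + 1) = False by decide]
  ring

lemma stmt13_TmH : stmt13Tmᴴ = stmt13Tm := by
  ext i j
  fin_cases i <;> fin_cases j <;>
    simp [Matrix.conjTranspose_apply, Matrix.diagonal]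

lemma stmt13_SmH : stmt13Smᴴ = stmt13Sm * stmt13Sm := by
  ext i j
  fin_cases i <;> fin_cases j <;>
    simp [Matrix.conjTranspose_apply, Matrix.mul_apply, Fin.sum_univ_three]

lemma stmt13_toEuclideanLin_mul (M N : Matrix (Fin 3) (Fin 3) ℂ)
    (v : EuclideanSpace ℂ (Fin 3)) :
    Matrix.toEuclideanLin (M * N) v
      = Matrix.toEuclideanLin M (Matrix.toEuclideanLin N v) := by
  ext i
  show ((M * N) *ᵥ (fun j => v j)) i = (M *ᵥ (fun j => (N *ᵥ (fun k => v k)) j)) i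
  rw [← Matrix.mulVec_mulVec]

set_option maxHeartbeats 1000000 in
/-- The group generated by `T = diag (-1, 1, -1)` and the `3 × 3` cyclic permutation `S`
is irreducible and satisfies `rank (AB - BA) ≤ 2` for all its members. -/
theorem stmt13 (TU SU : Matrix.unitaryGroup (Fin 3) ℂ)
    (hT : (TU : Matrix (Fin 3) (Fin 3) ℂ) = Matrix.diagonal ![-1, 1, -1])
    (hS : (SU : Matrix (Fin 3) (Fin 3) ℂ)
      = Matrix.of fun i j : Fin 3 => if i = j + 1 then (1 : ℂ) else 0)
    (G : Subgroup (Matrix.unitaryGroup (Fin 3) ℂ)) (hG : G = Subgroup.closure {TU, SU}) :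
    (∀ W : Submodule ℂ (EuclideanSpace ℂ (Fin 3)),
      (∀ X ∈ G, W.map (Matrix.toEuclideanLin (X : Matrix (Fin 3) (Fin 3) ℂ)) ≤ W) →
      W = ⊥ ∨ W = ⊤) ∧
    (∀ A ∈ G, ∀ B ∈ G,
      ((A : Matrix (Fin 3) (Fin 3) ℂ) * (B : Matrix (Fin 3) (Fin 3) ℂ)
        - (B : Matrix (Fin 3) (Fin 3) ℂ) * (A : Matrix (Fin 3) (Fin 3) ℂ)).rank ≤ 2) := by
  have hTG : TU ∈ G := by
    rw [hG]; exact Subgroup.subset_closure (Set.mem_insert _ _)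
  have hSG : SU ∈ G := by
    rw [hG]; exact Subgroup.subset_closure (Set.mem_insert_of_mem _ rfl)
  constructor
  · -- irreducibility
    intro W hW
    have hTW : ∀ w ∈ W, Matrix.toEuclideanLin stmt13Tm w ∈ W := by
      intro w hw
      have := hW TU hTG
      rw [hT] at this
      exact this ⟨w, hw, rfl⟩
    have hSW : ∀ w ∈ W, Matrix.toEuclideanLin stmt13Sm w ∈ W := by
      intro w hw
      have := hW SU hSG
      rw [hS] at this
      exact this ⟨w, hw, rfl⟩
    have hE3 : Module.finrank ℂ (EuclideanSpace ℂ (Fin 3)) = 3 := by simp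
    have hle : Module.finrank ℂ W ≤ 3 := le_trans (Submodule.finrank_le W) (le_of_eq hE3)
    -- orthogonal complement invariance
    have hTWp : ∀ u ∈ Wᗮ, Matrix.toEuclideanLin stmt13Tm u ∈ Wᗮ := by
      intro u hu
      rw [Submodule.mem_orthogonal]
      intro x hx
      rw [stmt13_innerT]
      exact (Submodule.mem_orthogonal W u).mp hu _ (hTW x hx)
    have hSWp : ∀ u ∈ Wᗮ, Matrix.toEuclideanLin stmt13Sm u ∈ Wᗮ := by
      intro u hu
      rw [Submodule.mem_orthogonal]
      intro x hx
      rw [stmt13_innerS]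
      exact (Submodule.mem_orthogonal W u).mp hu _ (hSW _ (hSW x hx))
    have horth : Module.finrank ℂ W + Module.finrank ℂ Wᗮ = 3 := by
      rw [Submodule.finrank_add_finrank_orthogonal, hE3]
    rcases (by omega : Module.finrank ℂ W = 0 ∨ Module.finrank ℂ W = 1
        ∨ Module.finrank ℂ W = 2 ∨ Module.finrank ℂ W = 3) with h | h | h | h
    · left
      exact Submodule.finrank_eq_zero.mp h
    · exact (stmt13_key_dim_one W hTW hSW h).elim
    · exfalso
      have h1 : Module.finrank ℂ Wᗮ = 1 := by omega
      exact stmt13_key_dim_one Wᗮ hTWp hSWp h1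
    · right
      exact Submodule.eq_top_of_finrank_eq (h.trans hE3.symm)
  · -- rank of commutators
    -- G consists of real matrices of determinant 1
    have hreal : ∀ X ∈ G, (∀ i j, (starRingEnd ℂ) ((X : Matrix (Fin 3) (Fin 3) ℂ) i j)
        = (X : Matrix (Fin 3) (Fin 3) ℂ) i j) ∧ (X : Matrix (Fin 3) (Fin 3) ℂ).det = 1 := by
      -- build the subgroup H
      let H : Subgroup (Matrix.unitaryGroup (Fin 3) ℂ) :=
        { carrier := {X | (∀ i j, (starRingEnd ℂ) ((X : Matrix (Fin 3) (Fin 3) ℂ) i j)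
              = (X : Matrix (Fin 3) (Fin 3) ℂ) i j)
            ∧ (X : Matrix (Fin 3) (Fin 3) ℂ).det = 1}
          mul_mem' := by
            rintro a b ⟨ha1, ha2⟩ ⟨hb1, hb2⟩
            refine ⟨?_, ?_⟩
            · intro i j
              have hab : ((a * b : Matrix.unitaryGroup (Fin 3) ℂ) : Matrix (Fin 3) (Fin 3) ℂ)
                  = (a : Matrix (Fin 3) (Fin 3) ℂ) * b := rfl
              rw [hab, Matrix.mul_apply, map_sum]
              exact Finset.sum_congr rfl fun k _ => by rw [_root_.map_mul, ha1, hb1]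
            · show ((a : Matrix (Fin 3) (Fin 3) ℂ) * b).det = 1
              rw [Matrix.det_mul, ha2, hb2, one_mul]
          one_mem' := by
            constructor
            · intro i j
              show (starRingEnd ℂ) ((1 : Matrix (Fin 3) (Fin 3) ℂ) i j) = _
              by_cases h : i = j <;> simp [Matrix.one_apply, h]
            · show (1 : Matrix (Fin 3) (Fin 3) ℂ).det = 1
              simp
          inv_mem' := by
            rintro a ⟨ha1, ha2⟩
            have hinv : ((a⁻¹ : Matrix.unitaryGroup (Fin 3) ℂ) : Matrix (Fin 3) (Fin 3) ℂ)
                = (a : Matrix (Fin 3) (Fin 3) ℂ)ᴴ := rfl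
            have haH : (a : Matrix (Fin 3) (Fin 3) ℂ)ᴴ = (a : Matrix (Fin 3) (Fin 3) ℂ)ᵀ := by
              ext i j
              rw [Matrix.conjTranspose_apply, Matrix.transpose_apply]
              exact ha1 j i
            refine ⟨?_, ?_⟩
            · intro i j
              rw [hinv, haH, Matrix.transpose_apply, ha1]
            · rw [hinv, haH, Matrix.det_transpose, ha2] }
      have hTH : TU ∈ H := by
        constructor
        · intro i j
          rw [hT]
          by_cases h : i = j
          · subst h
            fin_cases i <;> simp [Matrix.diagonal]
          · simp [Matrix.diagonal_apply_ne _ h]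
        · rw [hT]
          rw [Matrix.det_diagonal]
          simp [Fin.prod_univ_three]
      have hSH : SU ∈ H := by
        constructor
        · intro i j
          rw [hS]
          by_cases h : i = j + 1 <;> simp [h]
        · rw [hS]
          have hlit : (Matrix.of fun i j : Fin 3 => if i = j + 1 then (1:ℂ) else 0)
              = !![0,0,1;1,0,0;0,1,0] := by
            ext i j
            fin_cases i <;> fin_cases j <;>
              simp (config := { decide := true }) [Matrix.of_apply, Matrix.vecHead,
                Matrix.vecTail]
          rw [hlit, Matrix.det_fin_three]
          norm_num
          exact mul_one (1:ℂ)
      have hGH : G ≤ H := by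
        rw [hG]
        apply (Subgroup.closure_le H).mpr
        rintro x (rfl | rfl)
        · exact hTH
        · exact hSH
      exact fun X hX => hGH hX
    intro A hA B hB
    set C : Matrix.unitaryGroup (Fin 3) ℂ := (A * B)⁻¹ * (B * A) with hC
    have hCG : C ∈ G := mul_mem (inv_mem (mul_mem hA hB)) (mul_mem hB hA)
    obtain ⟨hC1, hC2⟩ := hreal C hCG
    have hCH : (C : Matrix (Fin 3) (Fin 3) ℂ)ᴴ = (C : Matrix (Fin 3) (Fin 3) ℂ)ᵀ := by
      ext i j
      rw [Matrix.conjTranspose_apply, Matrix.transpose_apply]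
      exact hC1 j i
    have hCu : (C : Matrix (Fin 3) (Fin 3) ℂ) * (C : Matrix (Fin 3) (Fin 3) ℂ)ᵀ = 1 := by
      rw [← hCH]
      exact C.2.2
    have hdetC : ((C : Matrix (Fin 3) (Fin 3) ℂ) - 1).det = 0 :=
      stmt13_det_sub_one _ hCu hC2
    have hABC : (A : Matrix (Fin 3) (Fin 3) ℂ) * (B : Matrix (Fin 3) (Fin 3) ℂ)
        * (C : Matrix (Fin 3) (Fin 3) ℂ)
        = (B : Matrix (Fin 3) (Fin 3) ℂ) * (A : Matrix (Fin 3) (Fin 3) ℂ) := by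
      have : ((A * B) * C : Matrix.unitaryGroup (Fin 3) ℂ) = B * A := by
        rw [hC, ← mul_assoc, mul_inv_cancel, one_mul]
      calc (A : Matrix (Fin 3) (Fin 3) ℂ) * (B : Matrix (Fin 3) (Fin 3) ℂ)
          * (C : Matrix (Fin 3) (Fin 3) ℂ)
          = (((A * B) * C : Matrix.unitaryGroup (Fin 3) ℂ) : Matrix (Fin 3) (Fin 3) ℂ) := rfl
        _ = (((B * A : Matrix.unitaryGroup (Fin 3) ℂ)) : Matrix (Fin 3) (Fin 3) ℂ) := by
            rw [this]
        _ = (B : Matrix (Fin 3) (Fin 3) ℂ) * (A : Matrix (Fin 3) (Fin 3) ℂ) := rfl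
    have hfact : (A : Matrix (Fin 3) (Fin 3) ℂ) * (B : Matrix (Fin 3) (Fin 3) ℂ)
        - (B : Matrix (Fin 3) (Fin 3) ℂ) * (A : Matrix (Fin 3) (Fin 3) ℂ)
        = ((A : Matrix (Fin 3) (Fin 3) ℂ) * (B : Matrix (Fin 3) (Fin 3) ℂ))
          * (1 - (C : Matrix (Fin 3) (Fin 3) ℂ)) := by
      rw [mul_sub, mul_one, hABC]
    apply stmt13_rank_le_two_of_det_eq_zero
    rw [hfact, Matrix.det_mul]
    have : ((1 : Matrix (Fin 3) (Fin 3) ℂ) - C).det = 0 := by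
      have hneg : ((1 : Matrix (Fin 3) (Fin 3) ℂ) - C) = -(( C : Matrix (Fin 3) (Fin 3) ℂ) - 1) := by
        rw [neg_sub]
      rw [hneg, Matrix.det_neg, hdetC, mul_zero]
    rw [this, mul_zero]
end

section
/- Let G = G(p,q,A) with D its set of diagonal elements, 𝔖 the cyclic subgroup generated by S, and C the commutator subgroup of G. Then G = D𝔖 = 𝔖D and C ⊆ D. -/
open Matrix

section Aux

variable {p : ℕ} [NeZero p]

/-- A unitary matrix is "diagonal" if its underlying matrix is a diagonal matrix. -/
def IsDiagU (X : Matrix.unitaryGroup (Fin p) ℂ) : Prop :=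
  ∃ d : Fin p → ℂ, (X : Matrix (Fin p) (Fin p) ℂ) = Matrix.diagonal d

lemma isDiagU_one : IsDiagU (1 : Matrix.unitaryGroup (Fin p) ℂ) :=
  ⟨fun _ => 1, by simp⟩

lemma isDiagU_mul {X Y : Matrix.unitaryGroup (Fin p) ℂ} (hX : IsDiagU X) (hY : IsDiagU Y) :
    IsDiagU (X * Y) := by
  obtain ⟨d, hd⟩ := hX
  obtain ⟨e, he⟩ := hY
  exact ⟨fun i => d i * e i, by
    rw [Matrix.UnitaryGroup.mul_val, hd, he, Matrix.diagonal_mul_diagonal]⟩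

lemma isDiagU_inv {X : Matrix.unitaryGroup (Fin p) ℂ} (hX : IsDiagU X) : IsDiagU X⁻¹ := by
  obtain ⟨d, hd⟩ := hX
  exact ⟨star d, by
    rw [Matrix.UnitaryGroup.inv_val, Matrix.star_eq_conjTranspose, hd,
      Matrix.diagonal_conjTranspose]⟩

lemma shift_mul_diag (S : Matrix (Fin p) (Fin p) ℂ)
    (hS : S = Matrix.of fun i j : Fin p => if i = j + 1 then (1:ℂ) else 0) (d : Fin p → ℂ) :
    S * Matrix.diagonal d = Matrix.diagonal (fun i => d (i - 1)) * S := by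
  subst hS
  ext i j
  simp only [Matrix.mul_apply, Matrix.diagonal_apply, Matrix.of_apply, ite_mul, mul_ite,
    one_mul, mul_one, zero_mul, mul_zero, Finset.sum_ite_eq, Finset.sum_ite_eq',
    Finset.mem_univ, if_true]
  rcases eq_or_ne i (j + 1) with h | h
  · simp [h]
  · simp [h]

lemma diag_mul_shift (S : Matrix (Fin p) (Fin p) ℂ)
    (hS : S = Matrix.of fun i j : Fin p => if i = j + 1 then (1:ℂ) else 0) (d : Fin p → ℂ) :
    Matrix.diagonal d * S = S * Matrix.diagonal (fun i => d (i + 1)) := by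
  rw [shift_mul_diag S hS (fun i => d (i + 1))]
  congr 1
  ext i
  simp

lemma isUnit_coe (X : Matrix.unitaryGroup (Fin p) ℂ) :
    IsUnit (X : Matrix (Fin p) (Fin p) ℂ) :=
  ⟨Unitary.toUnits X, rfl⟩

lemma conj_diag {SU : Matrix.unitaryGroup (Fin p) ℂ}
    (hS : (SU : Matrix (Fin p) (Fin p) ℂ)
      = Matrix.of fun i j : Fin p => if i = j + 1 then (1 : ℂ) else 0)
    {X : Matrix.unitaryGroup (Fin p) ℂ} (hX : IsDiagU X) : IsDiagU (SU * X * SU⁻¹) := by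
  obtain ⟨d, hd⟩ := hX
  refine ⟨fun i => d (i - 1), ?_⟩
  apply (isUnit_coe SU).mul_right_cancel
  have h1 : (SU * X * SU⁻¹) * SU = SU * X := by group
  calc ((SU * X * SU⁻¹ : Matrix.unitaryGroup (Fin p) ℂ) : Matrix (Fin p) (Fin p) ℂ) * SU
      = (((SU * X * SU⁻¹) * SU : Matrix.unitaryGroup (Fin p) ℂ) : Matrix (Fin p) (Fin p) ℂ) :=
        rfl
    _ = ((SU * X : Matrix.unitaryGroup (Fin p) ℂ) : Matrix (Fin p) (Fin p) ℂ) := by rw [h1]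
    _ = (SU : Matrix (Fin p) (Fin p) ℂ) * Matrix.diagonal d := by
        rw [Matrix.UnitaryGroup.mul_val, hd]
    _ = Matrix.diagonal (fun i => d (i - 1)) * SU := shift_mul_diag _ hS d

lemma conj_diag_inv {SU : Matrix.unitaryGroup (Fin p) ℂ}
    (hS : (SU : Matrix (Fin p) (Fin p) ℂ)
      = Matrix.of fun i j : Fin p => if i = j + 1 then (1 : ℂ) else 0)
    {X : Matrix.unitaryGroup (Fin p) ℂ} (hX : IsDiagU X) : IsDiagU (SU⁻¹ * X * SU) := by
  obtain ⟨d, hd⟩ := hX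
  refine ⟨fun i => d (i + 1), ?_⟩
  apply (isUnit_coe SU).mul_left_cancel
  have h1 : SU * (SU⁻¹ * X * SU) = X * SU := by group
  calc (SU : Matrix (Fin p) (Fin p) ℂ)
        * ((SU⁻¹ * X * SU : Matrix.unitaryGroup (Fin p) ℂ) : Matrix (Fin p) (Fin p) ℂ)
      = ((SU * (SU⁻¹ * X * SU) : Matrix.unitaryGroup (Fin p) ℂ) : Matrix (Fin p) (Fin p) ℂ) :=
        rfl
    _ = ((X * SU : Matrix.unitaryGroup (Fin p) ℂ) : Matrix (Fin p) (Fin p) ℂ) := by rw [h1]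
    _ = Matrix.diagonal d * SU := by rw [Matrix.UnitaryGroup.mul_val, hd]
    _ = (SU : Matrix (Fin p) (Fin p) ℂ) * Matrix.diagonal (fun i => d (i + 1)) :=
        diag_mul_shift _ hS d

lemma conj_zpow_diag {SU : Matrix.unitaryGroup (Fin p) ℂ}
    (hS : (SU : Matrix (Fin p) (Fin p) ℂ)
      = Matrix.of fun i j : Fin p => if i = j + 1 then (1 : ℂ) else 0)
    (k : ℤ) {X : Matrix.unitaryGroup (Fin p) ℂ} (hX : IsDiagU X) :
    IsDiagU (SU ^ k * X * (SU ^ k)⁻¹) := by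
  induction k using Int.induction_on with
  | zero => simpa using hX
  | succ n ih =>
      have h1 : SU ^ ((n : ℤ) + 1) * X * (SU ^ ((n : ℤ) + 1))⁻¹
          = SU * (SU ^ (n : ℤ) * X * (SU ^ (n : ℤ))⁻¹) * SU⁻¹ := by group
      rw [h1]
      exact conj_diag hS ih
  | pred n ih =>
      have h1 : SU ^ (-(n : ℤ) - 1) * X * (SU ^ (-(n : ℤ) - 1))⁻¹
          = SU⁻¹ * (SU ^ (-(n : ℤ)) * X * (SU ^ (-(n : ℤ)))⁻¹) * SU := by group
      rw [h1]
      exact conj_diag_inv hS ih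

end Aux

/-- For `G = G(p,q,A)` with diagonal part `D`, cyclic subgroup `𝔖 = ⟨S⟩` and commutator
subgroup `C`: `G = D𝔖 = 𝔖D` and `C ⊆ D`. -/
theorem stmt15 (p q : ℕ) [NeZero p] (hp : p.Prime) (hq : q.Prime)
    (SU AU : Matrix.unitaryGroup (Fin p) ℂ)
    (hS : (SU : Matrix (Fin p) (Fin p) ℂ)
      = Matrix.of fun i j : Fin p => if i = j + 1 then (1 : ℂ) else 0)
    (ω : Fin p → ℂ) (hA : (AU : Matrix (Fin p) (Fin p) ℂ) = Matrix.diagonal ω)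
    (hω : ∀ i, ω i ^ q = 1) (hns : ∃ i j, ω i ≠ ω j)
    (G : Subgroup (Matrix.unitaryGroup (Fin p) ℂ)) (hG : G = Subgroup.closure {SU, AU}) :
    (∀ X ∈ G, ∃ D ∈ G, (∃ d : Fin p → ℂ, (D : Matrix (Fin p) (Fin p) ℂ) = Matrix.diagonal d)
      ∧ ∃ k : ℤ, X = D * SU ^ k) ∧
    (∀ X ∈ G, ∃ D ∈ G, (∃ d : Fin p → ℂ, (D : Matrix (Fin p) (Fin p) ℂ) = Matrix.diagonal d)
      ∧ ∃ k : ℤ, X = SU ^ k * D) ∧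
    (∀ X ∈ ⁅G, G⁆, ∃ d : Fin p → ℂ,
      (X : Matrix (Fin p) (Fin p) ℂ) = Matrix.diagonal d) := by
  -- The subgroup of elements of the form (diagonal) * SU^k
  set H : Subgroup (Matrix.unitaryGroup (Fin p) ℂ) :=
    { carrier := {X | ∃ Dm, IsDiagU Dm ∧ ∃ k : ℤ, X = Dm * SU ^ k}
      one_mem' := ⟨1, isDiagU_one, 0, by simp⟩
      mul_mem' := by
        rintro X Y ⟨D1, hD1, a, rfl⟩ ⟨D2, hD2, b, rfl⟩
        refine ⟨D1 * (SU ^ a * D2 * (SU ^ a)⁻¹),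
          isDiagU_mul hD1 (conj_zpow_diag hS a hD2), a + b, ?_⟩
        group
      inv_mem' := by
        rintro X ⟨D1, hD1, a, rfl⟩
        refine ⟨SU ^ (-a) * D1⁻¹ * (SU ^ (-a))⁻¹,
          conj_zpow_diag hS (-a) (isDiagU_inv hD1), -a, ?_⟩
        group } with hH
  have hSU_mem : SU ∈ G := by
    rw [hG]; exact Subgroup.subset_closure (by simp)
  have hsub : ∀ X ∈ G, ∃ Dm, IsDiagU Dm ∧ ∃ k : ℤ, X = Dm * SU ^ k := by
    intro X hX
    have : G ≤ H := by
      rw [hG]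
      apply (Subgroup.closure_le H).mpr
      rintro x hx
      rcases hx with h | h
      · exact h ▸ ⟨1, isDiagU_one, 1, by simp⟩
      · simp only [Set.mem_singleton_iff] at h
        exact h ▸ ⟨AU, ⟨ω, hA⟩, 0, by simp⟩
    exact this hX
  refine ⟨?_, ?_, ?_⟩
  · intro X hX
    obtain ⟨Dm, hDm, k, rfl⟩ := hsub X hX
    have hDG : Dm ∈ G := by
      have : Dm = (Dm * SU ^ k) * (SU ^ k)⁻¹ := by group
      rw [this]
      exact mul_mem hX (inv_mem (zpow_mem hSU_mem k))
    exact ⟨Dm, hDG, hDm, k, rfl⟩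
  · intro X hX
    obtain ⟨Dm, hDm, k, rfl⟩ := hsub X hX
    have hD' : IsDiagU (SU ^ (-k) * Dm * (SU ^ (-k))⁻¹) := conj_zpow_diag hS (-k) hDm
    have hDG : Dm ∈ G := by
      have : Dm = (Dm * SU ^ k) * (SU ^ k)⁻¹ := by group
      rw [this]
      exact mul_mem hX (inv_mem (zpow_mem hSU_mem k))
    refine ⟨SU ^ (-k) * Dm * (SU ^ (-k))⁻¹, ?_, hD', k, by group⟩
    exact mul_mem (mul_mem (zpow_mem hSU_mem (-k)) hDG) (inv_mem (zpow_mem hSU_mem (-k)))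
  · -- commutator subgroup consists of diagonal matrices
    set Kd : Subgroup (Matrix.unitaryGroup (Fin p) ℂ) :=
      { carrier := {X | IsDiagU X}
        one_mem' := isDiagU_one
        mul_mem' := fun hX hY => isDiagU_mul hX hY
        inv_mem' := fun hX => isDiagU_inv hX } with hKd
    have hle : ⁅G, G⁆ ≤ Kd := by
      rw [Subgroup.commutator_le]
      intro g hg h hh
      obtain ⟨D1, hD1, a, rfl⟩ := hsub g hg
      obtain ⟨D2, hD2, b, rfl⟩ := hsub h hh
      open scoped commutatorElement in
      have key : ⁅D1 * SU ^ a, D2 * SU ^ b⁆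
          = D1 * (SU ^ a * D2 * (SU ^ a)⁻¹) * (SU ^ b * D1⁻¹ * (SU ^ b)⁻¹) * D2⁻¹ := by
        rw [commutatorElement_def]; group
      show IsDiagU _
      rw [key]
      exact isDiagU_mul (isDiagU_mul (isDiagU_mul hD1 (conj_zpow_diag hS a hD2))
        (conj_zpow_diag hS b (isDiagU_inv hD1))) (isDiagU_inv hD2)
    intro X hX
    exact hle hX
end

section
/- Let G = G(p,q,A) and suppose the commutator subgroup C of G contains no non-scalar matrix. Then q = p and C = {ηI : η^p = 1}. -/
open Matrix

/-- If the commutator subgroup `C` of `G = G(p,q,A)` contains no non-scalar matrix, then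
`q = p` and `C = {η I : η ^ p = 1}`. -/
theorem stmt16 (p q : ℕ) [NeZero p] (hp : p.Prime) (hq : q.Prime)
    (SU AU : Matrix.unitaryGroup (Fin p) ℂ)
    (hS : (SU : Matrix (Fin p) (Fin p) ℂ)
      = Matrix.of fun i j : Fin p => if i = j + 1 then (1 : ℂ) else 0)
    (ω : Fin p → ℂ) (hA : (AU : Matrix (Fin p) (Fin p) ℂ) = Matrix.diagonal ω)
    (hω : ∀ i, ω i ^ q = 1) (hns : ∃ i j, ω i ≠ ω j)
    (G : Subgroup (Matrix.unitaryGroup (Fin p) ℂ)) (hG : G = Subgroup.closure {SU, AU})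
    (hsc : ∀ X ∈ ⁅G, G⁆, ∃ η : ℂ,
      (X : Matrix (Fin p) (Fin p) ℂ) = η • (1 : Matrix (Fin p) (Fin p) ℂ)) :
    q = p ∧ ∀ X : Matrix.unitaryGroup (Fin p) ℂ,
      X ∈ ⁅G, G⁆ ↔ ∃ η : ℂ, η ^ p = 1 ∧
        (X : Matrix (Fin p) (Fin p) ℂ) = η • (1 : Matrix (Fin p) (Fin p) ℂ) := by
  open commutatorElement Fin.NatCast in
  -- SU, AU ∈ G
  have hSG : SU ∈ G := by rw [hG]; exact Subgroup.subset_closure (by simp)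
  have hAG : AU ∈ G := by rw [hG]; exact Subgroup.subset_closure (by simp)
  have hcommmem : ⁅SU, AU⁆ ∈ ⁅G, G⁆ := Subgroup.commutator_mem_commutator hSG hAG
  obtain ⟨η, hη⟩ := hsc _ hcommmem
  -- group identity
  have hgrp : SU * AU = ⁅SU, AU⁆ * (AU * SU) := by
    rw [commutatorElement_def]; group
  have hcast : (SU : Matrix (Fin p) (Fin p) ℂ) * AU
      = ((⁅SU, AU⁆ : Matrix.unitaryGroup (Fin p) ℂ) : Matrix (Fin p) (Fin p) ℂ)
        * ((AU : Matrix (Fin p) (Fin p) ℂ) * SU) := by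
    have := congrArg (fun X : Matrix.unitaryGroup (Fin p) ℂ => (X : Matrix (Fin p) (Fin p) ℂ)) hgrp
    simpa using this
  rw [hη, smul_mul_assoc, one_mul, hS, hA] at hcast
  -- recursion
  have hrec : ∀ j : Fin p, ω j = η * ω (j + 1) := by
    intro j
    have := congrFun (congrFun hcast (j + 1)) j
    simpa [Matrix.mul_diagonal, Matrix.diagonal_mul, Matrix.smul_apply] using this
  have hiter : ∀ (k : ℕ) (j : Fin p), ω j = η ^ k * ω (j + (k : Fin p)) := by
    intro k
    induction k with
    | zero => simp
    | succ n ih =>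
      intro j
      have h1 : ω j = η ^ n * ω (j + (n : Fin p)) := ih j
      have h2 := hrec (j + (n : Fin p))
      have h3 : (((n : ℕ) + 1 : ℕ) : Fin p) = (n : Fin p) + 1 := by push_cast; ring
      rw [h3, ← add_assoc, pow_succ, mul_assoc, ← h2]
      exact h1
  have hω0 : ω 0 ≠ 0 := by
    intro h
    have := hω 0
    rw [h, zero_pow hq.ne_zero] at this
    exact one_ne_zero this.symm
  have hηp : η ^ p = 1 := by
    have h1 := hiter p 0
    rw [Fin.natCast_self, add_zero] at h1
    have h2 : η ^ p * ω 0 = 1 * ω 0 := by rw [one_mul, ← h1]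
    exact mul_right_cancel₀ hω0 h2
  have hηq : η ^ q = 1 := by
    have h1 := hω 0
    rw [hrec 0, mul_pow, hω (0 + 1), mul_one] at h1
    exact h1
  have hηne : η ≠ 1 := by
    intro h
    obtain ⟨i, j, hij⟩ := hns
    apply hij
    have := hiter ((j - i : Fin p) : ℕ) i
    rw [h, one_pow, one_mul, Fin.cast_val_eq_self, add_comm, sub_add_cancel] at this
    exact this
  -- order of η
  have hop : orderOf η = p :=
    (hp.eq_one_or_self_of_dvd _ (orderOf_dvd_of_pow_eq_one hηp)).resolve_left
      (fun h => hηne (orderOf_eq_one_iff.mp h))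
  have hoq : orderOf η = q :=
    (hq.eq_one_or_self_of_dvd _ (orderOf_dvd_of_pow_eq_one hηq)).resolve_left
      (fun h => hηne (orderOf_eq_one_iff.mp h))
  have hqp : q = p := by rw [← hop, hoq]
  have hprim : IsPrimitiveRoot η p :=
    ⟨hηp, fun l hl => hop ▸ orderOf_dvd_of_pow_eq_one hl⟩
  -- determinant homomorphism
  set f : Matrix.unitaryGroup (Fin p) ℂ →* ℂˣ :=
    (Units.map (Matrix.detMonoidHom)).comp Unitary.toUnits with hf
  have hdet : ∀ Y : Matrix.unitaryGroup (Fin p) ℂ, Y ∈ ⁅G, G⁆ →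
      Matrix.det (Y : Matrix (Fin p) (Fin p) ℂ) = 1 := by
    have hker : ⁅G, G⁆ ≤ f.ker := by
      rw [Subgroup.commutator_le]
      intro g _ h _
      rw [MonoidHom.mem_ker, map_commutatorElement]
      exact commutatorElement_eq_one_iff_commute.mpr (mul_comm _ _)
    intro Y hY
    have h1 : f Y = 1 := hker hY
    have h2 := congrArg Units.val h1
    simpa [hf] using h2
  constructor
  · exact hqp
  · intro X
    constructor
    · intro hX
      obtain ⟨η', hη'⟩ := hsc X hX
      refine ⟨η', ?_, hη'⟩
      have := hdet X hX
      rw [hη'] at this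
      simpa [Matrix.det_smul] using this
    · rintro ⟨ζ, hζp, hζ⟩
      obtain ⟨k, -, hk⟩ := hprim.eq_pow_of_pow_eq_one hζp
      have hXeq : X = ⁅SU, AU⁆ ^ k := by
        apply Subtype.ext
        have : ((⁅SU, AU⁆ ^ k : Matrix.unitaryGroup (Fin p) ℂ) : Matrix (Fin p) (Fin p) ℂ)
            = ((⁅SU, AU⁆ : Matrix.unitaryGroup (Fin p) ℂ) : Matrix (Fin p) (Fin p) ℂ) ^ k := by
          simp
        rw [hζ]
        show (ζ • (1 : Matrix (Fin p) (Fin p) ℂ)) = _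
        rw [this, hη, smul_pow, one_pow, hk]
      rw [hXeq]
      exact pow_mem hcommmem k
end

section
/- Let G = G(p,q,A), D its set of diagonal elements, and ρ = min{rank(D − I) : D ∈ D, D ≠ I}. If the commutator subgroup contains no non-scalar matrix, then ρ ≥ p/2. -/
open Matrix

/-- If the commutator subgroup of `G = G(p,q,A)` contains no non-scalar matrix, then every
diagonal `D ∈ G` with `D ≠ I` satisfies `rank (D - I) ≥ p / 2`, i.e. `ρ ≥ p / 2`. -/
theorem stmt17 (p q : ℕ) [NeZero p] (hp : p.Prime) (hq : q.Prime)
    (SU AU : Matrix.unitaryGroup (Fin p) ℂ)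
    (hS : (SU : Matrix (Fin p) (Fin p) ℂ)
      = Matrix.of fun i j : Fin p => if i = j + 1 then (1 : ℂ) else 0)
    (ω : Fin p → ℂ) (hA : (AU : Matrix (Fin p) (Fin p) ℂ) = Matrix.diagonal ω)
    (hω : ∀ i, ω i ^ q = 1) (hns : ∃ i j, ω i ≠ ω j)
    (G : Subgroup (Matrix.unitaryGroup (Fin p) ℂ)) (hG : G = Subgroup.closure {SU, AU})
    (hsc : ∀ X ∈ ⁅G, G⁆, ∃ η : ℂ,
      (X : Matrix (Fin p) (Fin p) ℂ) = η • (1 : Matrix (Fin p) (Fin p) ℂ)) :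
    ∀ X ∈ G, (∃ d : Fin p → ℂ, (X : Matrix (Fin p) (Fin p) ℂ) = Matrix.diagonal d) →
      (X : Matrix (Fin p) (Fin p) ℂ) ≠ 1 →
      p ≤ 2 * ((X : Matrix (Fin p) (Fin p) ℂ) - 1).rank := by
  rintro X hX ⟨d, hd⟩ hne
  -- d i ≠ 0 for all i, since X is unitary
  have hd0 : ∀ i, d i ≠ 0 := by
    intro i hdi
    have hu : (X : Matrix (Fin p) (Fin p) ℂ) * star (X : Matrix (Fin p) (Fin p) ℂ) = 1 :=
      (Unitary.mem_iff.mp X.2).2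
    have := congrFun (congrFun hu i) i
    rw [hd] at this
    simp [Matrix.mul_apply, Matrix.one_apply, star_eq_conjTranspose, Matrix.conjTranspose_apply,
      Matrix.diagonal_apply, Finset.sum_ite_eq'] at this
    rw [hdi] at this
    simp at this
  -- SU ∈ G, commutator
  have hSU : SU ∈ G := by
    rw [hG]; exact Subgroup.subset_closure (by simp)
  obtain ⟨η, hη⟩ := hsc _ (Subgroup.commutator_mem_commutator hSU hX)
  have hgrp : (@Bracket.bracket _ _ commutatorElement SU X) * X * SU = SU * X := by
    rw [commutatorElement_def]; group
  have hmat : (η • (1 : Matrix (Fin p) (Fin p) ℂ)) * Matrix.diagonal d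
      * (SU : Matrix (Fin p) (Fin p) ℂ)
      = (SU : Matrix (Fin p) (Fin p) ℂ) * Matrix.diagonal d := by
    have := congrArg (fun Y : Matrix.unitaryGroup (Fin p) ℂ =>
      (Y : Matrix (Fin p) (Fin p) ℂ)) hgrp
    simpa [hη, hd] using this
  have key : ∀ j : Fin p, d j = η * d (j + 1) := by
    intro j
    have := congrFun (congrFun hmat (j + 1)) j
    simp only [smul_mul_assoc, one_mul, Matrix.smul_apply, hS] at this
    rw [Matrix.diagonal_mul, Matrix.mul_diagonal] at this
    simp only [Matrix.of_apply, smul_eq_mul] at this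
    simp at this
    linear_combination -this
  -- d 0 = η^k * d k
  have dpow : ∀ k : ℕ, d 0 = η ^ k * d (@Nat.cast (Fin p) (Fin.NatCast.instNatCast p) k) := by
    intro k
    induction k with
    | zero => simp
    | succ n ih =>
      rw [ih, key (@Nat.cast (Fin p) (Fin.NatCast.instNatCast p) n)]
      push_cast
      ring_nf
      congr 2
      rw [add_comm 1 n]
      exact Fin.ext (by simp [Fin.val_add, Fin.val_natCast, Nat.add_mod])
  have hηp : η ^ p = 1 := by
    have h := dpow p
    rw [Fin.natCast_self] at h
    have h2 : (η ^ p - 1) * d 0 = 0 := by linear_combination -h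
    rcases mul_eq_zero.mp h2 with h' | h'
    · exact sub_eq_zero.mp h'
    · exact absurd h' (hd0 0)
  have hη0 : η ≠ 0 := by
    intro h; rw [h, zero_pow (NeZero.ne p)] at hηp; exact zero_ne_one hηp
  -- rank computation
  have hrank : ((X : Matrix (Fin p) (Fin p) ℂ) - 1).rank
      = Fintype.card {i : Fin p // d i ≠ 1} := by
    rw [hd, ← Matrix.diagonal_one, Matrix.diagonal_sub, Matrix.rank_diagonal]
    exact Fintype.card_congr (Equiv.subtypeEquivRight fun i => by simp [sub_ne_zero])
  rw [hrank]
  by_cases hη1 : η = 1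
  · -- all d i equal d 0, and d 0 ≠ 1
    have hconst : ∀ i : Fin p, d i = d 0 := by
      intro i
      have := dpow i.val
      rw [hη1, one_pow, one_mul, Fin.cast_val_eq_self] at this
      exact this.symm
    have h01 : d 0 ≠ 1 := by
      intro h
      apply hne
      rw [hd]
      have : d = fun _ => 1 := funext fun i => by rw [hconst i, h]
      rw [this]
      simp
    have : Fintype.card {i : Fin p // d i ≠ 1} = p := by
      rw [Fintype.card_congr (Equiv.subtypeUnivEquiv fun i => by rw [hconst i]; exact h01)]
      exact Fintype.card_fin p
    omega
  · -- η ≠ 1 : at most one i with d i = 1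
    have hord : orderOf η = p := by
      have hdvd : orderOf η ∣ p := orderOf_dvd_of_pow_eq_one hηp
      rcases (Nat.Prime.eq_one_or_self_of_dvd hp _ hdvd) with h | h
      · exact absurd (orderOf_eq_one_iff.mp h) hη1
      · exact h
    have hle1 : Fintype.card {i : Fin p // d i = 1} ≤ 1 := by
      rw [Fintype.card_le_one_iff]
      rintro ⟨i, hi⟩ ⟨j, hj⟩
      have hi' : d 0 = η ^ i.val := by
        have := dpow i.val; rwa [Fin.cast_val_eq_self, hi, mul_one] at this
      have hj' : d 0 = η ^ j.val := by
        have := dpow j.val; rwa [Fin.cast_val_eq_self, hj, mul_one] at this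
      have hij : η ^ i.val = η ^ j.val := hi' ▸ hj'
      have cancel : ∀ a b : ℕ, a ≤ b → η ^ a = η ^ b → p ∣ b - a := by
        intro a b hab heq
        have h1 : η ^ (b - a) * η ^ a = 1 * η ^ a := by
          rw [← pow_add, Nat.sub_add_cancel hab, one_mul, ← heq]
        have h2 : η ^ (b - a) = 1 := mul_right_cancel₀ (pow_ne_zero a hη0) h1
        rw [← hord]
        exact orderOf_dvd_of_pow_eq_one h2
      have hi2 := i.isLt
      have hj2 := j.isLt
      rcases le_total i.val j.val with h | h
      · have hdvd := cancel _ _ h hij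
        have hz : j.val - i.val = 0 := Nat.eq_zero_of_dvd_of_lt hdvd (by omega)
        exact Subtype.ext (show i = j from Fin.ext (by omega))
      · have hdvd := cancel _ _ h hij.symm
        have hz : i.val - j.val = 0 := Nat.eq_zero_of_dvd_of_lt hdvd (by omega)
        exact Subtype.ext (show i = j from Fin.ext (by omega))
    have hcompl : Fintype.card {i : Fin p // d i ≠ 1}
        = p - Fintype.card {i : Fin p // d i = 1} := by
      have := Fintype.card_subtype_compl (fun i : Fin p => d i = 1)
      simpa [Fintype.card_fin] using this
    have hp2 := hp.two_le
    omega
end
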